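/- arXiv:2201.01454 — 11 statements merged into one kernel-verified Lean document; each statement's English description precedes it below -/
import Mathlib

section
/- Let E be a finite-dimensional real inner product space, K ⊆ E a nonempty closed convex set, and F : E → E continuous and pseudomonotone on K. Then the following three statements are equivalent: (a) there exists x̂ ∈ K such that the set {x ∈ K | ⟪F x, x − x̂⟫ < 0} is bounded (possibly empty); (b) there exist a bounded open set Ω ⊆ E and a point x̂ ∈ K ∩ Ω such that ⟪F x, x − x̂⟫ ≥ 0 for all x ∈ K ∩ ∂Ω (the boundary of Ω); (c) there exists x ∈ K with ⟪F x, y − x⟫ ≥ 0 for all y ∈ K, i.e. VI(K, F) has a solution. -/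
open RealInnerProductSpace
open Set Metric

section Aux

variable {E : Type*} [NormedAddCommGroup E] [InnerProductSpace ℝ E]


/-- **Berge's intersection theorem**: finitely many (≥ 2) compact convex sets whose union is
convex and such that each subfamily omitting one set has nonempty intersection, have a common
point. -/
lemma berge : ∀ (k : ℕ) (C : Fin (k+2) → Set E),
    (∀ i, Convex ℝ (C i)) → (∀ i, IsCompact (C i)) →
    (∀ i, (⋂ j, ⋂ (_ : j ≠ i), C j).Nonempty) →
    Convex ℝ (⋃ i, C i) → (⋂ i, C i).Nonempty := by
  intro k
  induction k with
  | zero =>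
    intro C hconv hcomp hsub hu
    obtain ⟨x₀, hx₀⟩ := hsub 1
    obtain ⟨x₁, hx₁⟩ := hsub 0
    have hx₀0 : x₀ ∈ C 0 := by
      have := mem_iInter.1 hx₀ 0
      simpa using mem_iInter.1 this (by decide)
    have hx₁1 : x₁ ∈ C 1 := by
      have := mem_iInter.1 hx₁ 1
      simpa using mem_iInter.1 this (by decide)
    by_contra hemp
    rw [Set.not_nonempty_iff_eq_empty] at hemp
    have hdisj : ∀ x, x ∈ C 0 → x ∈ C 1 → False := by
      intro x h0 h1
      have : x ∈ ⋂ i, C i := by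
        apply mem_iInter.2; intro i; fin_cases i <;> assumption
      simp [hemp] at this
    have hseg : segment ℝ x₀ x₁ ⊆ C 0 ∪ C 1 := by
      have h01 : C 0 ∪ C 1 = ⋃ i, C i := by
        ext x; simp only [mem_union, mem_iUnion]
        constructor
        · rintro (h | h); exacts [⟨0, h⟩, ⟨1, h⟩]
        · rintro ⟨i, h⟩; fin_cases i; exacts [Or.inl h, Or.inr h]
      rw [h01]
      exact (hu).segment_subset (subset_iUnion C 0 hx₀0) (subset_iUnion C 1 hx₁1)
    have hpre : IsPreconnected (segment ℝ x₀ x₁) := (convex_segment x₀ x₁).isPreconnected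
    obtain ⟨z, hzseg, hz0, hz1⟩ :=
      isPreconnected_closed_iff.1 hpre (C 0) (C 1) (hcomp 0).isClosed (hcomp 1).isClosed hseg
        ⟨x₀, left_mem_segment ℝ x₀ x₁, hx₀0⟩ ⟨x₁, right_mem_segment ℝ x₀ x₁, hx₁1⟩
    exact hdisj z hz0 hz1
  | succ k ih =>
    intro C hconv hcomp hsub hu
    by_contra hemp
    rw [Set.not_nonempty_iff_eq_empty] at hemp
    set lst : Fin (k+3) := Fin.last (k+2) with hlst
    set B : Set E := ⋂ j, ⋂ (_ : j ≠ lst), C j with hB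
    obtain ⟨q, hq⟩ := hsub lst
    have hqB : q ∈ B := hq
    have hBconv : Convex ℝ B := convex_iInter fun j => convex_iInter fun _ => hconv j
    have hBclosed : IsClosed B :=
      isClosed_iInter fun j => isClosed_iInter fun _ => (hcomp j).isClosed
    have hBsub : B ⊆ C 0 := fun x hx => by
      have := mem_iInter.1 hx 0
      exact mem_iInter.1 this (by simp [hlst, Fin.ext_iff])
    have hBcomp : IsCompact B := (hcomp 0).of_isClosed_subset hBclosed hBsub
    have hdisj : Disjoint B (C lst) := by
      rw [Set.disjoint_left]
      intro x hxB hxl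
      have : x ∈ ⋂ i, C i := by
        apply mem_iInter.2; intro i
        by_cases hi : i = lst
        · exact hi ▸ hxl
        · exact mem_iInter.1 (mem_iInter.1 hxB i) hi
      simp [hemp] at this
    obtain ⟨f, u, v, hfu, huv, hfv⟩ :=
      geometric_hahn_banach_compact_closed hBconv hBcomp (hconv lst) (hcomp lst).isClosed hdisj
    set c : ℝ := (u + v) / 2 with hc
    have hucvc : u < c ∧ c < v := by constructor <;> (rw [hc]; linarith)
    set H : Set E := {x | f x = c} with hH
    have hHclosed : IsClosed H := isClosed_eq f.continuous continuous_const
    have hHconv : Convex ℝ H := convex_hyperplane ⟨f.map_add, f.map_smul⟩ c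
    set C' : Fin (k+2) → Set E := fun i => C i.castSucc ∩ H with hC'
    have hcs_ne : ∀ j : Fin (k+2), j.castSucc ≠ lst := fun j => (Fin.castSucc_lt_last j).ne
    -- subfamily condition for C'
    have hsub' : ∀ i, (⋂ j, ⋂ (_ : j ≠ i), C' j).Nonempty := by
      intro i
      obtain ⟨p, hp⟩ := hsub i.castSucc
      have hplst : p ∈ C lst := mem_iInter.1 (mem_iInter.1 hp lst) (Ne.symm (hcs_ne i))
      set G : Set E := ⋂ j : Fin (k+2), ⋂ (_ : j ≠ i), C j.castSucc with hG
      have hpG : p ∈ G := by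
        apply mem_iInter.2; intro j; apply mem_iInter.2; intro hj
        exact mem_iInter.1 (mem_iInter.1 hp j.castSucc) (by
          simpa [Fin.castSucc_inj] using hj)
      have hqG : q ∈ G := by
        apply mem_iInter.2; intro j; apply mem_iInter.2; intro _
        exact mem_iInter.1 (mem_iInter.1 hqB j.castSucc) (hcs_ne j)
      have hGconv : Convex ℝ G := convex_iInter fun j => convex_iInter fun _ => hconv _
      have hfq : f q < u := hfu q hqB
      have hfp : v < f p := hfv p hplst
      -- intermediate value on the segment from q to p
      have hseg : segment ℝ q p ⊆ G := hGconv.segment_subset hqG hpG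
      have himg : c ∈ f '' segment ℝ q p := by
        have : f '' segment ℝ q p = segment ℝ (f q) (f p) := by
          simpa using image_segment ℝ (f : E →ₗ[ℝ] ℝ).toAffineMap q p
        rw [this, segment_eq_Icc (by linarith : f q ≤ f p)]
        constructor <;> linarith [hucvc.1, hucvc.2]
      obtain ⟨z, hzseg, hzc⟩ := himg
      refine ⟨z, ?_⟩
      apply mem_iInter.2; intro j; apply mem_iInter.2; intro hj
      exact ⟨mem_iInter.1 (mem_iInter.1 (hseg hzseg) j) hj, hzc⟩
    -- union of C' is convex
    have hu' : Convex ℝ (⋃ i, C' i) := by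
      have : ⋃ i, C' i = (⋃ i, C i) ∩ H := by
        ext x
        simp only [mem_iUnion, mem_inter_iff, hC']
        constructor
        · rintro ⟨i, hx, hxH⟩; exact ⟨⟨_, hx⟩, hxH⟩
        · rintro ⟨⟨i, hx⟩, hxH⟩
          have hi : i ≠ lst := by
            rintro rfl
            have : v < f x := hfv x hx
            have : f x = c := hxH
            linarith [hucvc.2]
          obtain ⟨j, rfl⟩ := Fin.exists_castSucc_eq.2 hi
          exact ⟨j, hx, hxH⟩
        
      rw [this]
      exact hu.inter hHconv
    obtain ⟨x, hx⟩ := ih C' (fun i => (hconv _).inter hHconv)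
      (fun i => (hcomp _).inter_right hHclosed) hsub' hu'
    have hxB : x ∈ B := by
      apply mem_iInter.2; intro j; apply mem_iInter.2; intro hj
      obtain ⟨j', rfl⟩ := Fin.exists_castSucc_eq.2 hj
      exact (mem_iInter.1 hx j').1
    have hxH : f x = c := (mem_iInter.1 hx 0).2
    have := hfu x hxB
    rw [hxH] at this
    linarith [hucvc.1]


/-- **KKM theorem for convex sets.** -/
lemma kkm_convex :
    ∀ (n : ℕ) (s : Finset E) (C : E → Set E), s.card ≤ n → s.Nonempty →
    (∀ y ∈ s, Convex ℝ (C y)) → (∀ y ∈ s, IsCompact (C y)) →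
    (∀ t : Finset E, t ⊆ s → (convexHull ℝ (↑t : Set E)) ⊆ ⋃ y ∈ t, C y) →
    ((convexHull ℝ (↑s : Set E)) ∩ ⋂ y ∈ s, C y).Nonempty := by
  classical
  intro n
  induction n with
  | zero =>
    intro s C hcard hne _ _ _
    exact absurd (Finset.card_pos.2 hne) (by omega)
  | succ n ih =>
    intro s C hcard hne hconv hcomp hkkm
    by_cases h1 : s.card = 1
    · obtain ⟨y, rfl⟩ := Finset.card_eq_one.1 h1
      have hy : y ∈ C y := by
        have := hkkm {y} (le_refl _)
        have hyh : y ∈ convexHull ℝ ({y} : Set E) := subset_convexHull ℝ _ (by simp)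
        simpa using this (by simpa using hyh)
      exact ⟨y, subset_convexHull ℝ _ (by simp), by simpa using hy⟩
    · -- s.card ≥ 2
      have h2 : 2 ≤ s.card := by
        have := Finset.card_pos.2 hne; omega
      obtain ⟨m, hm⟩ : ∃ m, s.card = m + 2 := ⟨s.card - 2, by omega⟩
      set e : {x // x ∈ s} ≃ Fin (m+2) := s.equivFin.trans (finCongr hm) with he
      set hull : Set E := convexHull ℝ (↑s : Set E) with hhull
      have hhullcomp : IsCompact hull := s.finite_toSet.isCompact_convexHull ℝ
      set C'' : Fin (m+2) → Set E := fun i => C ((e.symm i : E)) ∩ hull with hC''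
      have hmemC : ∀ i, (e.symm i : E) ∈ s := fun i => (e.symm i).2
      have hcv : ∀ i, Convex ℝ (C'' i) :=
        fun i => (hconv _ (hmemC i)).inter (convex_convexHull ℝ _)
      have hcp : ∀ i, IsCompact (C'' i) :=
        fun i => (hcomp _ (hmemC i)).inter_right hhullcomp.isClosed
      have hsub : ∀ i, (⋂ j, ⋂ (_ : j ≠ i), C'' j).Nonempty := by
        intro i
        set t' : Finset E := s.erase (e.symm i) with ht'
        have ht's : t' ⊆ s := ht' ▸ Finset.erase_subset _ _
        have ht'card : t'.card ≤ n := by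
          rw [ht', Finset.card_erase_of_mem (hmemC i)]; omega
        have ht'ne : t'.Nonempty := by
          rw [← Finset.card_pos, ht', Finset.card_erase_of_mem (hmemC i)]; omega
        obtain ⟨w, hwhull, hwint⟩ := ih t' C ht'card ht'ne
          (fun y hy => hconv y (ht's hy)) (fun y hy => hcomp y (ht's hy))
          (fun t ht => hkkm t (ht.trans ht's))
        refine ⟨w, ?_⟩
        apply mem_iInter.2; intro j; apply mem_iInter.2; intro hj
        have hjt' : (e.symm j : E) ∈ t' := by
          rw [ht', Finset.mem_erase]
          refine ⟨?_, hmemC j⟩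
          intro hEq
          exact hj (e.symm.injective (Subtype.ext hEq))
        exact ⟨mem_iInter.1 (mem_iInter.1 hwint _) hjt',
          convexHull_mono (by exact_mod_cast Finset.coe_subset.2 ht's) hwhull⟩
      have hun : Convex ℝ (⋃ i, C'' i) := by
        have : ⋃ i, C'' i = hull := by
          apply Subset.antisymm
          · exact iUnion_subset fun i => inter_subset_right
          · intro x hx
            have := hkkm s (le_refl _) hx
            simp only [mem_iUnion] at this ⊢
            obtain ⟨y, hy, hxy⟩ := by
              simpa using this
            exact ⟨e ⟨y, hy⟩, by simpa using hxy, hx⟩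
        rw [this]; exact convex_convexHull ℝ _
      obtain ⟨x, hx⟩ := berge m C'' hcv hcp hsub hun
      have hxhull : x ∈ hull := (mem_iInter.1 hx 0).2
      refine ⟨x, hxhull, ?_⟩
      apply mem_iInter.2; intro y; apply mem_iInter.2; intro hy
      have := (mem_iInter.1 hx (e ⟨y, hy⟩)).1
      simpa using this

variable [FiniteDimensional ℝ E]


/-- Existence of a solution (both Minty and Stampacchia) on `K ∩ closedBall 0 R`. -/
lemma minty_exists (K : Set E) (hKc : IsClosed K) (hKconv : Convex ℝ K)
    (F : E → E) (hF : Continuous F)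
    (hpseudo : ∀ x ∈ K, ∀ y ∈ K, 0 ≤ ⟪F x, y - x⟫ → 0 ≤ ⟪F y, y - x⟫)
    (R : ℝ) (x₀ : E) (hx₀ : x₀ ∈ K ∩ closedBall 0 R) :
    ∃ xs ∈ K ∩ closedBall 0 R,
      (∀ y ∈ K ∩ closedBall 0 R, 0 ≤ ⟪F xs, y - xs⟫) ∧
      (∀ y ∈ K ∩ closedBall 0 R, 0 ≤ ⟪F y, y - xs⟫) := by
  classical
  set D : Set E := K ∩ closedBall 0 R with hD
  have hDclosed : IsClosed D := hKc.inter isClosed_closedBall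
  have hDcomp : IsCompact D := (isCompact_closedBall 0 R).inter_left hKc
  have hDconv : Convex ℝ D := hKconv.inter (convex_closedBall 0 R)
  have hDK : D ⊆ K := inter_subset_left
  set C : E → Set E := fun y => D ∩ {x | ⟪F y, x⟫ ≤ ⟪F y, y⟫} with hC
  have hCclosed : ∀ y, IsClosed (C y) := fun y =>
    hDclosed.inter (isClosed_le (Continuous.inner continuous_const continuous_id) continuous_const)
  have hCcomp : ∀ y, IsCompact (C y) :=
    fun y => hDcomp.of_isClosed_subset (hCclosed y) inter_subset_left
  have hCconv : ∀ y, Convex ℝ (C y) := fun y =>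
    hDconv.inter (convex_halfSpace_le ⟨fun a b => inner_add_right _ _ _,
      fun c a => real_inner_smul_right _ _ _⟩ _)
  have hCmem : ∀ y x, x ∈ C y ↔ x ∈ D ∧ 0 ≤ ⟪F y, y - x⟫ := by
    intro y x
    simp only [hC, mem_inter_iff, mem_setOf_eq, inner_sub_right]
    constructor <;> exact fun ⟨h1, h2⟩ => ⟨h1, by linarith⟩
  -- KKM property
  have hkkm : ∀ t : Finset E, (↑t : Set E) ⊆ D →
      (convexHull ℝ (↑t : Set E)) ⊆ ⋃ y ∈ t, C y := by
    intro t htD x hx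
    have hxD : x ∈ D := hDconv.convexHull_subset_iff.2 htD hx
    by_contra hxn
    simp only [mem_iUnion, exists_prop, not_exists, not_and] at hxn
    have hneg : ∀ y ∈ t, ⟪F x, y - x⟫ < 0 := by
      intro y hy
      have h1 : ¬ (0 ≤ ⟪F y, y - x⟫) := by
        intro h
        exact hxn y hy ((hCmem y x).2 ⟨hxD, h⟩)
      by_contra h2
      push_neg at h2
      exact h1 (hpseudo x (hDK hxD) y (hDK (htD hy)) h2)
    have hsubset : (↑t : Set E) ⊆ {z | ⟪F x, z⟫ < ⟪F x, x⟫} := by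
      intro y hy
      have := hneg y hy
      rw [inner_sub_right] at this
      simpa using by linarith
    have hconvH : Convex ℝ {z : E | ⟪F x, z⟫ < ⟪F x, x⟫} :=
      convex_halfSpace_lt ⟨fun a b => inner_add_right _ _ _,
        fun c a => real_inner_smul_right _ _ _⟩ _
    have := convexHull_min hsubset hconvH hx
    simp at this
  -- finite intersection property
  have hfip : (D ∩ ⋂ y : D, C y).Nonempty := by
    by_contra hemp
    rw [Set.not_nonempty_iff_eq_empty] at hemp
    obtain ⟨u, hu⟩ := hDcomp.elim_finite_subfamily_closed (fun y : D => C y)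
      (fun y => hCclosed y) hemp
    set s : Finset E := u.image (fun y : D => (y : E)) with hs
    rcases u.eq_empty_or_nonempty with rfl | hune
    · simp at hu
      obtain ⟨z, hz⟩ : D.Nonempty := ⟨x₀, hx₀⟩
      rw [eq_empty_iff_forall_notMem] at hu
      exact hu z hz
    · have hsne : s.Nonempty := hune.image _
      have hsD : (↑s : Set E) ⊆ D := by
        intro y hy
        simp only [hs, Finset.coe_image, mem_image] at hy
        obtain ⟨z, _, rfl⟩ := hy
        exact z.2
      obtain ⟨x, hxhull, hxint⟩ := kkm_convex s.card s C (le_refl _) hsne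
        (fun y _ => hCconv y) (fun y _ => hCcomp y)
        (fun t ht => hkkm t ((Finset.coe_subset.2 ht).trans hsD))
      have hxD : x ∈ D := hDconv.convexHull_subset_iff.2 hsD hxhull
      rw [eq_empty_iff_forall_notMem] at hu
      refine hu x ⟨hxD, ?_⟩
      apply mem_iInter.2
      intro y
      apply mem_iInter.2
      intro hy
      refine mem_iInter.1 (mem_iInter.1 hxint (y : E)) ?_
      simp only [hs, Finset.mem_image]
      exact ⟨y, hy, rfl⟩
  obtain ⟨xs, hxsD, hxsint⟩ := hfip
  have hminty : ∀ y ∈ D, 0 ≤ ⟪F y, y - xs⟫ := by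
    intro y hy
    have := mem_iInter.1 hxsint ⟨y, hy⟩
    exact ((hCmem y xs).1 this).2
  refine ⟨xs, hxsD, ?_, hminty⟩
  -- Minty → Stampacchia using continuity
  intro y hy
  set g : ℝ → ℝ := fun τ => ⟪F (xs + τ • (y - xs)), y - xs⟫ with hg
  have hgc : Continuous g := by
    apply Continuous.inner
    · exact hF.comp (by continuity)
    · exact continuous_const
  have hgpos : ∀ τ ∈ Ioc (0:ℝ) 1, 0 ≤ g τ := by
    intro τ hτ
    set z : E := xs + τ • (y - xs) with hz
    have hzD : z ∈ D := by
      have : z = (1 - τ) • xs + τ • y := by rw [hz]; module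
      rw [this]
      exact hDconv hxsD hy (by linarith [hτ.2]) (le_of_lt hτ.1) (by ring)
    have h0 := hminty z hzD
    have hzx : z - xs = τ • (y - xs) := by rw [hz]; abel
    rw [hzx, real_inner_smul_right] at h0
    exact nonneg_of_mul_nonneg_right h0 hτ.1
  have hlim : Filter.Tendsto g (nhdsWithin 0 (Ioi 0)) (nhds (g 0)) :=
    (hgc.tendsto 0).mono_left nhdsWithin_le_nhds
  have h0 : 0 ≤ g 0 := by
    refine ge_of_tendsto hlim ?_
    filter_upwards [Ioc_mem_nhdsGT_of_mem (⟨le_refl 0, zero_lt_one⟩ : (0:ℝ) ∈ Ico 0 1)]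
      with τ hτ using hgpos τ hτ
  simpa [hg] using h0


/-- Pivot lemma: a solution on `K ∩ closedBall 0 R` which "sees" an interior pivot point
`x₀` with zero inner product extends to a solution on all of `K`. -/
lemma pivot {K : Set E} (hKconv : Convex ℝ K) {F : E → E} {R : ℝ} {xs x₀ : E}
    (hsol : ∀ y ∈ K ∩ closedBall 0 R, 0 ≤ ⟪F xs, y - xs⟫)
    (hx₀K : x₀ ∈ K) (hx₀R : ‖x₀‖ < R) (hpiv : ⟪F xs, x₀ - xs⟫ = 0) :
    ∀ y ∈ K, 0 ≤ ⟪F xs, y - xs⟫ := by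
  intro y hy
  set d : ℝ := ‖y - x₀‖ with hd
  have hd0 : 0 ≤ d := norm_nonneg _
  set τ : ℝ := min 1 ((R - ‖x₀‖) / (d + 1)) with hτ
  have hτpos : 0 < τ := lt_min one_pos (div_pos (by linarith) (by linarith))
  have hτ1 : τ ≤ 1 := min_le_left _ _
  set u : E := x₀ + τ • (y - x₀) with hu
  have huK : u ∈ K := by
    have h := hKconv hx₀K hy (by linarith : (0:ℝ) ≤ 1 - τ) hτpos.le (by ring)
    have : (1 - τ) • x₀ + τ • y = u := by rw [hu]; module
    rwa [this] at h
  have hτd : τ * (d + 1) ≤ R - ‖x₀‖ := by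
    have h2 : τ ≤ (R - ‖x₀‖) / (d + 1) := min_le_right _ _
    rwa [le_div_iff₀ (by linarith)] at h2
  have huR : ‖u‖ ≤ R := by
    have h1 : ‖u‖ ≤ ‖x₀‖ + ‖τ • (y - x₀)‖ := norm_add_le _ _
    have h2 : ‖τ • (y - x₀)‖ = τ * d := by
      rw [norm_smul, Real.norm_eq_abs, abs_of_pos hτpos, hd]
    nlinarith
  have huD : u ∈ K ∩ closedBall 0 R := ⟨huK, by rwa [mem_closedBall_zero_iff]⟩
  have h := hsol u huD
  have hux : u - xs = (x₀ - xs) + τ • (y - x₀) := by rw [hu]; abel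
  rw [hux, inner_add_right, hpiv, real_inner_smul_right, zero_add] at h
  have h3 : 0 ≤ ⟪F xs, y - x₀⟫ := nonneg_of_mul_nonneg_right h hτpos
  have h4 : y - xs = (y - x₀) + (x₀ - xs) := by abel
  rw [h4, inner_add_right, hpiv]
  linarith

end Aux

set_option maxHeartbeats 1000000 in
theorem stmt_6 {E : Type*} [NormedAddCommGroup E] [InnerProductSpace ℝ E]
    [FiniteDimensional ℝ E]
    (K : Set E) (hK : K.Nonempty) (hKc : IsClosed K) (hKconv : Convex ℝ K)
    (F : E → E) (hF : Continuous F)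
    (hpseudo : ∀ x ∈ K, ∀ y ∈ K, 0 ≤ ⟪F x, y - x⟫ → 0 ≤ ⟪F y, y - x⟫) :
    ((∃ x₀ ∈ K, Bornology.IsBounded {x ∈ K | ⟪F x, x - x₀⟫ < 0}) ↔
      (∃ Ω : Set E, IsOpen Ω ∧ Bornology.IsBounded Ω ∧
        ∃ x₀ ∈ K ∩ Ω, ∀ x ∈ K ∩ frontier Ω, 0 ≤ ⟪F x, x - x₀⟫)) ∧
    ((∃ Ω : Set E, IsOpen Ω ∧ Bornology.IsBounded Ω ∧
        ∃ x₀ ∈ K ∩ Ω, ∀ x ∈ K ∩ frontier Ω, 0 ≤ ⟪F x, x - x₀⟫) ↔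
      (∃ x ∈ K, ∀ y ∈ K, 0 ≤ ⟪F x, y - x⟫)) := by
  -- (c) → (a)
  have hca : (∃ x ∈ K, ∀ y ∈ K, 0 ≤ ⟪F x, y - x⟫) →
      (∃ x₀ ∈ K, Bornology.IsBounded {x ∈ K | ⟪F x, x - x₀⟫ < 0}) := by
    rintro ⟨x, hxK, hsol⟩
    refine ⟨x, hxK, ?_⟩
    have : {x' ∈ K | ⟪F x', x' - x⟫ < 0} = ∅ := by
      rw [eq_empty_iff_forall_notMem]
      rintro z ⟨hzK, hz⟩
      have := hpseudo x hxK z hzK (hsol z hzK)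
      linarith
    rw [this]
    exact Bornology.isBounded_empty
  -- (a) → (b)
  have hab : (∃ x₀ ∈ K, Bornology.IsBounded {x ∈ K | ⟪F x, x - x₀⟫ < 0}) →
      (∃ Ω : Set E, IsOpen Ω ∧ Bornology.IsBounded Ω ∧
        ∃ x₀ ∈ K ∩ Ω, ∀ x ∈ K ∩ frontier Ω, 0 ≤ ⟪F x, x - x₀⟫) := by
    rintro ⟨x₀, hx₀K, hbd⟩
    obtain ⟨r, hr⟩ := (hbd.union (Bornology.isBounded_singleton (x := x₀))).subset_closedBall 0
    set R : ℝ := max r 0 + 1 with hR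
    have hrR : r < R := by rw [hR]; have := le_max_left r 0; linarith
    refine ⟨ball 0 R, isOpen_ball, isBounded_ball, x₀, ⟨hx₀K, ?_⟩, ?_⟩
    · rw [mem_ball_zero_iff]
      have : x₀ ∈ closedBall (0:E) r := hr (Or.inr rfl)
      rw [mem_closedBall_zero_iff] at this
      linarith
    · rintro x ⟨hxK, hxf⟩
      have hxcl : ‖x‖ ≤ R := by
        have h1 : x ∈ closure (ball (0:E) R) := hxf.1
        have := closure_ball_subset_closedBall h1
        rwa [mem_closedBall_zero_iff] at this
      have hxnb : x ∉ ball (0:E) R := by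
        intro hx
        exact hxf.2 (by rwa [isOpen_ball.interior_eq])
      rw [mem_ball_zero_iff, not_lt] at hxnb
      by_contra hneg
      push_neg at hneg
      have : x ∈ closedBall (0:E) r := hr (Or.inl ⟨hxK, hneg⟩)
      rw [mem_closedBall_zero_iff] at this
      linarith
  -- (a) → (c)
  have hac : (∃ x₀ ∈ K, Bornology.IsBounded {x ∈ K | ⟪F x, x - x₀⟫ < 0}) →
      (∃ x ∈ K, ∀ y ∈ K, 0 ≤ ⟪F x, y - x⟫) := by
    rintro ⟨x₀, hx₀K, hbd⟩
    obtain ⟨r, hr⟩ := (hbd.union (Bornology.isBounded_singleton (x := x₀))).subset_closedBall 0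
    set R : ℝ := max r 0 + 1 with hR
    have hrR : r < R := by rw [hR]; have := le_max_left r 0; linarith
    have hx₀r : ‖x₀‖ ≤ r := by
      have : x₀ ∈ closedBall (0:E) r := hr (Or.inr rfl)
      rwa [mem_closedBall_zero_iff] at this
    have hx₀D : x₀ ∈ K ∩ closedBall 0 R :=
      ⟨hx₀K, by rw [mem_closedBall_zero_iff]; linarith⟩
    obtain ⟨xs, hxsD, hsol, _⟩ := minty_exists K hKc hKconv F hF hpseudo R x₀ hx₀D
    have hc0 : 0 ≤ ⟪F xs, x₀ - xs⟫ := hsol x₀ hx₀D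
    by_cases hc : ⟪F xs, xs - x₀⟫ < 0
    · -- xs is in the bounded set, hence interior; pivot at xs itself
      have hxsr : ‖xs‖ ≤ r := by
        have : xs ∈ closedBall (0:E) r := hr (Or.inl ⟨hxsD.1, hc⟩)
        rwa [mem_closedBall_zero_iff] at this
      exact ⟨xs, hxsD.1, pivot hKconv hsol hxsD.1 (by linarith) (by simp)⟩
    · push_neg at hc
      have hpiv : ⟪F xs, x₀ - xs⟫ = 0 := by
        have : ⟪F xs, xs - x₀⟫ = -⟪F xs, x₀ - xs⟫ := by
          rw [← inner_neg_right]; congr 1; abel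
        linarith
      exact ⟨xs, hxsD.1, pivot hKconv hsol hx₀K (by linarith) hpiv⟩
  -- (b) → (c)
  have hbc : (∃ Ω : Set E, IsOpen Ω ∧ Bornology.IsBounded Ω ∧
        ∃ x₀ ∈ K ∩ Ω, ∀ x ∈ K ∩ frontier Ω, 0 ≤ ⟪F x, x - x₀⟫) →
      (∃ x ∈ K, ∀ y ∈ K, 0 ≤ ⟪F x, y - x⟫) := by
    rintro ⟨Ω, hΩo, hΩb, x₀, ⟨hx₀K, hx₀Ω⟩, hbdry⟩
    obtain ⟨r, hr⟩ := hΩb.closure.subset_closedBall 0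
    set R : ℝ := max r 0 + 1 with hR
    have hrR : r < R := by rw [hR]; have := le_max_left r 0; linarith
    have hclR : closure Ω ⊆ ball 0 R := by
      intro z hz
      have := hr hz
      rw [mem_closedBall_zero_iff] at this
      rw [mem_ball_zero_iff]; linarith
    have hx₀R : ‖x₀‖ < R := by
      have := hclR (subset_closure hx₀Ω)
      rwa [mem_ball_zero_iff] at this
    have hx₀D : x₀ ∈ K ∩ closedBall 0 R :=
      ⟨hx₀K, ball_subset_closedBall (hclR (subset_closure hx₀Ω))⟩
    obtain ⟨xs, hxsD, hsol, hminty⟩ := minty_exists K hKc hKconv F hF hpseudo R x₀ hx₀D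
    by_cases hxscl : xs ∈ closure Ω
    · -- xs interior to the ball: pivot at xs
      have hxsR : ‖xs‖ < R := by
        have := hclR hxscl; rwa [mem_ball_zero_iff] at this
      exact ⟨xs, hxsD.1, pivot hKconv hsol hxsD.1 hxsR (by simp)⟩
    · -- segment from x₀ to xs crosses the frontier of Ω
      have hpre : IsPreconnected (segment ℝ x₀ xs) := (convex_segment x₀ xs).isPreconnected
      have hcover : segment ℝ x₀ xs ⊆ closure Ω ∪ Ωᶜ := by
        intro z _
        by_cases hz : z ∈ Ω
        · exact Or.inl (subset_closure hz)
        · exact Or.inr hz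
      obtain ⟨z, hzseg, hzcl, hznΩ⟩ :=
        isPreconnected_closed_iff.1 hpre (closure Ω) Ωᶜ isClosed_closure
          (isClosed_compl_iff.2 hΩo) hcover
          ⟨x₀, left_mem_segment ℝ x₀ xs, subset_closure hx₀Ω⟩
          ⟨xs, right_mem_segment ℝ x₀ xs, fun h => hxscl (subset_closure h)⟩
      have hzf : z ∈ frontier Ω := by
        rw [frontier, hΩo.interior_eq]; exact ⟨hzcl, hznΩ⟩
      obtain ⟨θ, hθmem, hθeq⟩ := by
        rw [segment_eq_image'] at hzseg; exact hzseg
      have hθeq' : x₀ + θ • (xs - x₀) = z := hθeq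
      have hθ0 : θ ≠ 0 := by
        rintro rfl
        simp only [zero_smul, add_zero] at hθeq
        exact hznΩ (hθeq ▸ hx₀Ω)
      have hθ1 : θ ≠ 1 := by
        rintro rfl
        simp only [one_smul] at hθeq
        rw [show x₀ + (xs - x₀) = xs by abel] at hθeq
        exact hxscl (hθeq ▸ hzcl)
      have hθpos : 0 < θ := lt_of_le_of_ne hθmem.1 (Ne.symm hθ0)
      have hθlt : θ < 1 := lt_of_le_of_ne hθmem.2 hθ1
      have hzK : z ∈ K := hKconv.segment_subset hx₀K hxsD.1 hzseg
      have hzD : z ∈ K ∩ closedBall 0 R := ⟨hzK, ball_subset_closedBall (hclR hzcl)⟩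
      have hc1 : 0 ≤ ⟪F z, xs - x₀⟫ := by
        have h := hbdry z ⟨hzK, hzf⟩
        have heq : z - x₀ = θ • (xs - x₀) := by rw [← hθeq']; abel
        rw [heq, real_inner_smul_right] at h
        exact nonneg_of_mul_nonneg_right h hθpos
      have hc2 : ⟪F z, xs - x₀⟫ ≤ 0 := by
        have h := hminty z hzD
        have heq : z - xs = (θ - 1) • (xs - x₀) := by rw [← hθeq']; module
        rw [heq, real_inner_smul_right] at h
        nlinarith
      have hc0 : ⟪F z, xs - x₀⟫ = 0 := le_antisymm hc2 hc1
      have hxz : xs - z = (1 - θ) • (xs - x₀) := by rw [← hθeq']; module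
      have hps : 0 ≤ ⟪F xs, xs - z⟫ := by
        apply hpseudo z hzK xs hxsD.1
        rw [hxz, real_inner_smul_right, hc0, mul_zero]
      rw [hxz, real_inner_smul_right] at hps
      have h5 : 0 ≤ ⟪F xs, xs - x₀⟫ := nonneg_of_mul_nonneg_right hps (by linarith)
      have h6 : 0 ≤ ⟪F xs, x₀ - xs⟫ := hsol x₀ hx₀D
      have hpiv : ⟪F xs, x₀ - xs⟫ = 0 := by
        have : ⟪F xs, xs - x₀⟫ = -⟪F xs, x₀ - xs⟫ := by
          rw [← inner_neg_right]; congr 1; abel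
        linarith
      exact ⟨xs, hxsD.1, pivot hKconv hsol hx₀K hx₀R hpiv⟩
  exact ⟨⟨hab, fun hb => hca (hbc hb)⟩, ⟨hbc, fun hc => hab (hca hc)⟩⟩
end

section
/- Let E be a finite-dimensional real inner product space, K ⊆ E a nonempty closed convex set, and F : E → E continuous and pseudomonotone on K. If there exists x̂ ∈ K such that the set L≤ = {x ∈ K | ⟪F x, x − x̂⟫ ≤ 0} is bounded, then the solution set SOL(K, F) = {x ∈ K | ⟪F x, y − x⟫ ≥ 0 for all y ∈ K} is nonempty and compact. -/
open RealInnerProductSpace Set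



theorem berge_inter {E : Type*} [NormedAddCommGroup E] [InnerProductSpace ℝ E] :
    ∀ (n : ℕ) {ι : Type*} [DecidableEq ι] (s : Finset ι) (C : ι → Set E), s.card = n →
    (∀ i ∈ s, Convex ℝ (C i)) → (∀ i ∈ s, IsCompact (C i)) →
    (∀ i ∈ s, (C i).Nonempty) →
    Convex ℝ (⋃ i ∈ s, C i) →
    (∀ k ∈ s, (⋂ i ∈ s.erase k, C i).Nonempty) →
    (⋂ i ∈ s, C i).Nonempty := by
  intro n
  induction n with
  | zero =>
    intro ι _ s C hcard _ _ _ _ _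
    rw [Finset.card_eq_zero] at hcard; subst hcard; simp
  | succ n IH =>
    intro ι _ s C hcard hconv hcomp hne huconv hdrop
    rcases Nat.eq_zero_or_pos n with rfl | hn
    · obtain ⟨a, rfl⟩ := Finset.card_eq_one.mp hcard
      simpa using hne a (by simp)
    · by_contra hempty
      obtain ⟨j₀, hj₀⟩ : ∃ j, j ∈ s := Finset.card_pos.mp (by omega : 0 < s.card)
      set s' := s.erase j₀ with hs'
      have hs'card : s'.card = n := by
        rw [hs', Finset.card_erase_of_mem hj₀, hcard]; omega
      have hs'ne : s'.Nonempty := Finset.card_pos.mp (by omega)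
      have hs'sub : ∀ i ∈ s', i ∈ s := fun i hi => Finset.mem_of_mem_erase hi
      set A := C j₀ with hA
      set B := ⋂ i ∈ s', C i with hB
      have hBne : B.Nonempty := hdrop j₀ hj₀
      have hBsub : ∀ i ∈ s', B ⊆ C i := fun i hi => Set.biInter_subset_of_mem hi
      have hBclosed : IsClosed B :=
        isClosed_biInter fun i hi => (hcomp i (hs'sub i hi)).isClosed
      have hBconv : Convex ℝ B :=
        convex_iInter₂ fun i hi => hconv i (hs'sub i hi)
      have hdisj : Disjoint A B := by
        rw [Set.disjoint_left]
        intro x hxA hxB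
        refine hempty ⟨x, Set.mem_iInter₂.mpr fun i hi => ?_⟩
        by_cases h : i = j₀
        · rw [h]; exact hxA
        · exact Set.mem_iInter₂.mp hxB i (Finset.mem_erase.mpr ⟨h, hi⟩)
      obtain ⟨f, u, v, hfA, huv, hfB⟩ :=
        geometric_hahn_banach_compact_closed (hconv j₀ hj₀) (hcomp j₀ hj₀) hBconv hBclosed hdisj
      have hfB' : ∀ b ∈ B, u < f b := fun b hb => huv.trans (hfB b hb)
      set H : Set E := {x | f x = u} with hH
      have hHclosed : IsClosed H := isClosed_eq f.continuous continuous_const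
      have hHconv : Convex ℝ H := convex_hyperplane (f.toLinearMap.isLinear) u
      -- segment crossing lemma
      have hseg : ∀ k ∈ s', ∃ z, f z = u ∧ (∀ i ∈ s'.erase k, z ∈ C i) ∧ z ∈ ⋃ i ∈ s, C i := by
        intro k hk
        obtain ⟨xk, hxk⟩ := hdrop k (hs'sub k hk)
        have hxk' : ∀ i ∈ s.erase k, xk ∈ C i := fun i hi => Set.mem_iInter₂.mp hxk i hi
        obtain ⟨y, hy⟩ := hBne
        have hy' : ∀ i ∈ s', y ∈ C i := fun i hi => Set.mem_iInter₂.mp hy i hi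
        have hkj₀ : k ≠ j₀ := (Finset.mem_erase.mp hk).1
        have hxkA : xk ∈ A := hxk' j₀ (Finset.mem_erase.mpr ⟨hkj₀.symm, hj₀⟩)
        have h1 : f xk < u := hfA xk hxkA
        have h2 : u < f y := hfB' y hy
        have hcont : ContinuousOn (fun t : ℝ => f (xk + t • (y - xk))) (Icc 0 1) := by
          exact (f.continuous.comp (continuous_const.add
            (continuous_id.smul continuous_const))).continuousOn
        have hmem : u ∈ Icc (f (xk + (0:ℝ) • (y - xk))) (f (xk + (1:ℝ) • (y - xk))) := by
          simp only [zero_smul, add_zero, one_smul]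
          constructor
          · simpa using h1.le
          · simpa using h2.le
        obtain ⟨t, ht, hft⟩ := intermediate_value_Icc (zero_le_one) hcont hmem
        refine ⟨xk + t • (y - xk), hft, ?_, ?_⟩
        · intro i hi
          have hik : i ≠ k := (Finset.mem_erase.mp hi).1
          have his' : i ∈ s' := (Finset.mem_erase.mp hi).2
          exact (hconv i (hs'sub i his')).add_smul_sub_mem
            (hxk' i (Finset.mem_erase.mpr ⟨hik, hs'sub i his'⟩)) (hy' i his') ht
        · refine huconv.add_smul_sub_mem ?_ ?_ ht
          · exact Set.mem_biUnion hj₀ hxkA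
          · exact Set.mem_biUnion (hs'sub k hk) (hy' k hk)
      set D : ι → Set E := fun i => C i ∩ H with hD
      have hdropD : ∀ k ∈ s', (⋂ i ∈ s'.erase k, D i).Nonempty := by
        intro k hk
        obtain ⟨z, hz1, hz2, _⟩ := hseg k hk
        exact ⟨z, Set.mem_iInter₂.mpr fun i hi => ⟨hz2 i hi, hz1⟩⟩
      have hneD : ∀ k ∈ s', (D k).Nonempty := by
        intro k hk
        rcases Finset.eq_empty_or_nonempty (s'.erase k) with hek | ⟨j₁, hj₁⟩
        · -- s' = {k}
          obtain ⟨z, hz1, _, hz3⟩ := hseg k hk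
          obtain ⟨i, hi, hzi⟩ := by
            simpa only [Set.mem_iUnion, exists_prop] using hz3
          have hij₀ : i ≠ j₀ := by
            intro h; subst h
            exact absurd hz1 (ne_of_lt (hfA z hzi))
          have his' : i ∈ s' := Finset.mem_erase.mpr ⟨hij₀, hi⟩
          have : i = k := by
            by_contra h
            exact (Finset.eq_empty_iff_forall_notMem.mp hek) i
              (Finset.mem_erase.mpr ⟨h, his'⟩)
          subst this
          exact ⟨z, hzi, hz1⟩
        · obtain ⟨z, hz⟩ := hdropD j₁ ((Finset.mem_erase.mp hj₁).2)
          have hk' : k ∈ s'.erase j₁ :=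
            Finset.mem_erase.mpr ⟨fun h => (Finset.mem_erase.mp hj₁).1 h.symm, hk⟩
          exact ⟨z, Set.mem_iInter₂.mp hz k hk'⟩
      have huconvD : Convex ℝ (⋃ i ∈ s', D i) := by
        have heq : (⋃ i ∈ s', D i) = (⋃ i ∈ s, C i) ∩ H := by
          apply Set.Subset.antisymm
          · rintro x hx
            obtain ⟨i, hi, hxi, hxH⟩ := by
              simpa only [Set.mem_iUnion, exists_prop, Set.mem_inter_iff] using hx
            exact ⟨Set.mem_biUnion (hs'sub i hi) hxi, hxH⟩
          · rintro x ⟨hx1, hx2⟩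
            obtain ⟨i, hi, hxi⟩ := by
              simpa only [Set.mem_iUnion, exists_prop] using hx1
            have hij₀ : i ≠ j₀ := by
              intro h; subst h
              exact absurd hx2 (ne_of_lt (hfA x hxi))
            exact Set.mem_biUnion (Finset.mem_erase.mpr ⟨hij₀, hi⟩) ⟨hxi, hx2⟩
        rw [heq]
        exact huconv.inter hHconv
      have := IH s' D hs'card
        (fun i hi => (hconv i (hs'sub i hi)).inter hHconv)
        (fun i hi => (hcomp i (hs'sub i hi)).inter_right hHclosed)
        hneD huconvD hdropD
      obtain ⟨w, hw⟩ := this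
      have hwB : w ∈ B := Set.mem_iInter₂.mpr fun i hi => (Set.mem_iInter₂.mp hw i hi).1
      have hwH : f w = u := by
        obtain ⟨j₁, hj₁⟩ := hs'ne
        exact (Set.mem_iInter₂.mp hw j₁ hj₁).2
      exact absurd hwH (ne_of_gt (hfB' w hwB))


section VI
variable {E : Type*} [NormedAddCommGroup E] [InnerProductSpace ℝ E]

lemma kkm_cover (K : Set E) (hKconv : Convex ℝ K) (F : E → E)
    (hpseudo : ∀ x ∈ K, ∀ y ∈ K, 0 ≤ ⟪F x, y - x⟫ → 0 ≤ ⟪F y, y - x⟫)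
    (t : Finset E) (ht : ↑t ⊆ K) (x : E) (hx : x ∈ convexHull ℝ (↑t : Set E)) :
    ∃ y ∈ t, 0 ≤ ⟪F y, y - x⟫ := by
  have hxK : x ∈ K := convexHull_min ht hKconv hx
  by_contra hcon
  push_neg at hcon
  have hFx : ∀ y ∈ t, ⟪F x, y - x⟫ < 0 := by
    intro y hy
    by_contra h
    push_neg at h
    exact absurd (hpseudo x hxK y (ht hy) h) (not_le.mpr (hcon y hy))
  rw [Finset.convexHull_eq] at hx
  obtain ⟨w, hw0, hw1, hcm⟩ := hx
  have hsum : ∑ y ∈ t, w y * ⟪F x, y - x⟫ = 0 := by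
    have h1 : ∀ y ∈ t, w y * ⟪F x, y - x⟫ = ⟪F x, w y • (y - x)⟫ := by
      intro y _; rw [real_inner_smul_right]
    rw [Finset.sum_congr rfl h1, ← inner_sum]
    have h2 : ∑ y ∈ t, w y • (y - x) = 0 := by
      simp only [smul_sub]
      rw [Finset.sum_sub_distrib, ← Finset.sum_smul, hw1, one_smul]
      have := Finset.centerMass_eq_of_sum_1 t id hw1
      rw [hcm] at this
      simp only [id] at this
      rw [← this, sub_self]
    rw [h2, inner_zero_right]
  have hne : t.Nonempty := by
    by_contra h
    rw [Finset.not_nonempty_iff_eq_empty] at h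
    subst h
    simp at hw1
  obtain ⟨y₀, hy₀, hwy₀⟩ : ∃ y ∈ t, 0 < w y := by
    by_contra h
    push_neg at h
    have : ∑ y ∈ t, w y = 0 :=
      Finset.sum_eq_zero fun y hy => le_antisymm (h y hy) (hw0 y hy)
    rw [hw1] at this; norm_num at this
  have hlt : ∑ y ∈ t, w y * ⟪F x, y - x⟫ < 0 := by
    have : ∑ y ∈ t, w y * ⟪F x, y - x⟫ < ∑ y ∈ t, (0 : ℝ) := by
      apply Finset.sum_lt_sum
      · intro i hi
        exact mul_nonpos_of_nonneg_of_nonpos (hw0 i hi) (hFx i hi).le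
      · exact ⟨y₀, hy₀, mul_neg_of_pos_of_neg hwy₀ (hFx y₀ hy₀)⟩
    simpa using this
  rw [hsum] at hlt; exact lt_irrefl 0 hlt

lemma minty_finite (K : Set E) (hKconv : Convex ℝ K) (F : E → E) (hF : Continuous F)
    (hpseudo : ∀ x ∈ K, ∀ y ∈ K, 0 ≤ ⟪F x, y - x⟫ → 0 ≤ ⟪F y, y - x⟫) :
    ∀ (n : ℕ) (t : Finset E), t.card = n → ↑t ⊆ K →
    (⋂ y ∈ t, (convexHull ℝ (↑t : Set E) ∩ {x | 0 ≤ ⟪F y, y - x⟫})).Nonempty := by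
  classical
  intro n
  induction n with
  | zero =>
    intro t hcard _
    rw [Finset.card_eq_zero] at hcard; subst hcard; simp
  | succ n IH =>
    intro t hcard ht
    set C : E → Set E := fun y => convexHull ℝ (↑t : Set E) ∩ {x | 0 ≤ ⟪F y, y - x⟫} with hC
    have hhalf : ∀ y : E, Convex ℝ {x : E | 0 ≤ ⟪F y, y - x⟫} := by
      intro y
      have : {x : E | 0 ≤ ⟪F y, y - x⟫} = {x : E | ⟪F y, x⟫ ≤ ⟪F y, y⟫} := by
        ext x
        simp only [Set.mem_setOf_eq, inner_sub_right, sub_nonneg]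
      rw [this]
      exact convex_halfSpace_le
        ⟨fun a b => inner_add_right _ _ _, fun c a => real_inner_smul_right _ _ _⟩ _
    have hclosedhalf : ∀ y : E, IsClosed {x : E | 0 ≤ ⟪F y, y - x⟫} :=
      fun y => isClosed_le continuous_const
        (Continuous.inner continuous_const (continuous_const.sub continuous_id))
    apply berge_inter (n + 1) t C hcard
    · exact fun y _ => (convex_convexHull ℝ _).inter (hhalf y)
    · exact fun y _ => (t.finite_toSet.isCompact_convexHull (𝕜 := ℝ)).inter_right (hclosedhalf y)
    · intro y hy
      exact ⟨y, subset_convexHull ℝ _ hy, by simp⟩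
    · have heq : (⋃ y ∈ t, C y) = convexHull ℝ (↑t : Set E) := by
        apply Set.Subset.antisymm
        · intro x hx
          obtain ⟨y, _, hxy, _⟩ := by
            simpa only [Set.mem_iUnion, exists_prop, Set.mem_inter_iff] using hx
          exact hxy
        · intro x hx
          obtain ⟨y, hy, hyx⟩ := kkm_cover K hKconv F hpseudo t ht x hx
          exact Set.mem_biUnion hy ⟨hx, hyx⟩
      rw [heq]; exact convex_convexHull ℝ _
    · intro k hk
      have hcard' : (t.erase k).card = n := by
        rw [Finset.card_erase_of_mem hk, hcard]; omega
      have hsub : ↑(t.erase k) ⊆ K := fun x hx => ht (Finset.mem_of_mem_erase hx)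
      obtain ⟨x', hx'⟩ := IH (t.erase k) hcard' hsub
      refine ⟨x', Set.mem_iInter₂.mpr fun y hy => ?_⟩
      have := Set.mem_iInter₂.mp hx' y hy
      exact ⟨convexHull_mono (by exact_mod_cast Finset.erase_subset k t) this.1, this.2⟩

end VI
theorem stmt_7 {E : Type*} [NormedAddCommGroup E] [InnerProductSpace ℝ E]
    [FiniteDimensional ℝ E]
    (K : Set E) (hK : K.Nonempty) (hKc : IsClosed K) (hKconv : Convex ℝ K)
    (F : E → E) (hF : Continuous F)
    (hpseudo : ∀ x ∈ K, ∀ y ∈ K, 0 ≤ ⟪F x, y - x⟫ → 0 ≤ ⟪F y, y - x⟫)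
    (x₀ : E) (hx₀ : x₀ ∈ K)
    (hbdd : Bornology.IsBounded {x ∈ K | ⟪F x, x - x₀⟫ ≤ 0}) :
    {x ∈ K | ∀ y ∈ K, 0 ≤ ⟪F x, y - x⟫}.Nonempty ∧
      IsCompact {x ∈ K | ∀ y ∈ K, 0 ≤ ⟪F x, y - x⟫} := by
  classical
  set SOL := {x ∈ K | ∀ y ∈ K, 0 ≤ ⟪F x, y - x⟫} with hSOL
  -- solutions lie in the bounded set
  have hSOLsub : SOL ⊆ {x ∈ K | ⟪F x, x - x₀⟫ ≤ 0} := by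
    rintro x ⟨hxK, hx⟩
    refine ⟨hxK, ?_⟩
    have := hx x₀ hx₀
    rw [inner_sub_right] at this ⊢
    linarith
  -- choose radius
  obtain ⟨r, hr⟩ := hbdd.subset_closedBall 0
  set R : ℝ := max r ‖x₀‖ + 1 with hRdef
  have hrR : r < R := by
    have := le_max_left r ‖x₀‖; linarith
  have hx₀R : ‖x₀‖ ≤ R := by
    have := le_max_right r ‖x₀‖; linarith
  set Cs : Set E := K ∩ Metric.closedBall 0 R with hCs
  have hCconv : Convex ℝ Cs := hKconv.inter (convex_closedBall 0 R)
  have hCclosed : IsClosed Cs := hKc.inter Metric.isClosed_closedBall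
  have hCcomp : IsCompact Cs :=
    Metric.isCompact_of_isClosed_isBounded hCclosed
      (Metric.isBounded_closedBall.subset Set.inter_subset_right)
  have hx₀C : x₀ ∈ Cs := ⟨hx₀, by rwa [Metric.mem_closedBall, dist_zero_right]⟩
  have hCK : Cs ⊆ K := Set.inter_subset_left
  -- Minty solution on Cs
  have hMinty : ∃ x' ∈ Cs, ∀ y ∈ Cs, 0 ≤ ⟪F y, y - x'⟫ := by
    by_contra hcon
    push_neg at hcon
    have hempty : Cs ∩ ⋂ (i : ↥Cs), {x : E | 0 ≤ ⟪F ↑i, ↑i - x⟫} = ∅ := by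
      rw [Set.eq_empty_iff_forall_notMem]
      rintro x ⟨hxC, hx⟩
      obtain ⟨y, hyC, hy⟩ := hcon x hxC
      exact absurd (Set.mem_iInter.mp hx ⟨y, hyC⟩) (not_le.mpr hy)
    obtain ⟨u, hu⟩ := hCcomp.elim_finite_subfamily_closed _
      (fun i : ↥Cs => isClosed_le continuous_const
        (Continuous.inner continuous_const (continuous_const.sub continuous_id))) hempty
    set t : Finset E := insert x₀ (u.image Subtype.val) with htdef
    have htC : ↑t ⊆ Cs := by
      intro y hy
      rw [htdef] at hy
      simp only [Finset.coe_insert, Set.mem_insert_iff, Finset.coe_image, Set.mem_image] at hy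
      rcases hy with rfl | ⟨i, _, rfl⟩
      · exact hx₀C
      · exact i.2
    have htK : ↑t ⊆ K := htC.trans hCK
    obtain ⟨x', hx'⟩ := minty_finite K hKconv F hF hpseudo t.card t rfl htK
    have hx'C : x' ∈ Cs := by
      obtain ⟨y, hy⟩ : t.Nonempty := ⟨x₀, by simp [htdef]⟩
      have := Set.mem_iInter₂.mp hx' y hy
      exact convexHull_min htC hCconv this.1
    apply Set.eq_empty_iff_forall_notMem.mp hu x'
    refine ⟨hx'C, Set.mem_iInter.mpr fun i => Set.mem_iInter.mpr fun hiu => ?_⟩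
    have hit : (i : E) ∈ t := by
      rw [htdef]
      exact Finset.mem_insert_of_mem (Finset.mem_image_of_mem _ hiu)
    exact (Set.mem_iInter₂.mp hx' (i : E) hit).2
  obtain ⟨x', hx'C, hx'M⟩ := hMinty
  -- Minty → Stampacchia on Cs
  have hx'S : ∀ y ∈ Cs, 0 ≤ ⟪F x', y - x'⟫ := by
    intro y hyC
    set g : ℕ → E := fun m => x' + (1 / (m + 1) : ℝ) • (y - x') with hg
    have hmem : ∀ m : ℕ, g m ∈ Cs := by
      intro m
      apply hCconv.add_smul_sub_mem hx'C hyC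
      constructor
      · positivity
      · rw [div_le_one (by positivity)]
        have : (0:ℝ) ≤ m := Nat.cast_nonneg m
        linarith
    have hstep : ∀ m : ℕ, 0 ≤ ⟪F (g m), y - x'⟫ := by
      intro m
      have h0 := hx'M (g m) (hmem m)
      have : g m - x' = (1 / (m + 1) : ℝ) • (y - x') := by
        rw [hg]; simp
      rw [this, real_inner_smul_right] at h0
      have hpos : (0:ℝ) < 1 / (m + 1) := by positivity
      nlinarith
    have hgl : Filter.Tendsto g Filter.atTop (nhds x') := by
      have h1 : Filter.Tendsto (fun m : ℕ => (1 / (m + 1) : ℝ)) Filter.atTop (nhds 0) :=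
        tendsto_one_div_add_atTop_nhds_zero_nat
      have h2 : Filter.Tendsto g Filter.atTop (nhds (x' + (0:ℝ) • (y - x'))) :=
        Filter.Tendsto.add tendsto_const_nhds (h1.smul tendsto_const_nhds)
      simpa using h2
    have hlim : Filter.Tendsto (fun m => ⟪F (g m), y - x'⟫) Filter.atTop
        (nhds ⟪F x', y - x'⟫) :=
      Filter.Tendsto.inner ((hF.tendsto x').comp hgl) tendsto_const_nhds
    exact ge_of_tendsto' hlim hstep
  -- x' is in the bounded region, strictly inside the ball
  have hx'L : x' ∈ {x ∈ K | ⟪F x, x - x₀⟫ ≤ 0} := by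
    refine ⟨hCK hx'C, ?_⟩
    have := hx'S x₀ hx₀C
    rw [inner_sub_right] at this ⊢
    linarith
  have hx'norm : ‖x'‖ ≤ r := by
    have := hr hx'L
    rwa [Metric.mem_closedBall, dist_zero_right] at this
  -- extend to all of K
  have hx'sol : x' ∈ SOL := by
    refine ⟨hCK hx'C, ?_⟩
    intro y hyK
    rcases eq_or_ne y x' with rfl | hne
    · simp
    have hd : (0:ℝ) < ‖y - x'‖ := by
      rw [norm_pos_iff]; exact sub_ne_zero_of_ne hne
    set s : ℝ := min 1 ((R - ‖x'‖) / ‖y - x'‖) with hs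
    have hspos : 0 < s := by
      apply lt_min one_pos
      apply div_pos _ hd
      linarith [hrR]
    have hs1 : s ≤ 1 := min_le_left _ _
    set w : E := x' + s • (y - x') with hw
    have hwK : w ∈ K := hKconv.add_smul_sub_mem (hCK hx'C) hyK ⟨hspos.le, hs1⟩
    have hwball : ‖w‖ ≤ R := by
      have h1 : ‖w‖ ≤ ‖x'‖ + s * ‖y - x'‖ := by
        rw [hw]
        calc ‖x' + s • (y - x')‖ ≤ ‖x'‖ + ‖s • (y - x')‖ := norm_add_le _ _
        _ = ‖x'‖ + |s| * ‖y - x'‖ := by rw [norm_smul, Real.norm_eq_abs]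
        _ = ‖x'‖ + s * ‖y - x'‖ := by rw [abs_of_pos hspos]
      have h2 : s * ‖y - x'‖ ≤ R - ‖x'‖ := by
        have : s ≤ (R - ‖x'‖) / ‖y - x'‖ := min_le_right _ _
        calc s * ‖y - x'‖ ≤ ((R - ‖x'‖) / ‖y - x'‖) * ‖y - x'‖ :=
              mul_le_mul_of_nonneg_right this hd.le
        _ = R - ‖x'‖ := by field_simp
      linarith
    have hwC : w ∈ Cs := ⟨hwK, by rwa [Metric.mem_closedBall, dist_zero_right]⟩
    have := hx'S w hwC
    have hwx : w - x' = s • (y - x') := by rw [hw]; simp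
    rw [hwx, real_inner_smul_right] at this
    nlinarith
  constructor
  · exact ⟨x', hx'sol⟩
  · -- compactness
    have hclosed : IsClosed SOL := by
      have : SOL = K ∩ ⋂ y ∈ K, {x : E | 0 ≤ ⟪F x, y - x⟫} := by
        ext x
        constructor
        · rintro ⟨h1, h2⟩
          exact ⟨h1, Set.mem_iInter₂.mpr fun y hy => h2 y hy⟩
        · rintro ⟨h1, h2⟩
          exact ⟨h1, fun y hy => Set.mem_iInter₂.mp h2 y hy⟩
      rw [this]
      apply hKc.inter
      apply isClosed_biInter
      intro y _
      exact isClosed_le continuous_const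
        (Continuous.inner hF (continuous_const.sub continuous_id))
    have hbddSOL : Bornology.IsBounded SOL := hbdd.subset hSOLsub
    exact Metric.isCompact_of_isClosed_isBounded hclosed hbddSOL
end

section
/- Let E be a finite-dimensional real inner product space, K ⊆ E a nonempty closed convex set, and F : E → E continuous and pseudomonotone on K. Then the solution set SOL(K, F) = {x ∈ K | ⟪F x, y − x⟫ ≥ 0 for all y ∈ K} is convex. -/
open RealInnerProductSpace

theorem stmt_8 {E : Type*} [NormedAddCommGroup E] [InnerProductSpace ℝ E]
    [FiniteDimensional ℝ E]
    (K : Set E) (hK : K.Nonempty) (hKc : IsClosed K) (hKconv : Convex ℝ K)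
    (F : E → E) (hF : Continuous F)
    (hpseudo : ∀ x ∈ K, ∀ y ∈ K, 0 ≤ ⟪F x, y - x⟫ → 0 ≤ ⟪F y, y - x⟫) :
    Convex ℝ {x ∈ K | ∀ y ∈ K, 0 ≤ ⟪F x, y - x⟫} := by
  have hEq : {x ∈ K | ∀ y ∈ K, 0 ≤ ⟪F x, y - x⟫}
      = {x ∈ K | ∀ y ∈ K, 0 ≤ ⟪F y, y - x⟫} := by
    ext x
    simp only [Set.mem_setOf_eq]
    constructor
    · rintro ⟨hx, h⟩
      exact ⟨hx, fun y hy => hpseudo x hx y hy (h y hy)⟩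
    · rintro ⟨hx, h⟩
      refine ⟨hx, fun y hy => ?_⟩
      -- Minty: take z t = x + t • (y - x) for small t > 0
      have hz : ∀ t ∈ Set.Icc (0:ℝ) 1, x + t • (y - x) ∈ K := by
        intro t ht
        have : x + t • (y - x) = (1 - t) • x + t • y := by
          rw [smul_sub, sub_smul, one_smul]; abel
        rw [this]
        exact hKconv hx hy (by linarith [ht.2]) ht.1 (by ring)
      have key : ∀ t ∈ Set.Ioc (0:ℝ) 1, 0 ≤ ⟪F (x + t • (y - x)), y - x⟫ := by
        intro t ht
        have hmem := hz t ⟨le_of_lt ht.1, ht.2⟩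
        have h1 := h _ hmem
        have : x + t • (y - x) - x = t • (y - x) := by abel
        rw [this, real_inner_smul_right] at h1
        exact nonneg_of_mul_nonneg_right h1 ht.1
      -- limit t → 0+
      have hcont : Filter.Tendsto (fun t : ℝ => ⟪F (x + t • (y - x)), y - x⟫)
          (nhdsWithin 0 (Set.Ioc 0 1)) (nhds ⟪F (x + (0:ℝ) • (y - x)), y - x⟫) := by
        apply Filter.Tendsto.mono_left _ nhdsWithin_le_nhds
        exact (Continuous.inner (hF.comp (by continuity)) continuous_const).tendsto 0
      have hne : (nhdsWithin (0:ℝ) (Set.Ioc 0 1)).NeBot := by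
        apply mem_closure_iff_nhdsWithin_neBot.mp
        have : (0:ℝ) ∈ closure (Set.Ioc (0:ℝ) 1) := by
          rw [closure_Ioc one_ne_zero.symm]; exact ⟨le_refl _, zero_le_one⟩
        exact this
      have hlim : 0 ≤ ⟪F (x + (0:ℝ) • (y - x)), y - x⟫ :=
        ge_of_tendsto hcont (by filter_upwards [self_mem_nhdsWithin] using key)
      simpa using hlim
  rw [hEq]
  have : {x ∈ K | ∀ y ∈ K, 0 ≤ ⟪F y, y - x⟫}
      = K ∩ ⋂ y ∈ K, {x | 0 ≤ ⟪F y, y - x⟫} := by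
    ext x; simp [Set.mem_iInter]
  rw [this]
  refine hKconv.inter (convex_iInter fun y => convex_iInter fun _ => ?_)
  intro a ha b hb s t hs ht hst
  simp only [Set.mem_setOf_eq] at *
  have : ⟪F y, y - (s • a + t • b)⟫ = s * ⟪F y, y - a⟫ + t * ⟪F y, y - b⟫ := by
    have : y - (s • a + t • b) = s • (y - a) + t • (y - b) := by
      have hy : y = s • y + t • y := by rw [← add_smul, hst, one_smul]
      rw [smul_sub, smul_sub]
      conv_lhs => rw [hy]
      abel
    rw [this, inner_add_right, real_inner_smul_right, real_inner_smul_right]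
  rw [this]
  positivity
end

section
/- Let E be a finite-dimensional real inner product space, K ⊆ E a nonempty closed convex set, and F : E → E continuous and pseudomonotone on K. Then the solution set SOL(K, F) is nonempty and bounded if and only if the only vector d ∈ E satisfying both (i) x + t • d ∈ K for all x ∈ K and all t ≥ 0 (i.e. d ∈ K∞) and (ii) ⟪F(x), d⟫ ≤ 0 for all x ∈ K (i.e. d ∈ −(F(K))*) is d = 0; that is, K∞ ∩ [−(F(K))*] = {0}. -/
open RealInnerProductSpace

section Aux
open Filter Topology
variable {E : Type*} [NormedAddCommGroup E] [InnerProductSpace ℝ E]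

/-- Segment/connectedness base case: two compact convex sets with convex union intersect. -/
theorem minty_to_stampacchia {K : Set E} (hKconv : Convex ℝ K) {F : E → E} (hF : Continuous F)
    {x : E} (hx : x ∈ K) (h : ∀ y ∈ K, ⟪F y, x - y⟫ ≤ 0) :
    ∀ y ∈ K, 0 ≤ ⟪F x, y - x⟫ := by
  intro y hy
  set g : ℝ → ℝ := fun s => ⟪F (x + s • (y - x)), y - x⟫ with hg
  have hgc : Continuous g := by
    apply Continuous.inner
    · exact hF.comp (continuous_const.add (continuous_id.smul continuous_const))
    · exact continuous_const
  have key : ∀ s : ℝ, s ∈ Set.Ioc (0:ℝ) 1 → 0 ≤ g s := by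
    intro s hs
    have hz : x + s • (y - x) ∈ K := hKconv.add_smul_sub_mem hx hy ⟨le_of_lt hs.1, hs.2⟩
    have h1 := h _ hz
    have h2 : x - (x + s • (y - x)) = (-s) • (y - x) := by module
    rw [h2, real_inner_smul_right] at h1
    nlinarith [hs.1]
  have hseq : Filter.Tendsto (fun n : ℕ => g (1 / (n + 1))) Filter.atTop (𝓝 (g 0)) :=
    (hgc.tendsto 0).comp tendsto_one_div_add_atTop_nhds_zero_nat
  have h0 : 0 ≤ g 0 := by
    refine ge_of_tendsto' hseq fun n => key _ ⟨by positivity, ?_⟩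
    rw [div_le_one (by positivity)]
    linarith [Nat.cast_nonneg (α := ℝ) n]
  simpa [hg] using h0

theorem two_convex_inter {A B : Set E} (hAc : Convex ℝ A) (hBc : Convex ℝ B)
    (hA : IsCompact A) (hB : IsCompact B) (hU : Convex ℝ (A ∪ B))
    (hAne : A.Nonempty) (hBne : B.Nonempty) : (A ∩ B).Nonempty := by
  obtain ⟨x, hx⟩ := hAne
  obtain ⟨y, hy⟩ := hBne
  set T : Set ℝ := {t ∈ Set.Icc (0:ℝ) 1 | x + t • (y - x) ∈ A} with hT
  have hline : Continuous fun t : ℝ => x + t • (y - x) :=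
    continuous_const.add (continuous_id.smul continuous_const)
  have hTclosed : IsClosed T := by
    have : T = Set.Icc (0:ℝ) 1 ∩ (fun t : ℝ => x + t • (y - x)) ⁻¹' A := by
      ext t; simp [hT, Set.mem_setOf_eq, and_comm]
    rw [this]
    exact isClosed_Icc.inter (hA.isClosed.preimage hline)
  have hTne : T.Nonempty := ⟨0, ⟨le_refl 0, zero_le_one⟩, by simpa using hx⟩
  have hTbdd : BddAbove T := ⟨1, fun t ht => ht.1.2⟩
  set τ := sSup T with hτ
  have hτT : τ ∈ T := hTclosed.csSup_mem hTne hTbdd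
  have hτ1 : τ ≤ 1 := hτT.1.2
  rcases eq_or_lt_of_le hτ1 with h1 | h1
  · refine ⟨y, ?_, hy⟩
    have := hτT.2
    rw [h1] at this
    simpa using this
  · -- approach τ from above
    have hseq : ∀ n : ℕ, x + (τ + (1 - τ)/(n+2)) • (y - x) ∈ B := by
      intro n
      have hpos : (0:ℝ) < (1 - τ)/(n+2) := div_pos (by linarith) (by positivity)
      have hle : τ + (1 - τ)/(n+2) ≤ 1 := by
        have := div_le_self (by linarith : (0:ℝ) ≤ 1 - τ) (by have := Nat.cast_nonneg (α := ℝ) n; linarith : (1:ℝ) ≤ (n:ℝ)+2)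
        linarith
      have hmem : x + (τ + (1 - τ)/(n+2)) • (y - x) ∈ A ∪ B := by
        refine hU.add_smul_sub_mem (Set.mem_union_left _ hx) (Set.mem_union_right _ hy)
          ⟨le_trans hτT.1.1 (by linarith), hle⟩
      rcases hmem with hmA | hmB
      · exact absurd (le_csSup hTbdd ⟨⟨le_trans hτT.1.1 (by linarith), hle⟩, hmA⟩)
          (by linarith)
      · exact hmB
    have htend : Filter.Tendsto (fun n : ℕ => x + (τ + (1 - τ)/(n+2)) • (y - x))
        Filter.atTop (𝓝 (x + τ • (y - x))) := by
      refine (hline.tendsto τ).comp ?_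
      have : Filter.Tendsto (fun n : ℕ => (1 - τ)/(n+2)) Filter.atTop (𝓝 0) := by
        apply Filter.Tendsto.div_atTop (tendsto_const_nhds)
        exact Filter.tendsto_atTop_add_const_right _ 2 tendsto_natCast_atTop_atTop
      simpa using (tendsto_const_nhds (x := τ)).add this
    exact ⟨x + τ • (y - x), hτT.2, hB.isClosed.mem_of_tendsto htend (Filter.Eventually.of_forall hseq)⟩

theorem berge_s10 {ι : Type*} [DecidableEq ι] :
    ∀ (n : ℕ) (s : Finset ι) (C : ι → Set E), s.card ≤ n → 2 ≤ s.card →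
    (∀ i ∈ s, Convex ℝ (C i)) → (∀ i ∈ s, IsCompact (C i)) →
    Convex ℝ (⋃ i ∈ s, C i) →
    (∀ k ∈ s, (⋂ i ∈ s.erase k, C i).Nonempty) →
    (⋂ i ∈ s, C i).Nonempty := by
  intro n
  induction n with
  | zero => intro s C hle h2; omega
  | succ n IH =>
    intro s C hle h2 hconv hcomp hU hdrop
    rcases Nat.lt_or_ge s.card (n+1) with hlt | hge
    · exact IH s C (by omega) h2 hconv hcomp hU hdrop
    have hcard : s.card = n + 1 := le_antisymm hle hge
    rcases eq_or_lt_of_le h2 with hc2 | hc3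
    · -- base: two sets
      obtain ⟨a, b, hab, hs⟩ := Finset.card_eq_two.mp hc2.symm
      subst hs
      have hea : ({a, b} : Finset ι).erase a = {b} := by
        rw [Finset.erase_insert (by simpa using hab)]
      have heb : ({a, b} : Finset ι).erase b = {a} := by
        ext i
        simp only [Finset.mem_erase, Finset.mem_insert, Finset.mem_singleton]
        constructor
        · rintro ⟨hib, hi | hi⟩ <;> simp_all
        · rintro rfl; exact ⟨hab, Or.inl rfl⟩
      have hAne : (C a).Nonempty := by
        have := hdrop b (by simp)
        rwa [heb, Finset.set_biInter_singleton] at this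
      have hBne : (C b).Nonempty := by
        have := hdrop a (by simp)
        rwa [hea, Finset.set_biInter_singleton] at this
      have hU' : Convex ℝ (C a ∪ C b) := by
        have : (⋃ i ∈ ({a, b} : Finset ι), C i) = C a ∪ C b := by
          simp [Finset.set_biUnion_insert]
        rwa [this] at hU
      obtain ⟨w, hwa, hwb⟩ := two_convex_inter (hconv a (by simp)) (hconv b (by simp))
        (hcomp a (by simp)) (hcomp b (by simp)) hU' hAne hBne
      refine ⟨w, ?_⟩
      simp only [Finset.set_biInter_insert, Finset.set_biInter_singleton, Set.mem_inter_iff]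
      exact ⟨hwa, hwb⟩
    · -- inductive step: at least 3 sets
      by_contra hempty
      rw [Set.not_nonempty_iff_eq_empty] at hempty
      obtain ⟨k, hk⟩ : ∃ k, k ∈ s := Finset.Nonempty.exists_mem (Finset.card_pos.mp (by omega))
      set s' := s.erase k with hs'
      have hs'card : s'.card = n := by
        rw [hs', Finset.card_erase_of_mem hk]; omega
      have hclosed : ∀ i ∈ s, IsClosed (C i) := fun i hi => (hcomp i hi).isClosed
      -- B = intersection over s'
      set B := ⋂ i ∈ s', C i with hB
      have hBne : B.Nonempty := hdrop k hk
      have hBconv : Convex ℝ B := convex_iInter₂ fun i hi => hconv i (Finset.mem_of_mem_erase hi)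
      obtain ⟨j₀, hj₀⟩ : ∃ j, j ∈ s' := Finset.Nonempty.exists_mem (Finset.card_pos.mp (by omega))
      have hBclosed : IsClosed B := by
        refine isClosed_biInter fun i hi => hclosed i (Finset.mem_of_mem_erase hi)
      have hBcomp : IsCompact B := (hcomp j₀ (Finset.mem_of_mem_erase hj₀)).of_isClosed_subset
        hBclosed (Set.biInter_subset_of_mem hj₀)
      have hdisj : Disjoint B (C k) := by
        rw [Set.disjoint_iff_inter_eq_empty, ← hempty, hB]
        rw [← Finset.insert_erase hk, Finset.set_biInter_insert, Set.inter_comm]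
      obtain ⟨f, u, v, hfu, huv, hfv⟩ := geometric_hahn_banach_compact_closed hBconv hBcomp
        (hconv k hk) (hclosed k hk) hdisj
      set α := (u + v)/2 with hα
      have huα : u < α := by rw [hα]; linarith
      have hαv : α < v := by rw [hα]; linarith
      set H : Set E := {x | f x = α} with hH
      have hHconv : Convex ℝ H := by
        have : H = f.toLinearMap ⁻¹' {α} := by ext z; simp [hH]
        rw [this]
        exact (convex_singleton α).linear_preimage f.toLinearMap
      have hHclosed : IsClosed H := isClosed_eq f.continuous continuous_const
      -- new family
      set D : ι → Set E := fun i => C i ∩ H with hD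
      have hDconv : ∀ i ∈ s', Convex ℝ (D i) :=
        fun i hi => (hconv i (Finset.mem_of_mem_erase hi)).inter hHconv
      have hDcomp : ∀ i ∈ s', IsCompact (D i) :=
        fun i hi => (hcomp i (Finset.mem_of_mem_erase hi)).inter_right hHclosed
      have hDU : (⋃ i ∈ s', D i) = (⋃ i ∈ s, C i) ∩ H := by
        apply Set.Subset.antisymm
        · refine Set.iUnion₂_subset fun i hi => ?_
          exact Set.inter_subset_inter_left _ (Set.subset_biUnion_of_mem (Finset.mem_of_mem_erase hi))
        · rintro z ⟨hz, hzH⟩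
          obtain ⟨i, hi, hzi⟩ := Set.mem_iUnion₂.mp hz
          have hik : i ≠ k := by
            rintro rfl
            have := hfv z hzi
            have : f z = α := hzH
            linarith [hfv z hzi]
          exact Set.mem_iUnion₂.mpr ⟨i, Finset.mem_erase.mpr ⟨hik, hi⟩, hzi, hzH⟩
      have hDUconv : Convex ℝ (⋃ i ∈ s', D i) := by rw [hDU]; exact hU.inter hHconv
      -- drop-one for D
      have hDdrop : ∀ j ∈ s', (⋂ i ∈ s'.erase j, D i).Nonempty := by
        intro j hj
        obtain ⟨b, hb⟩ := hBne
        obtain ⟨z, hz⟩ := hdrop j (Finset.mem_of_mem_erase hj)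
        set S := ⋂ i ∈ s'.erase j, C i with hS
        have hbS : b ∈ S := by
          refine Set.mem_iInter₂.mpr fun i hi => ?_
          exact Set.mem_iInter₂.mp hb i (Finset.mem_of_mem_erase hi)
        have hzS : z ∈ S := by
          refine Set.mem_iInter₂.mpr fun i hi => ?_
          refine Set.mem_iInter₂.mp hz i ?_
          have hi' := Finset.mem_erase.mp hi
          have hi'' := Finset.mem_erase.mp hi'.2
          exact Finset.mem_erase.mpr ⟨hi'.1, hi''.2⟩
        have hSconv : Convex ℝ S := convex_iInter₂ fun i hi =>
          hconv i (Finset.mem_of_mem_erase (Finset.mem_of_mem_erase hi))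
        have hfb : f b < α := lt_trans (hfu b hb) huα
        have hzk : z ∈ C k := by
          refine Set.mem_iInter₂.mp hz k ?_
          exact Finset.mem_erase.mpr ⟨fun h => (Finset.mem_erase.mp hj).1 h.symm, hk⟩
        have hfz : α < f z := lt_trans hαv (hfv z hzk)
        -- IVT along segment from b to z
        have hcont : ContinuousOn (fun t : ℝ => f (b + t • (z - b))) (Set.Icc 0 1) :=
          (f.continuous.comp (continuous_const.add (continuous_id.smul continuous_const))).continuousOn
        have hivt := intermediate_value_Icc (zero_le_one (α := ℝ)) hcont
        have hαmem : α ∈ Set.Icc (f (b + (0:ℝ) • (z - b))) (f (b + (1:ℝ) • (z - b))) := by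
          simp only [zero_smul, add_zero, one_smul]
          have : b + (z - b) = z := by abel
          rw [this]
          exact ⟨le_of_lt hfb, le_of_lt hfz⟩
        obtain ⟨t, ht, hft⟩ := hivt hαmem
        refine ⟨b + t • (z - b), Set.mem_iInter₂.mpr fun i hi => ?_⟩
        refine ⟨?_, hft⟩
        exact Set.mem_iInter₂.mp (hSconv.add_smul_sub_mem hbS hzS ht : _ ∈ S) i hi
      have hfinal := IH s' D (by omega) (by omega) hDconv hDcomp hDUconv hDdrop
      obtain ⟨w, hw⟩ := hfinal
      have hwB : w ∈ B := Set.mem_iInter₂.mpr fun i hi =>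
        (Set.mem_iInter₂.mp hw i hi).1
      have hwH : f w = α := by
        have := (Set.mem_iInter₂.mp hw j₀ hj₀).2
        exact this
      linarith [hfu w hwB]
theorem proper_quasi {K : Set E} (hKconv : Convex ℝ K) {F : E → E}
    (hpseudo : ∀ x ∈ K, ∀ y ∈ K, 0 ≤ ⟪F x, y - x⟫ → 0 ≤ ⟪F y, y - x⟫)
    (T : Finset E) (hTK : ↑T ⊆ K) {x : E} (hx : x ∈ convexHull ℝ (T : Set E)) :
    ∃ y ∈ T, ⟪F y, x - y⟫ ≤ 0 := by
  by_contra hcon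
  push_neg at hcon
  have hxK : x ∈ K := convexHull_min hTK hKconv hx
  have hge : ∀ y ∈ T, 0 ≤ ⟪F x, x - y⟫ := by
    intro y hy
    have h1 : 0 ≤ ⟪F y, x - y⟫ := le_of_lt (hcon y hy)
    exact hpseudo y (hTK hy) x hxK h1
  rw [Finset.convexHull_eq] at hx
  obtain ⟨w, hw0, hw1, hwx⟩ := hx
  rw [Finset.centerMass_eq_of_sum_1 _ _ hw1] at hwx
  simp only [id] at hwx
  have hsum : ∑ y ∈ T, w y * ⟪F x, x - y⟫ = 0 := by
    have : ∑ y ∈ T, w y * ⟪F x, x - y⟫ = ⟪F x, ∑ y ∈ T, w y • (x - y)⟫ := by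
      rw [inner_sum]
      exact Finset.sum_congr rfl fun y _ => (real_inner_smul_right _ _ _).symm
    rw [this]
    have hz : ∑ y ∈ T, w y • (x - y) = 0 := by
      have : ∑ y ∈ T, w y • (x - y) = (∑ y ∈ T, w y) • x - ∑ y ∈ T, w y • y := by
        rw [Finset.sum_smul]
        rw [← Finset.sum_sub_distrib]
        exact Finset.sum_congr rfl fun y _ => smul_sub _ _ _
      rw [this, hw1, one_smul, hwx, sub_self]
    rw [hz, inner_zero_right]
  have hall := (Finset.sum_eq_zero_iff_of_nonneg
    (fun y hy => mul_nonneg (hw0 y hy) (hge y hy))).mp hsum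
  obtain ⟨y, hy, hwy⟩ := Finset.exists_ne_zero_of_sum_ne_zero (by rw [hw1]; norm_num : ∑ y ∈ T, w y ≠ 0)
  have hwypos : 0 < w y := lt_of_le_of_ne (hw0 y hy) (Ne.symm hwy)
  have h0 : ⟪F x, x - y⟫ = 0 := by
    have := hall y hy
    rcases mul_eq_zero.mp this with h | h
    · exact absurd h hwy
    · exact h
  have h0' : 0 ≤ ⟪F x, y - x⟫ := by
    rw [← neg_sub, inner_neg_right, h0, neg_zero]
  have := hpseudo x hxK y (hTK hy) h0'
  rw [← neg_sub x y, inner_neg_right] at this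
  linarith [hcon y hy]

theorem finite_minty [FiniteDimensional ℝ E] {K : Set E} (hKconv : Convex ℝ K) {F : E → E}
    (hpseudo : ∀ x ∈ K, ∀ y ∈ K, 0 ≤ ⟪F x, y - x⟫ → 0 ≤ ⟪F y, y - x⟫) :
    ∀ (n : ℕ) (T : Finset E), T.card ≤ n → T.Nonempty → ↑T ⊆ K →
    ∃ x ∈ convexHull ℝ (T : Set E), ∀ y ∈ T, ⟪F y, x - y⟫ ≤ 0 := by
  classical
  intro n
  induction n with
  | zero =>
    intro T hle hne
    exact absurd (Finset.card_pos.mpr hne) (by omega)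
  | succ n IH =>
    intro T hle hne hTK
    rcases Nat.lt_or_ge T.card (n+1) with hlt | hge
    · exact IH T (by omega) hne hTK
    rcases eq_or_lt_of_le (show 1 ≤ T.card from Finset.card_pos.mpr hne) with h1 | h2
    · -- singleton
      obtain ⟨a, ha⟩ := Finset.card_eq_one.mp h1.symm
      subst ha
      refine ⟨a, subset_convexHull ℝ _ (by simp), ?_⟩
      intro y hy
      rw [Finset.mem_singleton] at hy
      subst hy
      simp
    · -- at least two points: apply berge
      set Δ := convexHull ℝ (T : Set E) with hΔ
      have hΔcomp : IsCompact Δ := T.finite_toSet.isCompact_convexHull (𝕜 := ℝ)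
      have hΔconv : Convex ℝ Δ := convex_convexHull ℝ _
      set C : E → Set E := fun y => Δ ∩ {z | ⟪F y, z - y⟫ ≤ 0} with hC
      have hlin : ∀ y : E, Continuous fun z : E => ⟪F y, z - y⟫ :=
        fun y => Continuous.inner continuous_const (continuous_id.sub continuous_const)
      have hCconv : ∀ y ∈ T, Convex ℝ (C y) := by
        intro y _
        refine hΔconv.inter ?_
        have : {z | ⟪F y, z - y⟫ ≤ 0} = {z | ⟪F y, z⟫ ≤ ⟪F y, y⟫} := by
          ext z; simp [inner_sub_right, sub_nonpos]
        rw [this]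
        exact convex_halfSpace_le ⟨fun a b => inner_add_right _ _ _,
          fun c a => real_inner_smul_right _ _ _⟩ _
      have hCcomp : ∀ y ∈ T, IsCompact (C y) :=
        fun y _ => hΔcomp.inter_right (isClosed_le (hlin y) continuous_const)
      have hCU : (⋃ y ∈ T, C y) = Δ := by
        apply Set.Subset.antisymm
        · exact Set.iUnion₂_subset fun y _ => Set.inter_subset_left
        · intro z hz
          obtain ⟨y, hy, hzy⟩ := proper_quasi hKconv hpseudo T hTK hz
          exact Set.mem_iUnion₂.mpr ⟨y, hy, hz, hzy⟩
      have hCdrop : ∀ k ∈ T, (⋂ y ∈ T.erase k, C y).Nonempty := by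
        intro k hk
        have hTk : (T.erase k).Nonempty := by
          rw [← Finset.card_pos, Finset.card_erase_of_mem hk]; omega
        have hTkK : ↑(T.erase k) ⊆ K := fun z hz => hTK (Finset.mem_coe.mpr
          (Finset.mem_of_mem_erase (Finset.mem_coe.mp hz)))
        obtain ⟨x, hxc, hxineq⟩ := IH (T.erase k)
          (by rw [Finset.card_erase_of_mem hk]; omega) hTk hTkK
        have hxΔ : x ∈ Δ := convexHull_mono (by exact_mod_cast Finset.erase_subset k T) hxc
        exact ⟨x, Set.mem_iInter₂.mpr fun y hy => ⟨hxΔ, hxineq y hy⟩⟩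
      obtain ⟨x, hx⟩ := berge_s10 (n+1) T C hle h2 hCconv hCcomp (by rw [hCU]; exact hΔconv) hCdrop
      obtain ⟨a, ha⟩ := hne
      refine ⟨x, (Set.mem_iInter₂.mp hx a ha).1, fun y hy => (Set.mem_iInter₂.mp hx y hy).2⟩

theorem compact_minty [FiniteDimensional ℝ E] {K : Set E} (hKconv : Convex ℝ K) {F : E → E}
    (hpseudo : ∀ x ∈ K, ∀ y ∈ K, 0 ≤ ⟪F x, y - x⟫ → 0 ≤ ⟪F y, y - x⟫)
    {K' : Set E} (hne : K'.Nonempty) (hcomp : IsCompact K') (hconv : Convex ℝ K')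
    (hsub : K' ⊆ K) : ∃ x ∈ K', ∀ y ∈ K', ⟪F y, x - y⟫ ≤ 0 := by
  classical
  set Z : K' → Set E := fun y => {x | ⟪F ↑y, x - ↑y⟫ ≤ 0} with hZ
  have hZclosed : ∀ y : K', IsClosed (Z y) :=
    fun y => isClosed_le (Continuous.inner continuous_const (continuous_id.sub continuous_const))
      continuous_const
  by_contra hcon
  push_neg at hcon
  have hempty : (K' ∩ ⋂ y : K', Z y) = ∅ := by
    rw [Set.eq_empty_iff_forall_notMem]
    rintro x ⟨hxK', hxZ⟩
    obtain ⟨y, hy, hylt⟩ := hcon x hxK'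
    have := Set.mem_iInter.mp hxZ ⟨y, hy⟩
    rw [hZ] at this
    simp only [Set.mem_setOf_eq] at this
    linarith
  obtain ⟨u, hu⟩ := hcomp.elim_finite_subfamily_closed Z hZclosed hempty
  rcases u.eq_empty_or_nonempty with rfl | hune
  · simp only [Finset.notMem_empty, Set.iInter_of_empty, Set.iInter_univ, Set.inter_univ] at hu
    exact hne.ne_empty hu
  set T : Finset E := u.image Subtype.val with hT
  have hTne : T.Nonempty := hune.image _
  have hTK' : (T : Set E) ⊆ K' := by
    intro z hz
    obtain ⟨y, _, rfl⟩ := Finset.mem_image.mp (Finset.mem_coe.mp hz)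
    exact y.2
  obtain ⟨x, hxc, hxineq⟩ := finite_minty hKconv hpseudo T.card T (le_refl _) hTne
    (hTK'.trans hsub)
  have hxK' : x ∈ K' := convexHull_min hTK' hconv hxc
  rw [Set.eq_empty_iff_forall_notMem] at hu
  refine hu x ⟨hxK', Set.mem_iInter₂.mpr fun y hy => ?_⟩
  exact hxineq ↑y (Finset.mem_image_of_mem _ hy)
theorem escape_direction [FiniteDimensional ℝ E] {K : Set E} (hKc : IsClosed K)
    (hKconv : Convex ℝ K) {F : E → E} {x0 : E} (hx0 : x0 ∈ K) (x : ℕ → E)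
    (hxK : ∀ n, x n ∈ K)
    (hnorm : Tendsto (fun n => ‖x n - x0‖) atTop atTop)
    (hminty : ∀ y ∈ K, ∀ᶠ n in atTop, 0 ≤ ⟪F y, y - x n⟫) :
    ∃ d : E, d ≠ 0 ∧ (∀ z ∈ K, ∀ t : ℝ, 0 ≤ t → z + t • d ∈ K) ∧
      (∀ y ∈ K, ⟪F y, d⟫ ≤ 0) := by
  obtain ⟨N, hN⟩ := Filter.eventually_atTop.mp (hnorm.eventually_ge_atTop 1)
  set s : ℕ → ℝ := fun n => ‖x (n + N) - x0‖ with hs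
  have hs1 : ∀ n, 1 ≤ s n := fun n => hN (n + N) (Nat.le_add_left _ _)
  have hspos : ∀ n, 0 < s n := fun n => lt_of_lt_of_le one_pos (hs1 n)
  have hstop : Tendsto s atTop atTop := hnorm.comp (tendsto_add_atTop_nat N)
  set v : ℕ → E := fun n => (s n)⁻¹ • (x (n + N) - x0) with hv
  have hvmem : ∀ n, v n ∈ Metric.sphere (0 : E) 1 := by
    intro n
    rw [mem_sphere_zero_iff_norm, hv]
    rw [norm_smul, norm_inv, Real.norm_eq_abs, abs_of_pos (hspos n)]
    exact inv_mul_cancel₀ (ne_of_gt (hspos n))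
  obtain ⟨d, hdmem, φ, hφ, hvd⟩ := (isCompact_sphere (0 : E) 1).tendsto_subseq hvmem
  have hdne : d ≠ 0 := by
    intro h
    rw [h, mem_sphere_zero_iff_norm, norm_zero] at hdmem
    norm_num at hdmem
  have hsφ : Tendsto (fun n => s (φ n)) atTop atTop := hstop.comp hφ.tendsto_atTop
  -- (a) rays from x0
  have ha : ∀ t : ℝ, 0 ≤ t → x0 + t • d ∈ K := by
    intro t ht
    have hev : ∀ᶠ n in atTop, x0 + t • v (φ n) ∈ K := by
      filter_upwards [hsφ.eventually_ge_atTop t] with n hn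
      have hrw : x0 + t • v (φ n) = x0 + (t / s (φ n)) • (x (φ n + N) - x0) := by
        rw [hv, smul_smul, div_eq_mul_inv]
      rw [hrw]
      refine hKconv.add_smul_sub_mem hx0 (hxK _) ⟨?_, ?_⟩
      · positivity
      · rw [div_le_one (hspos _)]; exact hn
    have htend : Tendsto (fun n => x0 + t • v (φ n)) atTop (𝓝 (x0 + t • d)) :=
      tendsto_const_nhds.add (hvd.const_smul t)
    exact hKc.mem_of_tendsto htend hev
  -- (b) rays from any point
  have hb : ∀ z ∈ K, ∀ t : ℝ, 0 ≤ t → z + t • d ∈ K := by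
    intro z hz t ht
    set p : ℕ → E := fun m => z + (t / ((m : ℝ) + 1)) • (x0 + ((m : ℝ) + 1) • d - z) with hp
    have hev : ∀ᶠ m in atTop, p m ∈ K := by
      have : ∀ᶠ m : ℕ in atTop, t ≤ (m : ℝ) + 1 := by
        have := tendsto_atTop_add_const_right atTop (1:ℝ) tendsto_natCast_atTop_atTop
        exact this.eventually_ge_atTop t
      filter_upwards [this] with m hm
      refine hKconv.add_smul_sub_mem hz (ha ((m:ℝ)+1) (by positivity)) ⟨?_, ?_⟩
      · positivity
      · rw [div_le_one (by positivity)]; exact hm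
    have htend : Tendsto p atTop (𝓝 (z + t • d)) := by
      have hrw : ∀ m : ℕ, p m = (z + t • d) + (t / ((m : ℝ) + 1)) • (x0 - z) := by
        intro m
        have hne : ((m : ℝ) + 1) ≠ 0 := by positivity
        simp only [hp]
        generalize hA : t / ((m : ℝ) + 1) = a
        have hac : t = a * ((m : ℝ) + 1) := by rw [← hA]; field_simp
        rw [hac]
        module
      have h0 : Tendsto (fun m : ℕ => t / ((m : ℝ) + 1)) atTop (𝓝 0) :=
        Tendsto.div_atTop tendsto_const_nhds
          (tendsto_atTop_add_const_right atTop (1:ℝ) tendsto_natCast_atTop_atTop)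
      have h1 := h0.smul_const (x0 - z)
      rw [zero_smul] at h1
      have h2 : Tendsto (fun m : ℕ => (z + t • d) + (t / ((m : ℝ) + 1)) • (x0 - z))
          atTop (𝓝 ((z + t • d) + 0)) := tendsto_const_nhds.add h1
      rw [add_zero] at h2
      exact h2.congr fun m => (hrw m).symm
    exact hKc.mem_of_tendsto htend hev
  -- (c) inner products
  have hc : ∀ y ∈ K, ⟪F y, d⟫ ≤ 0 := by
    intro y hy
    have hev0 : ∀ᶠ n in atTop, 0 ≤ ⟪F y, y - x (φ n + N)⟫ := by
      have hφN : Tendsto (fun n => φ n + N) atTop atTop :=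
        (tendsto_add_atTop_nat N).comp hφ.tendsto_atTop
      exact hφN.eventually (hminty y hy)
    have hbound : ∀ᶠ n in atTop,
        ⟪F y, v (φ n)⟫ ≤ (s (φ n))⁻¹ * ⟪F y, y - x0⟫ := by
      filter_upwards [hev0] with n hn
      rw [hv, real_inner_smul_right]
      refine mul_le_mul_of_nonneg_left ?_ (inv_nonneg.mpr (hspos _).le)
      have : x (φ n + N) - x0 = (y - x0) - (y - x (φ n + N)) := by abel
      rw [this, inner_sub_right]
      linarith
    have htend1 : Tendsto (fun n => ⟪F y, v (φ n)⟫) atTop (𝓝 ⟪F y, d⟫) :=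
      ((Continuous.inner continuous_const continuous_id).tendsto d).comp hvd
    have htend2 : Tendsto (fun n => (s (φ n))⁻¹ * ⟪F y, y - x0⟫) atTop (𝓝 0) := by
      have := (tendsto_inv_atTop_zero.comp hsφ).mul_const (⟪F y, y - x0⟫)
      rwa [zero_mul] at this
    exact le_of_tendsto_of_tendsto htend1 htend2 hbound
  exact ⟨d, hdne, hb, hc⟩

end Aux

open Filter Topology

theorem stmt_10 {E : Type*} [NormedAddCommGroup E] [InnerProductSpace ℝ E]
    [FiniteDimensional ℝ E]
    (K : Set E) (hK : K.Nonempty) (hKc : IsClosed K) (hKconv : Convex ℝ K)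
    (F : E → E) (hF : Continuous F)
    (hpseudo : ∀ x ∈ K, ∀ y ∈ K, 0 ≤ ⟪F x, y - x⟫ → 0 ≤ ⟪F y, y - x⟫) :
    ({x ∈ K | ∀ y ∈ K, 0 ≤ ⟪F x, y - x⟫}.Nonempty ∧
      Bornology.IsBounded {x ∈ K | ∀ y ∈ K, 0 ≤ ⟪F x, y - x⟫}) ↔
    (∀ d : E, (∀ x ∈ K, ∀ t : ℝ, 0 ≤ t → x + t • d ∈ K) →
      (∀ x ∈ K, ⟪F x, d⟫ ≤ 0) → d = 0) := by
  set S := {x ∈ K | ∀ y ∈ K, 0 ≤ ⟪F x, y - x⟫} with hS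
  obtain ⟨x0, hx0⟩ := hK
  constructor
  · -- forward: nonempty ∧ bounded → regularity
    rintro ⟨⟨xs, hxs⟩, hbd⟩ d hrec hinner
    by_contra hdne
    have hsol : ∀ t : ℝ, 0 ≤ t → xs + t • d ∈ S := by
      intro t ht
      have hmem : xs + t • d ∈ K := hrec xs hxs.1 t ht
      have hminty : ∀ y ∈ K, ⟪F y, (xs + t • d) - y⟫ ≤ 0 := by
        intro y hy
        have h1 : 0 ≤ ⟪F y, y - xs⟫ := hpseudo xs hxs.1 y hy (hxs.2 y hy)
        have h2 : ⟪F y, d⟫ ≤ 0 := hinner y hy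
        have heq : (xs + t • d) - y = -(y - xs) + t • d := by abel
        rw [heq, inner_add_right, inner_neg_right, real_inner_smul_right]
        nlinarith
      exact ⟨hmem, minty_to_stampacchia hKconv hF hmem hminty⟩
    obtain ⟨C, hC⟩ := isBounded_iff_forall_norm_le.mp hbd
    have hd0 : 0 < ‖d‖ := norm_pos_iff.mpr hdne
    set t := (C + ‖xs‖ + 1) / ‖d‖ with ht
    have hCxs := hC xs hxs
    have htpos : 0 ≤ t := by
      apply div_nonneg _ hd0.le
      have := norm_nonneg xs
      linarith
    have hCb := hC _ (hsol t htpos)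
    have hnorm : t * ‖d‖ - ‖xs‖ ≤ ‖xs + t • d‖ := by
      have h1 : ‖t • d‖ ≤ ‖xs + t • d‖ + ‖xs‖ := by
        have h := norm_sub_le (xs + t • d) xs
        have heq : xs + t • d - xs = t • d := by abel
        rwa [heq] at h
      rw [norm_smul, Real.norm_eq_abs, abs_of_nonneg htpos] at h1
      linarith
    have htd : t * ‖d‖ = C + ‖xs‖ + 1 := div_mul_cancel₀ _ (ne_of_gt hd0)
    rw [htd] at hnorm
    linarith
  · -- backward: regularity → nonempty ∧ bounded
    intro hreg
    constructor
    · -- existence via truncations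
      have hKn : ∀ n : ℕ, ∃ m, m ∈ K ∩ Metric.closedBall x0 (n+1) ∧
          ∀ y ∈ K ∩ Metric.closedBall x0 (n+1), 0 ≤ ⟪F m, y - m⟫ := by
        intro n
        have hKnne : (K ∩ Metric.closedBall x0 (n+1)).Nonempty :=
          ⟨x0, hx0, Metric.mem_closedBall_self (by positivity)⟩
        have hKncomp : IsCompact (K ∩ Metric.closedBall x0 (n+1)) :=
          (isCompact_closedBall x0 (n+1)).inter_left hKc
        have hKnconv : Convex ℝ (K ∩ Metric.closedBall x0 (n+1)) :=
          hKconv.inter (convex_closedBall x0 (n+1))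
        obtain ⟨mm, hmKn, hminty⟩ := compact_minty hKconv hpseudo hKnne hKncomp hKnconv
          Set.inter_subset_left
        exact ⟨mm, hmKn, minty_to_stampacchia hKnconv hF hmKn hminty⟩
      choose m hmK hmsol using hKn
      by_cases hA : ∃ n : ℕ, dist (m n) x0 < n + 1
      · obtain ⟨n, hn⟩ := hA
        refine ⟨m n, (hmK n).1, fun y hy => ?_⟩
        set σ := min 1 (((n:ℝ)+1 - dist (m n) x0) / (‖y - m n‖ + 1)) with hσ
        have hσpos : 0 < σ := by
          apply lt_min one_pos
          apply div_pos (by linarith) (by positivity)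
        have hσ1 : σ ≤ 1 := min_le_left _ _
        have hz : m n + σ • (y - m n) ∈ K ∩ Metric.closedBall x0 (n+1) := by
          constructor
          · exact hKconv.add_smul_sub_mem (hmK n).1 hy ⟨hσpos.le, hσ1⟩
          · rw [Metric.mem_closedBall, dist_eq_norm]
            have h1 : ‖m n + σ • (y - m n) - x0‖ ≤ ‖m n - x0‖ + σ * ‖y - m n‖ := by
              have heq : m n + σ • (y - m n) - x0 = (m n - x0) + σ • (y - m n) := by abel
              rw [heq]
              calc ‖(m n - x0) + σ • (y - m n)‖
                  ≤ ‖m n - x0‖ + ‖σ • (y - m n)‖ := norm_add_le _ _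
                _ = ‖m n - x0‖ + σ * ‖y - m n‖ := by
                    rw [norm_smul, Real.norm_eq_abs, abs_of_pos hσpos]
            have h2 : σ * ‖y - m n‖ ≤ ((n:ℝ)+1 - dist (m n) x0) := by
              have h3 : σ ≤ (((n:ℝ)+1 - dist (m n) x0) / (‖y - m n‖ + 1)) := min_le_right _ _
              have h4 : σ * ‖y - m n‖ ≤ (((n:ℝ)+1 - dist (m n) x0) / (‖y - m n‖ + 1)) * ‖y - m n‖ :=
                mul_le_mul_of_nonneg_right h3 (norm_nonneg _)
              have h5 : (((n:ℝ)+1 - dist (m n) x0) / (‖y - m n‖ + 1)) * ‖y - m n‖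
                  ≤ ((n:ℝ)+1 - dist (m n) x0) := by
                rw [div_mul_eq_mul_div, div_le_iff₀ (by positivity)]
                nlinarith [norm_nonneg (y - m n)]
              linarith
            rw [dist_eq_norm] at h2
            linarith
        have hin := hmsol n _ hz
        have heq : m n + σ • (y - m n) - m n = σ • (y - m n) := by abel
        rw [heq, real_inner_smul_right] at hin
        nlinarith [hin, hσpos]
      · -- all truncated solutions escape: contradiction with regularity
        exfalso
        push_neg at hA
        have hnorm : Tendsto (fun n => ‖m n - x0‖) atTop atTop := by
          refine tendsto_atTop_mono (fun n => ?_) tendsto_natCast_atTop_atTop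
          have := hA n
          rw [dist_eq_norm] at this
          linarith
        have hminty : ∀ y ∈ K, ∀ᶠ n in atTop, 0 ≤ ⟪F y, y - m n⟫ := by
          intro y hy
          have hev : ∀ᶠ n : ℕ in atTop, dist y x0 ≤ (n:ℝ) :=
            tendsto_natCast_atTop_atTop.eventually_ge_atTop (dist y x0)
          filter_upwards [hev] with n hn
          have hyKn : y ∈ K ∩ Metric.closedBall x0 (n+1) :=
            ⟨hy, Metric.mem_closedBall.mpr (by linarith [dist_comm y x0 ▸ hn])⟩
          exact hpseudo (m n) (hmK n).1 y hy (hmsol n y hyKn)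
        obtain ⟨d, hdne, hrec, hinner⟩ := escape_direction hKc hKconv hx0 m
          (fun n => (hmK n).1) hnorm hminty
        exact hdne (hreg d hrec hinner)
    · -- boundedness
      by_contra hnb
      have hseq : ∀ n : ℕ, ∃ x, x ∈ S ∧ (n:ℝ) ≤ ‖x - x0‖ := by
        intro n
        by_contra hcon
        push_neg at hcon
        refine hnb ((Metric.isBounded_closedBall (x := x0) (r := n)).subset fun x hx => ?_)
        rw [Metric.mem_closedBall, dist_eq_norm]
        exact (hcon x hx).le
      choose x hxS hxn using hseq
      have hnorm : Tendsto (fun n => ‖x n - x0‖) atTop atTop :=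
        tendsto_atTop_mono hxn tendsto_natCast_atTop_atTop
      have hminty : ∀ y ∈ K, ∀ᶠ n in atTop, 0 ≤ ⟪F y, y - x n⟫ := by
        intro y hy
        refine Filter.Eventually.of_forall fun n => ?_
        exact hpseudo (x n) (hxS n).1 y hy ((hxS n).2 y hy)
      obtain ⟨d, hdne, hrec, hinner⟩ := escape_direction hKc hKconv hx0 x
        (fun n => (hxS n).1) hnorm hminty
      exact hdne (hreg d hrec hinner)
end

section
/- Let S ⊆ ℝᵐ be an open convex set and F : ℝᵐ → ℝᵐ a continuously differentiable map that is pseudomonotone on S, with Jacobian matrix DF(x) at x. Then for every x ∈ S and every u ∈ ℝᵐ, if ⟪u, F(x)⟫ = 0 then ⟪u, DF(x) u⟫ ≥ 0. -/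
theorem stmt_11 {m : ℕ} (S : Set (Fin m → ℝ)) (hSopen : IsOpen S) (hSconv : Convex ℝ S)
    (F : (Fin m → ℝ) → (Fin m → ℝ)) (hF : ContDiff ℝ 1 F)
    (hpseudo : ∀ x ∈ S, ∀ y ∈ S,
      0 ≤ ∑ i, F x i * (y i - x i) → 0 ≤ ∑ i, F y i * (y i - x i)) :
    ∀ x ∈ S, ∀ u : Fin m → ℝ,
      ∑ i, u i * F x i = 0 → 0 ≤ ∑ i, u i * (fderiv ℝ F x u) i := by
  intro x hx u hu
  set L := fderiv ℝ F x with hL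
  have hFd : HasFDerivAt F L x := (hF.differentiable one_ne_zero x).hasFDerivAt
  have hc : HasDerivAt (fun t : ℝ => x + t • u) u 0 := by
    simpa using ((hasDerivAt_id (0 : ℝ)).smul_const u).const_add x
  have hgi : ∀ i, HasDerivAt (fun t : ℝ => u i * F (x + t • u) i) (u i * L u i) 0 := by
    intro i
    have h1 : HasDerivAt (fun t : ℝ => F (x + t • u)) (L u) 0 := by
      have hFd' : HasFDerivAt F L (x + (0 : ℝ) • u) := by simpa using hFd
      exact hFd'.comp_hasDerivAt 0 hc
    have h2 : HasDerivAt (fun t : ℝ => F (x + t • u) i) (L u i) 0 :=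
      (ContinuousLinearMap.proj (R := ℝ) (φ := fun _ : Fin m => ℝ)
        i).hasFDerivAt.comp_hasDerivAt 0 h1
    exact h2.const_mul (u i)
  set g := fun t : ℝ => ∑ i, u i * F (x + t • u) i with hgdef
  have hg : HasDerivAt g (∑ i, u i * L u i) 0 :=
    HasDerivAt.fun_sum fun i _ => hgi i
  have hg0 : g 0 = 0 := by
    simpa [hgdef] using hu
  have hmem : ∀ᶠ t in nhds (0 : ℝ), x + t • u ∈ S := by
    have htend : Filter.Tendsto (fun t : ℝ => x + t • u) (nhds 0) (nhds x) := by
      simpa using hc.continuousAt.tendsto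
    exact htend.eventually (hSopen.eventually_mem hx)
  have key : ∀ t : ℝ, ∀ v : Fin m → ℝ,
      (∑ i, v i * ((x + t • u) i - x i)) = t * ∑ i, v i * u i := by
    intro t v
    rw [Finset.mul_sum]
    refine Finset.sum_congr rfl fun i _ => ?_
    simp [smul_eq_mul]
    ring
  have hge : ∀ᶠ t in nhdsWithin (0 : ℝ) (Set.Ioi 0), 0 ≤ slope g 0 t := by
    filter_upwards [hmem.filter_mono nhdsWithin_le_nhds, self_mem_nhdsWithin] with t ht htpos
    have ht' : 0 ≤ ∑ i, F x i * ((x + t • u) i - x i) := by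
      rw [key t (F x)]
      have : (∑ i, F x i * u i) = 0 := by
        rw [← hu]; exact Finset.sum_congr rfl fun i _ => mul_comm _ _
      simp [this]
    have h2 := hpseudo x hx _ ht ht'
    rw [key t (F (x + t • u))] at h2
    have hgt : 0 ≤ g t := by
      have heq : g t = ∑ i, F (x + t • u) i * u i := by
        simp [hgdef, mul_comm]
      rw [heq]
      nlinarith [Set.mem_Ioi.mp htpos]
    rw [slope_def_field, hg0, sub_zero, sub_zero]
    exact div_nonneg hgt (le_of_lt htpos)
  have hslope : Filter.Tendsto (slope g 0) (nhdsWithin (0 : ℝ) (Set.Ioi 0))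
      (nhds (∑ i, u i * L u i)) := by
    have h := (hg.hasDerivWithinAt (s := Set.Ioi (0:ℝ)))
    rw [hasDerivWithinAt_iff_tendsto_slope] at h
    rwa [Set.diff_singleton_eq_self (by simp)] at h
  exact ge_of_tendsto hslope hge
end

section
/- Let S ⊆ ℝᵐ be an open convex set and F : ℝᵐ → ℝᵐ a continuously differentiable map that is pseudomonotone on S. Suppose that the Jacobian matrix DF(x) is symmetric for every x ∈ S. Then for every x ∈ S, the symmetric matrix DF(x) has at most one negative eigenvalue counting multiplicity; i.e., listing the eigenvalues of DF(x) with multiplicity as λ₁, …, λ_m, at most one index i satisfies λ_i < 0. -/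
open Filter Topology

lemma key_lemma {m : ℕ} {S : Set (Fin m → ℝ)} (hSopen : IsOpen S)
    {F : (Fin m → ℝ) → (Fin m → ℝ)} (hF : ContDiff ℝ 1 F)
    (hpseudo : ∀ x ∈ S, ∀ y ∈ S,
      0 ≤ ∑ i, F x i * (y i - x i) → 0 ≤ ∑ i, F y i * (y i - x i))
    {x : Fin m → ℝ} (hx : x ∈ S) (d : Fin m → ℝ)
    (hd : ∑ i, F x i * d i = 0) :
    0 ≤ ∑ i, fderiv ℝ F x d i * d i := by
  obtain ⟨ε, hε, hball⟩ := Metric.isOpen_iff.mp hSopen x hx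
  set c := ∑ i, fderiv ℝ F x d i * d i with hc
  set g : ℝ → ℝ := fun t => ∑ i, F (x + t • d) i * d i with hgdef
  have hdiff : HasDerivAt (fun t : ℝ => F (x + t • d)) (fderiv ℝ F x d) 0 := by
    have h1 : HasDerivAt (fun t : ℝ => x + t • d) d 0 := by
      simpa using ((hasDerivAt_id (0 : ℝ)).smul_const d).const_add x
    have h2 : HasFDerivAt F (fderiv ℝ F x) (x + (0 : ℝ) • d) := by
      simpa using (hF.differentiable one_ne_zero x).hasFDerivAt
    exact h2.comp_hasDerivAt 0 h1
  have hg : HasDerivAt g c 0 := by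
    refine HasDerivAt.fun_sum (fun i _ => ?_)
    exact ((hasDerivAt_pi.mp hdiff) i).mul_const (d i)
  set δ : ℝ := ε / (‖d‖ + 1) with hδdef
  have hδ : 0 < δ := div_pos hε (by positivity)
  have hpos : ∀ t ∈ Set.Ioo (0 : ℝ) δ, 0 ≤ g t := by
    intro t ht
    have hyS : x + t • d ∈ S := by
      apply hball
      have : dist (x + t • d) x = ‖t • d‖ := by
        simp [dist_eq_norm]
      rw [Metric.mem_ball, this, norm_smul]
      have h1 : |t| * ‖d‖ ≤ t * (‖d‖ + 1) := by
        rw [abs_of_pos ht.1]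
        nlinarith [ht.1.le, norm_nonneg d]
      have ht2 : t < ε / (‖d‖ + 1) := ht.2
      have h2 : t * (‖d‖ + 1) < ε := (lt_div_iff₀ (by positivity : (0:ℝ) < ‖d‖ + 1)).mp ht2
      calc ‖t‖ * ‖d‖ = |t| * ‖d‖ := rfl
        _ ≤ t * (‖d‖ + 1) := h1
        _ < ε := h2
    have key := hpseudo x hx (x + t • d) hyS
    have e1 : ∑ i, F x i * ((x + t • d) i - x i) = t * ∑ i, F x i * d i := by
      rw [Finset.mul_sum]; apply Finset.sum_congr rfl; intro k _
      simp [Pi.add_apply, Pi.smul_apply]; ring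
    have e2 : ∑ i, F (x + t • d) i * ((x + t • d) i - x i)
        = t * ∑ i, F (x + t • d) i * d i := by
      rw [Finset.mul_sum]; apply Finset.sum_congr rfl; intro k _
      simp [Pi.add_apply, Pi.smul_apply]; ring
    have h0 : 0 ≤ ∑ i, F x i * ((x + t • d) i - x i) := by rw [e1, hd]; simp
    have := key h0
    rw [e2] at this
    exact nonneg_of_mul_nonneg_right this ht.1
  -- derivative c is limit of slopes which are nonneg on the right
  have hg0 : g 0 = 0 := by
    have : (fun i => F (x + (0:ℝ) • d) i) = F x := by simp
    simp only [hgdef]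
    simpa using hd
  have hslope : Tendsto (slope g 0) (𝓝[>] 0) (𝓝 c) :=
    (hasDerivAt_iff_tendsto_slope.mp hg).mono_left
      (nhdsWithin_mono 0 (fun t ht => ne_of_gt ht))
  refine ge_of_tendsto hslope ?_
  filter_upwards [Ioo_mem_nhdsGT_of_mem ⟨le_refl (0:ℝ), hδ⟩] with t ht
  have := hpos t ht
  rw [slope_def_field, hg0]
  have : 0 ≤ g t / t := div_nonneg this ht.1.le
  simpa [div_eq_inv_mul] using this

theorem stmt_12 {m : ℕ} (S : Set (Fin m → ℝ)) (hSopen : IsOpen S) (hSconv : Convex ℝ S)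
    (F : (Fin m → ℝ) → (Fin m → ℝ)) (hF : ContDiff ℝ 1 F)
    (hpseudo : ∀ x ∈ S, ∀ y ∈ S,
      0 ≤ ∑ i, F x i * (y i - x i) → 0 ≤ ∑ i, F y i * (y i - x i))
    (J : (Fin m → ℝ) → Matrix (Fin m) (Fin m) ℝ)
    (hJ : ∀ x ∈ S, ∀ u : Fin m → ℝ, (J x).mulVec u = fderiv ℝ F x u)
    (hsym : ∀ x ∈ S, (J x).IsHermitian) :
    ∀ (x : Fin m → ℝ) (hx : x ∈ S), ∀ i j : Fin m,
      (hsym x hx).eigenvalues i < 0 → (hsym x hx).eigenvalues j < 0 → i = j := by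
  intro x hx i j hi hj
  by_contra hne
  set A := J x with hA'
  set hA := hsym x hx with hAdef
  set u : Fin m → ℝ := ⇑(hA.eigenvectorBasis i) with hu
  set v : Fin m → ℝ := ⇑(hA.eigenvectorBasis j) with hv
  set li := hA.eigenvalues i with hli
  set lj := hA.eigenvalues j with hlj
  have hAu : A.mulVec u = li • u := hA.mulVec_eigenvectorBasis i
  have hAv : A.mulVec v = lj • v := hA.mulVec_eigenvectorBasis j
  have horth := hA.eigenvectorBasis.orthonormal
  rw [orthonormal_iff_ite] at horth
  have huu : ∑ k, u k * u k = 1 := by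
    have := horth i i
    simp only [if_pos rfl] at this
    simp only [PiLp.inner_apply, RCLike.inner_apply, starRingEnd_apply, star_trivial] at this
    rw [if_pos trivial] at this
    rw [← this]
  have hvv : ∑ k, v k * v k = 1 := by
    have := horth j j
    simp only [if_pos rfl] at this
    simp only [PiLp.inner_apply, RCLike.inner_apply, starRingEnd_apply, star_trivial] at this
    rw [if_pos trivial] at this
    rw [← this]
  have huv : ∑ k, u k * v k = 0 := by
    have := horth i j
    rw [if_neg hne] at this
    simp only [PiLp.inner_apply, RCLike.inner_apply, starRingEnd_apply, star_trivial] at this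
    rw [← this]; apply Finset.sum_congr rfl; intro k _; exact mul_comm _ _
  have expand : ∀ a b : ℝ,
      ∑ k, (A.mulVec (a • u + b • v)) k * (a • u + b • v) k = a ^ 2 * li + b ^ 2 * lj := by
    intro a b
    rw [Matrix.mulVec_add, Matrix.mulVec_smul, Matrix.mulVec_smul, hAu, hAv]
    have step : ∀ k, (a • (li • u) + b • (lj • v)) k * (a • u + b • v) k
        = a ^ 2 * li * (u k * u k) + b ^ 2 * lj * (v k * v k)
          + (a * b * li + a * b * lj) * (u k * v k) := by
      intro k
      simp only [Pi.add_apply, Pi.smul_apply, smul_eq_mul]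
      ring
    simp_rw [step]
    rw [Finset.sum_add_distrib, Finset.sum_add_distrib, ← Finset.mul_sum, ← Finset.mul_sum,
      ← Finset.mul_sum, huu, hvv, huv]
    ring
  have quad : ∀ a b : ℝ, (∑ k, F x k * (a • u + b • v) k = 0) →
      0 ≤ a ^ 2 * li + b ^ 2 * lj := by
    intro a b hab
    have := key_lemma hSopen hF hpseudo hx (a • u + b • v) hab
    have heq : ∑ k, fderiv ℝ F x (a • u + b • v) k * (a • u + b • v) k
        = ∑ k, (A.mulVec (a • u + b • v)) k * (a • u + b • v) k := by
      rw [hJ x hx]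
    rw [heq, expand] at this
    exact this
  set c1 := ∑ k, F x k * u k with hc1
  set c2 := ∑ k, F x k * v k with hc2
  by_cases h : c1 = 0
  · have := quad 1 0 (by simpa using h)
    simp at this
    linarith
  · have h0 : ∑ k, F x k * ((c2 • u) + (-c1) • v) k = 0 := by
      have : ∀ k, F x k * ((c2 • u) + (-c1) • v) k
          = c2 * (F x k * u k) + (-c1) * (F x k * v k) := by
        intro k; simp only [Pi.add_apply, Pi.smul_apply, smul_eq_mul]; ring
      simp_rw [this]
      rw [Finset.sum_add_distrib, ← Finset.mul_sum, ← Finset.mul_sum, ← hc1, ← hc2]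
      ring
    have := quad c2 (-c1) h0
    nlinarith [sq_nonneg c1, sq_nonneg c2, sq_abs c1, mul_pos (pow_pos (abs_pos.mpr h) 2) (neg_pos.mpr hj)]
end

section
/- Let C₀ ⊆ ℝᵐ be an open convex set and F : ℝᵐ → ℝᵐ continuously differentiable and pseudomonotone on C₀ with symmetric Jacobian DF(x) for every x ∈ C₀. Let P ∈ ℝ^{m×m} be an orthogonal projection matrix (Pᵀ = P and P² = P). Assume that for every x ∈ C₀ there is an orthogonal matrix Q and vectors a, q ∈ ℝᵐ with Qᵀ DF(x) Q = diag(a) and Qᵀ P Q = diag(q) (so DF(x) and P commute) such that q_i > 0 whenever a_i < 0. Let s ≥ 0 be such that s ≥ −λ_min(DF(x)) for every x ∈ C₀, where λ_min denotes the smallest eigenvalue. Then the map x ↦ F(x) + s · P x is monotone on C₀: ⟪(F(x) + s·Px) − (F(y) + s·Py), x − y⟫ ≥ 0 for all x, y ∈ C₀; equivalently, DF(x) + s·P is positive semidefinite for every x ∈ C₀. -/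
open Matrix


-- quadratic form through an orthogonal change of basis
lemma quad_diag {m : ℕ} (Q : Matrix (Fin m) (Fin m) ℝ) (a : Fin m → ℝ) (u : Fin m → ℝ) :
    u ⬝ᵥ (Q * Matrix.diagonal a * Qᵀ) *ᵥ u = ∑ i, a i * ((Qᵀ *ᵥ u) i)^2 := by
  rw [← Matrix.mulVec_mulVec, ← Matrix.mulVec_mulVec, Matrix.dotProduct_mulVec,
    ← Matrix.mulVec_transpose]
  simp only [Matrix.mulVec_diagonal, dotProduct, sq]
  exact Finset.sum_congr rfl fun i _ => by ring

lemma norm_pres {m : ℕ} (Q : Matrix (Fin m) (Fin m) ℝ) (hQ : Qᵀ * Q = 1) (u : Fin m → ℝ) :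
    (Q *ᵥ u) ⬝ᵥ (Q *ᵥ u) = u ⬝ᵥ u := by
  rw [Matrix.dotProduct_mulVec, ← Matrix.mulVec_transpose, Matrix.mulVec_mulVec, hQ,
    Matrix.one_mulVec]

lemma key1 {m : ℕ} (A : Matrix (Fin m) (Fin m) ℝ) (hA : A.IsHermitian) (s : ℝ)
    (hs : ∀ i, -hA.eigenvalues i ≤ s) (u : Fin m → ℝ) :
    -(s * (u ⬝ᵥ u)) ≤ u ⬝ᵥ A *ᵥ u := by
  set U : Matrix (Fin m) (Fin m) ℝ := (hA.eigenvectorUnitary : Matrix (Fin m) (Fin m) ℝ)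
  have hU : Uᵀ * U = 1 := by
    have := hA.eigenvectorUnitary.2.1
    rwa [Matrix.star_eq_conjTranspose, Matrix.conjTranspose_eq_transpose_of_trivial] at this
  have hAeq : A = U * Matrix.diagonal hA.eigenvalues * Uᵀ := by
    have := hA.spectral_theorem
    rw [Unitary.conjStarAlgAut_apply, Matrix.star_eq_conjTranspose, Matrix.conjTranspose_eq_transpose_of_trivial] at this
    simpa using this
  rw [hAeq, quad_diag]
  have hnorm : ∑ i, ((Uᵀ *ᵥ u) i)^2 = u ⬝ᵥ u := by
    have hU2 : U * Uᵀ = 1 := mul_eq_one_comm.mp hU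
    have := norm_pres Uᵀ (by rwa [Matrix.transpose_transpose]) u
    simpa [dotProduct, sq] using this
  calc -(s * (u ⬝ᵥ u)) = ∑ i, -s * ((Uᵀ *ᵥ u) i)^2 := by
        rw [← Finset.mul_sum, hnorm]; ring
    _ ≤ ∑ i, hA.eigenvalues i * ((Uᵀ *ᵥ u) i)^2 := by
        apply Finset.sum_le_sum
        intro i _
        exact mul_le_mul_of_nonneg_right (by linarith [hs i]) (sq_nonneg _)

lemma psd_part {m : ℕ} (A : Matrix (Fin m) (Fin m) ℝ) (hA : A.IsHermitian)
    (P : Matrix (Fin m) (Fin m) ℝ) (hP1 : Pᵀ = P) (hP2 : P * P = P)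
    (Q : Matrix (Fin m) (Fin m) ℝ) (hQ : Qᵀ * Q = 1)
    (a q : Fin m → ℝ) (hJa : Qᵀ * A * Q = Matrix.diagonal a)
    (hPq : Qᵀ * P * Q = Matrix.diagonal q) (himp : ∀ i, a i < 0 → 0 < q i)
    (s : ℝ) (hs0 : 0 ≤ s) (hs : ∀ i, -a i ≤ s) :
    (A + s • P).PosSemidef := by
  have hQQ : Q * Qᵀ = 1 := mul_eq_one_comm.mp hQ
  have hAeq : A = Q * Matrix.diagonal a * Qᵀ := by
    rw [← hJa]
    calc A = (Q*Qᵀ) * A * (Q*Qᵀ) := by rw [hQQ]; simp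
    _ = Q * (Qᵀ * A * Q) * Qᵀ := by simp only [Matrix.mul_assoc]
  have hPeq : P = Q * Matrix.diagonal q * Qᵀ := by
    rw [← hPq]
    calc P = (Q*Qᵀ) * P * (Q*Qᵀ) := by rw [hQQ]; simp
    _ = Q * (Qᵀ * P * Q) * Qᵀ := by simp only [Matrix.mul_assoc]
  -- q i * q i = q i
  have hq2 : ∀ i, q i * q i = q i := by
    have hd : Matrix.diagonal (fun i => q i * q i) = Matrix.diagonal q := by
      rw [← Matrix.diagonal_mul_diagonal, ← hPq]
      calc (Qᵀ * P * Q) * (Qᵀ * P * Q) = Qᵀ * (P * ((Q * Qᵀ) * P)) * Q := by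
            simp only [Matrix.mul_assoc]
      _ = Qᵀ * P * Q := by rw [hQQ]; simp only [Matrix.one_mul, ← Matrix.mul_assoc, hP2]
    intro i
    have := congrFun (congrFun hd i) i
    simpa using this
  have hqnn : ∀ i, 0 ≤ q i := fun i => by
    have := hq2 i; nlinarith [sq_nonneg (q i)]
  rw [Matrix.posSemidef_iff_dotProduct_mulVec]
  constructor
  · refine Matrix.IsHermitian.add hA ?_
    rw [Matrix.IsHermitian, Matrix.conjTranspose_smul, Matrix.conjTranspose_eq_transpose_of_trivial,
      hP1]
    simp
  · intro u
    have hs1 : star u = u := by simp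
    rw [hs1, Matrix.add_mulVec, Matrix.smul_mulVec, dotProduct_add,
      dotProduct_smul, hAeq, hPeq, quad_diag, quad_diag, smul_eq_mul, Finset.mul_sum,
      ← Finset.sum_add_distrib]
    apply Finset.sum_nonneg
    intro i _
    rcases lt_or_ge (a i) 0 with h | h
    · have hq1 : q i = 1 := by
        have := hq2 i
        have hqi := himp i h
        nlinarith
      have : -a i ≤ s := hs i
      rw [hq1]
      nlinarith [mul_nonneg (show (0:ℝ) ≤ a i + s by linarith) (sq_nonneg ((Qᵀ *ᵥ u) i))]
    · have h2 := mul_nonneg h (sq_nonneg ((Qᵀ *ᵥ u) i))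
      have h3 := mul_nonneg hs0 (mul_nonneg (hqnn i) (sq_nonneg ((Qᵀ *ᵥ u) i)))
      linarith

theorem stmt_13 {m : ℕ} (C₀ : Set (Fin m → ℝ)) (hopen : IsOpen C₀) (hconv : Convex ℝ C₀)
    (F : (Fin m → ℝ) → (Fin m → ℝ)) (hF : ContDiff ℝ 1 F)
    (hpseudo : ∀ x ∈ C₀, ∀ y ∈ C₀,
      0 ≤ ∑ i, F x i * (y i - x i) → 0 ≤ ∑ i, F y i * (y i - x i))
    (J : (Fin m → ℝ) → Matrix (Fin m) (Fin m) ℝ)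
    (hJ : ∀ x ∈ C₀, ∀ u : Fin m → ℝ, (J x).mulVec u = fderiv ℝ F x u)
    (hsym : ∀ x ∈ C₀, (J x).IsHermitian)
    (P : Matrix (Fin m) (Fin m) ℝ) (hP1 : Pᵀ = P) (hP2 : P * P = P)
    (hdiag : ∀ x ∈ C₀, ∃ Q : Matrix (Fin m) (Fin m) ℝ, Qᵀ * Q = 1 ∧
      ∃ a q : Fin m → ℝ, Qᵀ * J x * Q = Matrix.diagonal a ∧
        Qᵀ * P * Q = Matrix.diagonal q ∧ ∀ i, a i < 0 → 0 < q i)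
    (s : ℝ) (hs0 : 0 ≤ s)
    (hs : ∀ (x : Fin m → ℝ) (hx : x ∈ C₀), ∀ i : Fin m,
      -(hsym x hx).eigenvalues i ≤ s) :
    (∀ x ∈ C₀, ∀ y ∈ C₀,
      0 ≤ ∑ i, ((F x i + s * P.mulVec x i) - (F y i + s * P.mulVec y i)) * (x i - y i)) ∧
    (∀ x ∈ C₀, (J x + s • P).PosSemidef) := by
  have hpsd : ∀ x ∈ C₀, (J x + s • P).PosSemidef := by
    intro x hx
    obtain ⟨Q, hQ, a, q, hJa, hPq, himp⟩ := hdiag x hx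
    have hQQ : Q * Qᵀ = 1 := mul_eq_one_comm.mp hQ
    have hAeq : J x = Q * Matrix.diagonal a * Qᵀ := by
      rw [← hJa]
      calc J x = (Q*Qᵀ) * J x * (Q*Qᵀ) := by rw [hQQ]; simp
      _ = Q * (Qᵀ * J x * Q) * Qᵀ := by simp only [Matrix.mul_assoc]
    have ha : ∀ i, -a i ≤ s := by
      intro i
      set v := Q *ᵥ Pi.single i 1 with hv
      have h1 : v ⬝ᵥ v = 1 := by
        rw [hv, norm_pres Q hQ]
        simp [dotProduct, Pi.single_apply]
      have h2 : v ⬝ᵥ (J x) *ᵥ v = a i := by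
        rw [hAeq, quad_diag]
        have hQv : Qᵀ *ᵥ v = Pi.single i 1 := by
          rw [hv, Matrix.mulVec_mulVec, hQ, Matrix.one_mulVec]
        rw [hQv]
        simp [Pi.single_apply]
      have := key1 (J x) (hsym x hx) s (hs x hx) v
      rw [h2, h1, mul_one] at this
      linarith
    exact psd_part (J x) (hsym x hx) P hP1 hP2 Q hQ a q hJa hPq himp s hs0 ha
  refine ⟨?_, hpsd⟩
  intro x hx y hy
  set w : Fin m → ℝ := x - y with hw
  set γ : ℝ → (Fin m → ℝ) := fun t => y + t • w with hγ
  have hγmem : ∀ t ∈ Set.Icc (0:ℝ) 1, γ t ∈ C₀ := by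
    intro t ht
    have : γ t = (1 - t) • y + t • x := by
      funext i
      simp [hγ, hw]
      ring
    rw [this]
    exact hconv hy hx (by linarith [ht.1, ht.2]) ht.1 (by ring)
  have hdγ : ∀ t : ℝ, HasDerivAt γ w t := by
    intro t
    have := ((hasDerivAt_id t).smul_const w).const_add y
    simpa [hγ] using this
  set φ : ℝ → ℝ := fun t => ∑ i, (F (γ t) i + s * (P *ᵥ (γ t)) i) * w i with hφ
  set φ' : ℝ → ℝ := fun t => ∑ i, ((J (γ t) *ᵥ w) i + s * (P *ᵥ w) i) * w i with hφ'
  have hder : ∀ t ∈ Set.Icc (0:ℝ) 1, HasDerivAt φ (φ' t) t := by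
    intro t ht
    have hmem := hγmem t ht
    have hdF : HasDerivAt (fun t => F (γ t)) ((J (γ t)) *ᵥ w) t := by
      have h0 : HasFDerivAt F (fderiv ℝ F (γ t)) (γ t) :=
        (hF.differentiable one_ne_zero (γ t)).hasFDerivAt
      have := h0.comp_hasDerivAt t (hdγ t)
      rw [← hJ (γ t) hmem] at this
      exact this
    apply HasDerivAt.fun_sum
    intro i _
    have hFi : HasDerivAt (fun t => F (γ t) i) ((J (γ t) *ᵥ w) i) t :=
      hasDerivAt_pi.mp hdF i
    have hPi : HasDerivAt (fun t => (P *ᵥ (γ t)) i) ((P *ᵥ w) i) t := by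
      have heq : (fun t : ℝ => (P *ᵥ (γ t)) i) =
          fun t : ℝ => (P *ᵥ y) i + t * (P *ᵥ w) i := by
        funext t
        simp [hγ, Matrix.mulVec_add, Matrix.mulVec_smul]
      rw [heq]
      simpa using ((hasDerivAt_mul_const ((P *ᵥ w) i)).const_add ((P *ᵥ y) i))
    exact (hFi.add (hPi.const_mul s)).mul_const (w i)
  have hder_nonneg : ∀ t ∈ Set.Icc (0:ℝ) 1, 0 ≤ φ' t := by
    intro t ht
    have hmem := hγmem t ht
    have hps := (Matrix.posSemidef_iff_dotProduct_mulVec.mp (hpsd (γ t) hmem)).2 w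
    have hsw : star w = w := by simp
    rw [hsw] at hps
    have : φ' t = w ⬝ᵥ ((J (γ t) + s • P) *ᵥ w) := by
      rw [hφ', Matrix.add_mulVec, Matrix.smul_mulVec]
      simp only [dotProduct, Pi.add_apply, Pi.smul_apply, smul_eq_mul]
      exact Finset.sum_congr rfl fun i _ => by ring
    rw [this]
    exact hps
  have hmono : MonotoneOn φ (Set.Icc (0:ℝ) 1) := by
    apply monotoneOn_of_hasDerivWithinAt_nonneg (convex_Icc 0 1)
      (fun t ht => (hder t ht).continuousAt.continuousWithinAt)
      (f' := φ')
    · intro t ht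
      rw [interior_Icc] at ht
      exact (hder t ⟨le_of_lt ht.1, le_of_lt ht.2⟩).hasDerivWithinAt
    · intro t ht
      rw [interior_Icc] at ht
      exact hder_nonneg t ⟨le_of_lt ht.1, le_of_lt ht.2⟩
  have h01 : φ 0 ≤ φ 1 := hmono (Set.mem_Icc.mpr ⟨le_refl 0, zero_le_one⟩)
    (Set.mem_Icc.mpr ⟨zero_le_one, le_refl 1⟩) zero_le_one
  have hγ1 : γ 1 = x := by funext i; simp [hγ, hw]
  have hγ0 : γ 0 = y := by funext i; simp [hγ]
  have : φ 1 - φ 0 = ∑ i, ((F x i + s * P.mulVec x i) - (F y i + s * P.mulVec y i)) * (x i - y i) := by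
    rw [hφ]
    simp only [hγ1, hγ0, ← Finset.sum_sub_distrib]
    refine Finset.sum_congr rfl fun i _ => ?_
    have : w i = x i - y i := by simp [hw]
    rw [this]
    ring
  linarith
end

section
/- Let C₀ ⊆ ℝᵐ be an open convex set and F : ℝᵐ → ℝᵐ continuously differentiable and pseudomonotone on C₀ with symmetric Jacobian DF(x) for every x ∈ C₀. Let P ∈ ℝ^{m×m} be an orthogonal projection matrix (Pᵀ = P, P² = P). Assume that for every x ∈ C₀: (i) tr((DF(x)·P)²) = tr(DF(x)²·P); and (ii) the matrix DF(x)·P is not positive semidefinite. Let s ≥ 0 be such that s ≥ ρ(DF(x)) for every x ∈ C₀, where ρ(DF(x)) = max_i |λ_i(DF(x))| is the spectral radius of the symmetric matrix DF(x). Then the map x ↦ F(x) + s · P x is monotone on C₀: ⟪(F(x) + s·Px) − (F(y) + s·Py), x − y⟫ ≥ 0 for all x, y ∈ C₀. -/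
open Matrix Topology Filter

-- helper: dot of mulVec via transpose
lemma dot_tr {m : ℕ} (A : Matrix (Fin m) (Fin m) ℝ) (a b : Fin m → ℝ) :
    a ⬝ᵥ (Aᵀ *ᵥ b) = (A *ᵥ a) ⬝ᵥ b := by
  rw [dotProduct_mulVec, vecMul_transpose]

lemma commute_of_trace {m : ℕ} (K P : Matrix (Fin m) (Fin m) ℝ)
    (hK : Kᵀ = K) (hP1 : Pᵀ = P) (hP2 : P * P = P)
    (htr : ((K * P) ^ 2).trace = ((K ^ 2) * P).trace) : K * P = P * K := by
  set A := K * P - P * K with hA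
  have hAt : Aᵀ = -A := by
    simp [hA, transpose_sub, transpose_mul, hK, hP1]
  have h1 : (A * A).trace = 0 := by
    have e1 : A * A = K*P*(K*P) - K*(P*P)*K - P*(K*K)*P + P*K*(P*K) := by
      rw [hA]; noncomm_ring
    have t1 : (K*P*(K*P)).trace = ((K*P)^2).trace := by rw [sq]
    have t2 : (K*(P*P)*K).trace = ((K^2)*P).trace := by
      rw [hP2, trace_mul_comm, sq, mul_assoc]
    have t3 : (P*(K*K)*P).trace = ((K^2)*P).trace := by
      rw [trace_mul_comm, ← mul_assoc, hP2, trace_mul_comm, sq]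
    have t4 : (P*K*(P*K)).trace = ((K*P)^2).trace := by
      have e : P*K*(P*K) = P*(K*(P*K)) := by noncomm_ring
      have e2 : K*(P*K)*P = (K*P)^2 := by noncomm_ring
      rw [e, trace_mul_comm, e2]
    rw [e1, trace_add, trace_sub, trace_sub, t1, t2, t3, t4, htr]
    ring
  have h2 : (Aᵀ * A).trace = 0 := by rw [hAt, neg_mul, trace_neg, h1, neg_zero]
  have h3 : ∑ i, ∑ j, A j i * A j i = 0 := by
    rw [← h2]
    simp [Matrix.trace, Matrix.diag, Matrix.mul_apply, Matrix.transpose_apply]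
  have h4 : ∀ j i, A j i = 0 := by
    intro j i
    have hz : ∀ i ∈ Finset.univ, ∑ j, A j i * A j i = 0 := by
      rw [Finset.sum_eq_zero_iff_of_nonneg] at h3
      · exact h3
      · intro i _
        exact Finset.sum_nonneg fun j _ => mul_self_nonneg _
    have hz2 := (Finset.sum_eq_zero_iff_of_nonneg (fun j _ => mul_self_nonneg (A j i))).mp
      (hz i (Finset.mem_univ i)) j (Finset.mem_univ j)
    exact mul_self_eq_zero.mp hz2
  have : A = 0 := by ext j i; exact h4 j i
  exact sub_eq_zero.mp this

lemma psd_shift {m : ℕ} (A : Matrix (Fin m) (Fin m) ℝ) (hA : A.IsHermitian) (s : ℝ)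
    (h : ∀ i, -s ≤ hA.eigenvalues i) : (A + s • 1).PosSemidef := by
  have hU : (hA.eigenvectorUnitary : Matrix (Fin m) (Fin m) ℝ) *
      star (hA.eigenvectorUnitary : Matrix (Fin m) (Fin m) ℝ) = 1 :=
    (Matrix.mem_unitaryGroup_iff).mp hA.eigenvectorUnitary.2
  have key : A + s • 1 = (hA.eigenvectorUnitary : Matrix (Fin m) (Fin m) ℝ) *
      diagonal (fun i => hA.eigenvalues i + s) *
      star (hA.eigenvectorUnitary : Matrix (Fin m) (Fin m) ℝ) := by
    have hd : diagonal (fun i => hA.eigenvalues i + s) =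
        diagonal (RCLike.ofReal ∘ hA.eigenvalues) + s • (1 : Matrix (Fin m) (Fin m) ℝ) := by
      rw [Matrix.smul_one_eq_diagonal, ← diagonal_add]
      rfl
    rw [hd, mul_add, add_mul, ← Unitary.conjStarAlgAut_apply (S := ℝ) (u := hA.eigenvectorUnitary)
      (x := diagonal (RCLike.ofReal ∘ hA.eigenvalues)), ← hA.spectral_theorem]
    congr 1
    rw [mul_smul_comm, smul_mul_assoc, mul_one, hU]
  rw [key]
  have hdpsd : (diagonal (fun i => hA.eigenvalues i + s) : Matrix (Fin m) (Fin m) ℝ).PosSemidef :=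
    PosSemidef.diagonal (fun i => by have := h i; simp only [Pi.zero_apply]; linarith)
  simpa [Matrix.star_eq_conjTranspose] using hdpsd.mul_mul_conjTranspose_same
    (hA.eigenvectorUnitary : Matrix (Fin m) (Fin m) ℝ)


theorem stmt_14 {m : ℕ} (C₀ : Set (Fin m → ℝ)) (hopen : IsOpen C₀) (hconv : Convex ℝ C₀)
    (F : (Fin m → ℝ) → (Fin m → ℝ)) (hF : ContDiff ℝ 1 F)
    (hpseudo : ∀ x ∈ C₀, ∀ y ∈ C₀,
      0 ≤ ∑ i, F x i * (y i - x i) → 0 ≤ ∑ i, F y i * (y i - x i))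
    (J : (Fin m → ℝ) → Matrix (Fin m) (Fin m) ℝ)
    (hJ : ∀ x ∈ C₀, ∀ u : Fin m → ℝ, (J x).mulVec u = fderiv ℝ F x u)
    (hsym : ∀ x ∈ C₀, (J x).IsHermitian)
    (P : Matrix (Fin m) (Fin m) ℝ) (hP1 : Pᵀ = P) (hP2 : P * P = P)
    (htr : ∀ x ∈ C₀, ((J x * P) ^ 2).trace = ((J x) ^ 2 * P).trace)
    (hnpsd : ∀ x ∈ C₀, ¬ (J x * P).PosSemidef)
    (s : ℝ) (hs0 : 0 ≤ s)
    (hs : ∀ (x : Fin m → ℝ) (hx : x ∈ C₀), ∀ i : Fin m,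
      |(hsym x hx).eigenvalues i| ≤ s) :
    ∀ x ∈ C₀, ∀ y ∈ C₀,
      0 ≤ ∑ i, ((F x i + s * P.mulVec x i) - (F y i + s * P.mulVec y i)) * (x i - y i) := by
  -- transpose symmetry of J over ℝ
  have hKt : ∀ z ∈ C₀, (J z)ᵀ = J z := by
    intro z hz
    rw [← conjTranspose_eq_transpose_of_trivial]
    exact hsym z hz
  -- J commutes with P
  have hcomm : ∀ z ∈ C₀, J z * P = P * J z := fun z hz =>
    commute_of_trace (J z) P (hKt z hz) hP1 hP2 (htr z hz)
  -- derivative helper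
  have hderiv : ∀ (p v : Fin m → ℝ) (t : ℝ), (p + t • v) ∈ C₀ →
      HasDerivAt (fun r : ℝ => (F (p + r • v)) ⬝ᵥ v) ((J (p + t • v) *ᵥ v) ⬝ᵥ v) t := by
    intro p v t hmem
    have hc : HasDerivAt (fun r : ℝ => p + r • v) v t := by
      simpa using ((hasDerivAt_id t).smul_const v).const_add p
    have hFd : HasFDerivAt F (fderiv ℝ F (p + t • v)) (p + t • v) :=
      (hF.differentiable one_ne_zero (p + t • v)).hasFDerivAt
    have hcomp : HasDerivAt (fun r : ℝ => F (p + r • v)) (fderiv ℝ F (p + t • v) v) t :=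
      hFd.comp_hasDerivAt t hc
    have hcoord := hasDerivAt_pi.mp hcomp
    have hsum := HasDerivAt.fun_sum (fun i (_ : i ∈ Finset.univ) => (hcoord i).mul_const (v i))
    have heq : (J (p + t • v) *ᵥ v) ⬝ᵥ v = ∑ i, fderiv ℝ F (p + t • v) v i * v i := by
      rw [hJ _ hmem v]; rfl
    rw [heq]
    exact hsum
  -- second-order pseudomonotonicity
  have hsecond : ∀ z ∈ C₀, ∀ v : Fin m → ℝ, F z ⬝ᵥ v = 0 → 0 ≤ v ⬝ᵥ (J z *ᵥ v) := by
    intro z hz v hv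
    have hz0 : z + (0:ℝ) • v = z := by simp
    have hh : HasDerivAt (fun r : ℝ => (F (z + r • v)) ⬝ᵥ v) ((J z *ᵥ v) ⬝ᵥ v) 0 := by
      have := hderiv z v 0 (by rwa [hz0])
      rwa [hz0] at this
    have hmem : ∀ᶠ t in 𝓝 (0:ℝ), z + t • v ∈ C₀ := by
      have hcont : Continuous fun t : ℝ => z + t • v := by continuity
      have := (hcont.continuousAt (x := (0:ℝ))).preimage_mem_nhds
        (hopen.mem_nhds (by simpa using hz))
      exact this
    have hslope : ∀ᶠ t in 𝓝[≠] (0:ℝ), 0 ≤ slope (fun r : ℝ => (F (z + r • v)) ⬝ᵥ v) 0 t := by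
      filter_upwards [nhdsWithin_le_nhds hmem, self_mem_nhdsWithin] with t hmemt hne
      have hne' : t ≠ 0 := hne
      have hpre : (0:ℝ) ≤ ∑ i, F z i * ((z + t • v) i - z i) := by
        have : ∑ i, F z i * ((z + t • v) i - z i) = t * (F z ⬝ᵥ v) := by
          simp only [Pi.add_apply, Pi.smul_apply, smul_eq_mul, add_sub_cancel_left,
            dotProduct, Finset.mul_sum]
          exact Finset.sum_congr rfl fun i _ => by ring
        rw [this, hv, mul_zero]
      have hcon := hpseudo z hz (z + t • v) hmemt hpre
      have hcon' : 0 ≤ t * ((F (z + t • v)) ⬝ᵥ v) := by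
        have : ∑ i, F (z + t • v) i * ((z + t • v) i - z i)
            = t * ((F (z + t • v)) ⬝ᵥ v) := by
          simp only [Pi.add_apply, Pi.smul_apply, smul_eq_mul, add_sub_cancel_left,
            dotProduct, Finset.mul_sum]
          exact Finset.sum_congr rfl fun i _ => by ring
        rwa [this] at hcon
      have hsl : slope (fun r : ℝ => (F (z + r • v)) ⬝ᵥ v) 0 t
          = (t * ((F (z + t • v)) ⬝ᵥ v)) / (t * t) := by
        rw [slope_def_field]
        rw [hz0, hv]
        field_simp
        ring
      rw [hsl]
      exact div_nonneg hcon' (mul_self_nonneg t)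
    have htend := hasDerivAt_iff_tendsto_slope.mp hh
    rw [dotProduct_comm]
    exact ge_of_tendsto htend hslope
  -- eigenvalue lower bound on quadratic form
  have hqlow : ∀ z ∈ C₀, ∀ w : Fin m → ℝ, -(s * (w ⬝ᵥ w)) ≤ w ⬝ᵥ (J z *ᵥ w) := by
    intro z hz w
    have hpsd := psd_shift (J z) (hsym z hz) s (fun i => (abs_le.mp (hs z hz i)).1)
    have := hpsd.dotProduct_mulVec_nonneg w
    simp only [star_trivial, add_mulVec, smul_mulVec, one_mulVec, dotProduct_add,
      dotProduct_smul, smul_eq_mul] at this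
    linarith
  -- quadratic form nonneg on kernel of P
  have hker : ∀ z ∈ C₀, ∀ v : Fin m → ℝ, P *ᵥ v = 0 → 0 ≤ v ⬝ᵥ (J z *ᵥ v) := by
    intro z hz v hPv
    by_contra hneg
    push_neg at hneg
    set K := J z with hKdef
    have hcommz : K * P = P * K := hcomm z hz
    have hKtz : Kᵀ = K := hKt z hz
    have hKP : (K * P).IsHermitian := by
      show (K * P)ᴴ = K * P
      rw [conjTranspose_eq_transpose_of_trivial, transpose_mul, hP1, hKtz, hcommz]
    obtain ⟨w, hw⟩ : ∃ w, w ⬝ᵥ ((K * P) *ᵥ w) < 0 := by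
      by_contra h
      push_neg at h
      exact hnpsd z hz (PosSemidef.of_dotProduct_mulVec_nonneg hKP fun w => by simpa using h w)
    set p := P *ᵥ w with hpdef
    have hPp : P *ᵥ p = p := by rw [hpdef, mulVec_mulVec, hP2]
    have hqp : p ⬝ᵥ (K *ᵥ p) < 0 := by
      have e1 : p ⬝ᵥ (K *ᵥ p) = w ⬝ᵥ ((K * P) *ᵥ w) := by
        rw [hpdef, mulVec_mulVec, ← dot_tr P w, mulVec_mulVec, hP1, ← mul_assoc,
          ← hcommz, mul_assoc, hP2]
      rw [e1]; exact hw
    have hcross : p ⬝ᵥ (K *ᵥ v) = 0 := by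
      rw [hpdef, ← dot_tr P w, mulVec_mulVec, hP1, ← hcommz, ← mulVec_mulVec, hPv,
        mulVec_zero, dotProduct_zero]
    have hcross2 : v ⬝ᵥ (K *ᵥ p) = 0 := by
      rw [← hKtz, dot_tr, dotProduct_comm]
      exact hcross
    by_cases ha : F z ⬝ᵥ v = 0
    · exact absurd (hsecond z hz v ha) (not_le.mpr hneg)
    · set c : ℝ := (F z ⬝ᵥ p) / (F z ⬝ᵥ v) with hcdef
      have hzero : F z ⬝ᵥ (p - c • v) = 0 := by
        rw [dotProduct_sub, dotProduct_smul, smul_eq_mul, hcdef]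
        field_simp
        ring
      have hq := hsecond z hz (p - c • v) hzero
      have hexp : (p - c • v) ⬝ᵥ (K *ᵥ (p - c • v))
          = p ⬝ᵥ (K *ᵥ p) - c * (p ⬝ᵥ (K *ᵥ v)) - c * (v ⬝ᵥ (K *ᵥ p))
            + c * c * (v ⬝ᵥ (K *ᵥ v)) := by
        rw [mulVec_sub, mulVec_smul, dotProduct_sub, sub_dotProduct, sub_dotProduct,
          smul_dotProduct, dotProduct_smul, smul_dotProduct, dotProduct_smul]
        simp only [smul_eq_mul]
        ring
      rw [hexp, hcross, hcross2] at hq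
      nlinarith [mul_self_nonneg c, hqp, hneg]
  -- pointwise monotonicity bound
  have hpoint : ∀ z ∈ C₀, ∀ w : Fin m → ℝ,
      -(s * ((P *ᵥ w) ⬝ᵥ w)) ≤ w ⬝ᵥ (J z *ᵥ w) := by
    intro z hz w
    set K := J z with hKdef
    have hcommz : K * P = P * K := hcomm z hz
    have hKtz : Kᵀ = K := hKt z hz
    set p := P *ᵥ w with hpdef
    set v := w - p with hvdef
    have hPv : P *ᵥ v = 0 := by
      rw [hvdef, mulVec_sub, hpdef, mulVec_mulVec, hP2, sub_self]
    have hcross : p ⬝ᵥ (K *ᵥ v) = 0 := by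
      rw [hpdef, ← dot_tr P w, mulVec_mulVec, hP1, ← hcommz, ← mulVec_mulVec, hPv,
        mulVec_zero, dotProduct_zero]
    have hcross2 : v ⬝ᵥ (K *ᵥ p) = 0 := by
      rw [← hKtz, dot_tr, dotProduct_comm]
      exact hcross
    have hPp : P *ᵥ p = p := by rw [hpdef, mulVec_mulVec, hP2]
    have hqp : -(s * (p ⬝ᵥ p)) ≤ p ⬝ᵥ (K *ᵥ p) := hqlow z hz p
    have hqv : 0 ≤ v ⬝ᵥ (K *ᵥ v) := hker z hz v hPv
    have hpp : p ⬝ᵥ p = p ⬝ᵥ w := by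
      nth_rewrite 1 [hpdef]
      rw [← dot_tr P w p, hP1, hPp, dotProduct_comm]
    have e1 : v ⬝ᵥ (K *ᵥ v) = w ⬝ᵥ (K *ᵥ w) - w ⬝ᵥ (K *ᵥ p) - p ⬝ᵥ (K *ᵥ w)
        + p ⬝ᵥ (K *ᵥ p) := by
      rw [hvdef, mulVec_sub, dotProduct_sub, sub_dotProduct, sub_dotProduct]
      ring
    have e2 : p ⬝ᵥ (K *ᵥ v) = p ⬝ᵥ (K *ᵥ w) - p ⬝ᵥ (K *ᵥ p) := by
      rw [hvdef, mulVec_sub, dotProduct_sub]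
    have e3 : v ⬝ᵥ (K *ᵥ p) = w ⬝ᵥ (K *ᵥ p) - p ⬝ᵥ (K *ᵥ p) := by
      rw [hvdef, sub_dotProduct]
    rw [e1] at hqv
    rw [e2] at hcross
    rw [e3] at hcross2
    have hfin : p ⬝ᵥ w = (P *ᵥ w) ⬝ᵥ w := by rw [hpdef]
    have hqp' : -(s * (p ⬝ᵥ w)) ≤ p ⬝ᵥ (K *ᵥ p) := by rw [← hpp]; exact hqp
    have hqp'' : -(s * ((P *ᵥ w) ⬝ᵥ w)) ≤ p ⬝ᵥ (K *ᵥ p) := by rwa [hfin] at hqp'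
    linarith [hqp'', hqv, hcross, hcross2]
  -- main argument
  intro x hx y hy
  set u : Fin m → ℝ := x - y with hudef
  set c : ℝ := s * ((P *ᵥ u) ⬝ᵥ u) with hcdef
  set φ : ℝ → ℝ := fun t => (F (y + t • u)) ⬝ᵥ u + t * c with hφdef
  have hseg : ∀ t ∈ Set.Icc (0:ℝ) 1, y + t • u ∈ C₀ := by
    intro t ht
    have h1 : (1 - t) • y + t • x ∈ C₀ :=
      hconv hy hx (by linarith [ht.2]) ht.1 (by ring)
    have h2 : y + t • u = (1 - t) • y + t • x := by
      funext i
      simp [hudef]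
      ring
    rwa [h2]
  have hφd : ∀ t ∈ Set.Icc (0:ℝ) 1,
      HasDerivAt φ ((J (y + t • u) *ᵥ u) ⬝ᵥ u + c) t := by
    intro t ht
    have h1 := (hderiv y u t (hseg t ht)).add ((hasDerivAt_id t).mul_const c)
    exact h1.congr_deriv (by ring)
  have hmono : MonotoneOn φ (Set.Icc 0 1) := by
    apply monotoneOn_of_deriv_nonneg (convex_Icc 0 1)
    · exact fun t ht => ((hφd t ht).continuousAt).continuousWithinAt
    · intro t ht
      rw [interior_Icc] at ht
      exact ((hφd t (Set.mem_Icc_of_Ioo ht)).differentiableAt).differentiableWithinAt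
    · intro t ht
      rw [interior_Icc] at ht
      rw [(hφd t (Set.mem_Icc_of_Ioo ht)).deriv]
      have h2 := hpoint (y + t • u) (hseg t (Set.mem_Icc_of_Ioo ht)) u
      rw [dotProduct_comm (J (y + t • u) *ᵥ u) u]
      linarith [h2]
  have hφ01 : φ 0 ≤ φ 1 := hmono (Set.left_mem_Icc.mpr zero_le_one)
    (Set.right_mem_Icc.mpr zero_le_one) zero_le_one
  have hy0 : y + (0:ℝ) • u = y := by simp
  have hx1 : y + (1:ℝ) • u = x := by
    funext i
    simp [hudef]
  have hφ0 : φ 0 = F y ⬝ᵥ u := by simp [hφdef, hy0]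
  have hx1' : y + u = x := by
    funext i
    simp [hudef]
  have hφ1 : φ 1 = F x ⬝ᵥ u + c := by simp [hφdef, hx1']
  have hkey : 0 ≤ (F x ⬝ᵥ u + c) - F y ⬝ᵥ u := by
    rw [← hφ0, ← hφ1]; linarith
  have hsum : ∑ i, ((F x i + s * P.mulVec x i) - (F y i + s * P.mulVec y i)) * (x i - y i)
      = (F x ⬝ᵥ u + c) - F y ⬝ᵥ u := by
    rw [hcdef, dotProduct, dotProduct, dotProduct, Finset.mul_sum]
    rw [← Finset.sum_add_distrib, ← Finset.sum_sub_distrib]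
    apply Finset.sum_congr rfl
    intro i _
    have hP : P.mulVec x i - P.mulVec y i = (P *ᵥ u) i := by
      rw [hudef, mulVec_sub]
      simp
    have hu : u i = x i - y i := by rw [hudef]; simp
    rw [← hu, ← hP]
    ring
  rw [hsum]
  exact hkey
end

section
/- Let C₀ ⊆ ℝᵐ be an open convex set and F : ℝᵐ → ℝᵐ continuously differentiable and pseudomonotone on C₀ with symmetric Jacobian DF(x) for every x ∈ C₀. Let P ∈ ℝ^{m×m} be an orthogonal projection matrix (Pᵀ = P, P² = P). Suppose e₂ > 0 is such that for every x ∈ C₀ the smallest eigenvalue of the symmetric matrix DF(x) + e₂·P has multiplicity at least two (i.e., listing the eigenvalues with multiplicity, the minimum value is attained by at least two indices). Then for every s ≥ e₂ the map x ↦ F(x) + s · P x is monotone on C₀: ⟪(F(x) + s·Px) − (F(y) + s·Py), x − y⟫ ≥ 0 for all x, y ∈ C₀. -/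
open Matrix

lemma hasDerivAt_sum_mul {m : ℕ} {F : (Fin m → ℝ) → (Fin m → ℝ)} (hF : ContDiff ℝ 1 F)
    (a u w : Fin m → ℝ) (t : ℝ) :
    HasDerivAt (fun t : ℝ => ∑ i, F (a + t • u) i * w i)
      (∑ i, (fderiv ℝ F (a + t • u) u) i * w i) t := by
  have hc : HasDerivAt (fun t : ℝ => a + t • u) u t := by
    simpa using ((hasDerivAt_id t).smul_const u).const_add a
  have hdF : HasDerivAt (fun t : ℝ => F (a + t • u)) (fderiv ℝ F (a + t • u) u) t :=
    ((hF.differentiable one_ne_zero (a + t • u)).hasFDerivAt).comp_hasDerivAt t hc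
  exact HasDerivAt.fun_sum fun i _ => ((hasDerivAt_pi.1 hdF i).mul_const (w i))


lemma proj_nonneg {m : ℕ} {P : Matrix (Fin m) (Fin m) ℝ} (hP1 : Pᵀ = P) (hP2 : P * P = P)
    (u : Fin m → ℝ) : 0 ≤ ∑ k, (P *ᵥ u) k * u k := by
  have key : (P *ᵥ u) ⬝ᵥ (P *ᵥ u) = (P *ᵥ u) ⬝ᵥ u := by
    rw [dotProduct_mulVec]
    congr 1
    rw [← hP1, vecMul_transpose, mulVec_mulVec, hP1, hP2]
  have h1 : 0 ≤ (P *ᵥ u) ⬝ᵥ (P *ᵥ u) :=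
    Finset.sum_nonneg fun k _ => mul_self_nonneg _
  rw [key] at h1
  exact h1

lemma pseudo_deriv' {m : ℕ} {C₀ : Set (Fin m → ℝ)} (hopen : IsOpen C₀)
    {F : (Fin m → ℝ) → (Fin m → ℝ)} (hF : ContDiff ℝ 1 F)
    (hpseudo : ∀ x ∈ C₀, ∀ y ∈ C₀,
      0 ≤ ∑ i, F x i * (y i - x i) → 0 ≤ ∑ i, F y i * (y i - x i))
    {x : Fin m → ℝ} (hx : x ∈ C₀) (u : Fin m → ℝ)
    (hu : ∑ i, F x i * u i = 0) : 0 ≤ ∑ i, (fderiv ℝ F x u) i * u i := by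
  obtain ⟨ε, hε, hball⟩ := Metric.isOpen_iff.1 hopen x hx
  set g : ℝ → ℝ := fun t => ∑ i, F (x + t • u) i * u i with hgdef
  have hd : HasDerivAt g (∑ i, (fderiv ℝ F x u) i * u i) 0 := by
    simpa using hasDerivAt_sum_mul hF x u u 0
  set δ : ℝ := ε / (‖u‖ + 1) with hδdef
  have hδ : 0 < δ := div_pos hε (by positivity)
  have hmem : ∀ t : ℝ, 0 < t → t < δ → x + t • u ∈ C₀ := by
    intro t ht htδ
    apply hball
    have : dist (x + t • u) x = ‖t • u‖ := by
      rw [dist_eq_norm]; congr 1; abel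
    rw [Metric.mem_ball, this, norm_smul, Real.norm_eq_abs, abs_of_pos ht]
    calc t * ‖u‖ ≤ t * (‖u‖ + 1) := by nlinarith [norm_nonneg u]
      _ < δ * (‖u‖ + 1) := by nlinarith [norm_nonneg u]
      _ = ε := by rw [hδdef, div_mul_cancel₀ _ (by positivity)]
  have hgt : ∀ t : ℝ, 0 < t → t < δ → 0 ≤ g t := by
    intro t ht htδ
    have hy := hmem t ht htδ
    have h1 : ∑ i, F x i * ((x + t • u) i - x i) = t * ∑ i, F x i * u i := by
      rw [Finset.mul_sum]; apply Finset.sum_congr rfl; intro i _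
      simp [Pi.add_apply, Pi.smul_apply]; ring
    have h2 := hpseudo x hx _ hy (by rw [h1, hu, mul_zero])
    have h3 : ∑ i, F (x + t • u) i * ((x + t • u) i - x i) = t * g t := by
      rw [hgdef, Finset.mul_sum]; apply Finset.sum_congr rfl; intro i _
      simp [Pi.add_apply, Pi.smul_apply]; ring
    rw [h3] at h2
    nlinarith
  have hg0 : g 0 = 0 := by simpa [hgdef] using hu
  have hslope := hasDerivAt_iff_tendsto_slope.1 hd
  have h2 : Filter.Tendsto (slope g 0) (nhdsWithin 0 (Set.Ioi 0)) (nhds (∑ i, (fderiv ℝ F x u) i * u i)) :=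
    hslope.mono_left (nhdsWithin_mono _ (fun t ht => ne_of_gt ht))
  refine ge_of_tendsto h2 ?_
  filter_upwards [Ioo_mem_nhdsGT_of_mem ⟨le_refl (0:ℝ), hδ⟩] with t ht
  have h4 := hgt t ht.1 ht.2
  rw [slope_def_field, hg0, sub_zero, sub_zero]
  exact div_nonneg h4 ht.1.le

lemma psd_at {m : ℕ} {C₀ : Set (Fin m → ℝ)} (hopen : IsOpen C₀)
    {F : (Fin m → ℝ) → (Fin m → ℝ)} (hF : ContDiff ℝ 1 F)
    (hpseudo : ∀ x ∈ C₀, ∀ y ∈ C₀,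
      0 ≤ ∑ i, F x i * (y i - x i) → 0 ≤ ∑ i, F y i * (y i - x i))
    {J : (Fin m → ℝ) → Matrix (Fin m) (Fin m) ℝ}
    (hJ : ∀ x ∈ C₀, ∀ u : Fin m → ℝ, (J x).mulVec u = fderiv ℝ F x u)
    {P : Matrix (Fin m) (Fin m) ℝ} (hP1 : Pᵀ = P) (hP2 : P * P = P)
    {e₂ : ℝ} (he₂ : 0 < e₂)
    (hsym' : ∀ x ∈ C₀, (J x + e₂ • P).IsHermitian)
    (hmult : ∀ (x : Fin m → ℝ) (hx : x ∈ C₀), ∃ i j : Fin m, i ≠ j ∧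
      (∀ k : Fin m, (hsym' x hx).eigenvalues i ≤ (hsym' x hx).eigenvalues k) ∧
      (hsym' x hx).eigenvalues j = (hsym' x hx).eigenvalues i)
    {x : Fin m → ℝ} (hx : x ∈ C₀) (u : Fin m → ℝ) :
    0 ≤ ∑ k, ((J x + e₂ • P) *ᵥ u) k * u k := by
  set hH := hsym' x hx with hHdef
  obtain ⟨i, j, hij, hmin, heq⟩ := hmult x hx
  set lam := hH.eigenvalues i with hlamdef
  set v : Fin m → ℝ := ⇑(hH.eigenvectorBasis i) with hvdef
  set w0 : Fin m → ℝ := ⇑(hH.eigenvectorBasis j) with hwdef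
  have hv : (J x + e₂ • P) *ᵥ v = lam • v := hH.mulVec_eigenvectorBasis i
  have hw : (J x + e₂ • P) *ᵥ w0 = lam • w0 := by
    have h := hH.mulVec_eigenvectorBasis j
    rw [heq] at h; exact h
  have horth := orthonormal_iff_ite.mp hH.eigenvectorBasis.orthonormal
  have hvv : ∑ k, v k * v k = 1 := by
    have := horth i i; simp only [PiLp.inner_apply, RCLike.inner_apply, conj_trivial, if_true] at this; exact this
  have hww : ∑ k, w0 k * w0 k = 1 := by
    have := horth j j; simp only [PiLp.inner_apply, RCLike.inner_apply, conj_trivial, if_true] at this; exact this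
  have hvw : ∑ k, v k * w0 k = 0 := by
    have := horth i j; simp only [PiLp.inner_apply, RCLike.inner_apply, conj_trivial, hij, if_false] at this; rw [← this]; exact Finset.sum_congr rfl fun k _ => mul_comm _ _
  -- find a null direction for F x inside the minimal eigenspace
  have hz : ∃ z : Fin m → ℝ, (∑ k, F x k * z k = 0) ∧ (0 < ∑ k, z k * z k) ∧
      (J x + e₂ • P) *ᵥ z = lam • z := by
    set c := ∑ k, F x k * v k with hcdef
    set d := ∑ k, F x k * w0 k with hddef
    by_cases hc : c = 0
    · exact ⟨v, hc, by rw [hvv]; norm_num, hv⟩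
    · refine ⟨fun k => d * v k - c * w0 k, ?_, ?_, ?_⟩
      · have hterm : ∀ k : Fin m, F x k * (d * v k - c * w0 k)
            = d * (F x k * v k) - c * (F x k * w0 k) := fun k => by ring
        rw [Finset.sum_congr rfl fun k _ => hterm k, Finset.sum_sub_distrib,
          ← Finset.mul_sum, ← Finset.mul_sum, ← hcdef, ← hddef]
        ring
      · have hterm : ∀ k : Fin m, (d * v k - c * w0 k) * (d * v k - c * w0 k)
            = d^2 * (v k * v k) - (2*c*d) * (v k * w0 k) + c^2 * (w0 k * w0 k) := fun k => by ring
        rw [Finset.sum_congr rfl fun k _ => hterm k, Finset.sum_add_distrib,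
          Finset.sum_sub_distrib, ← Finset.mul_sum, ← Finset.mul_sum, ← Finset.mul_sum,
          hvv, hww, hvw]
        have : c^2 > 0 := by positivity
        nlinarith
      · have hfun : (fun k => d * v k - c * w0 k) = d • v - c • w0 := by
          funext k; simp
        rw [hfun, mulVec_sub, mulVec_smul, mulVec_smul, hv, hw]
        funext k; simp; ring
  obtain ⟨z, hz0, hzpos, hzeig⟩ := hz
  have h1 : 0 ≤ ∑ k, ((J x) *ᵥ z) k * z k := by
    have := pseudo_deriv' hopen hF hpseudo hx z hz0
    rwa [← hJ x hx z] at this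
  have h2 : 0 ≤ ∑ k, (P *ᵥ z) k * z k := proj_nonneg hP1 hP2 z
  have hsplit : ∑ k, ((J x + e₂ • P) *ᵥ z) k * z k
      = (∑ k, ((J x) *ᵥ z) k * z k) + e₂ * ∑ k, (P *ᵥ z) k * z k := by
    have hterm : ∀ k : Fin m, ((J x *ᵥ z) + e₂ • (P *ᵥ z)) k * z k
        = (J x *ᵥ z) k * z k + e₂ * ((P *ᵥ z) k * z k) := fun k => by
      simp; ring
    rw [add_mulVec, smul_mulVec, Finset.sum_congr rfl fun k _ => hterm k,
      Finset.sum_add_distrib, ← Finset.mul_sum]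
  have heigsum : ∑ k, ((J x + e₂ • P) *ᵥ z) k * z k = lam * ∑ k, z k * z k := by
    have hterm : ∀ k : Fin m, (lam • z) k * z k = lam * (z k * z k) := fun k => by
      simp; ring
    rw [hzeig, Finset.sum_congr rfl fun k _ => hterm k, ← Finset.mul_sum]
  -- conclude lam ≥ 0
  have hlam : 0 ≤ lam := by nlinarith [hsplit, heigsum, h1, h2, hzpos, he₂.le, mul_nonneg he₂.le h2]
  have hall : ∀ k, 0 ≤ hH.eigenvalues k := fun k => le_trans hlam (hmin k)
  have hPS : (J x + e₂ • P).PosSemidef := (Matrix.IsHermitian.posSemidef_iff_eigenvalues_nonneg hH).mpr hall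
  have := hPS.dotProduct_mulVec_nonneg u
  simpa [dotProduct, mul_comm] using this
theorem stmt_15 {m : ℕ} (C₀ : Set (Fin m → ℝ)) (hopen : IsOpen C₀) (hconv : Convex ℝ C₀)
    (F : (Fin m → ℝ) → (Fin m → ℝ)) (hF : ContDiff ℝ 1 F)
    (hpseudo : ∀ x ∈ C₀, ∀ y ∈ C₀,
      0 ≤ ∑ i, F x i * (y i - x i) → 0 ≤ ∑ i, F y i * (y i - x i))
    (J : (Fin m → ℝ) → Matrix (Fin m) (Fin m) ℝ)
    (hJ : ∀ x ∈ C₀, ∀ u : Fin m → ℝ, (J x).mulVec u = fderiv ℝ F x u)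
    (hsym : ∀ x ∈ C₀, (J x).IsHermitian)
    (P : Matrix (Fin m) (Fin m) ℝ) (hP1 : Pᵀ = P) (hP2 : P * P = P)
    (e₂ : ℝ) (he₂ : 0 < e₂)
    (hsym' : ∀ x ∈ C₀, (J x + e₂ • P).IsHermitian)
    (hmult : ∀ (x : Fin m → ℝ) (hx : x ∈ C₀), ∃ i j : Fin m, i ≠ j ∧
      (∀ k : Fin m, (hsym' x hx).eigenvalues i ≤ (hsym' x hx).eigenvalues k) ∧
      (hsym' x hx).eigenvalues j = (hsym' x hx).eigenvalues i) :
    ∀ s : ℝ, e₂ ≤ s → ∀ x ∈ C₀, ∀ y ∈ C₀,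
      0 ≤ ∑ i, ((F x i + s * P.mulVec x i) - (F y i + s * P.mulVec y i)) * (x i - y i) := by
  intro s hs x hx y hy
  set u : Fin m → ℝ := x - y with hudef
  set T : ℝ := ∑ i, (P *ᵥ u) i * u i with hTdef
  have hT : 0 ≤ T := proj_nonneg hP1 hP2 u
  set φ : ℝ → ℝ := fun t => (∑ i, F (y + t • u) i * u i) + t * (s * T) with hφdef
  have hderiv : ∀ t : ℝ,
      HasDerivAt φ ((∑ i, (fderiv ℝ F (y + t • u) u) i * u i) + s * T) t := by
    intro t
    exact (hasDerivAt_sum_mul hF y u u t).add (hasDerivAt_mul_const (s * T))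
  have hDnn : ∀ t ∈ Set.Icc (0:ℝ) 1,
      0 ≤ (∑ i, (fderiv ℝ F (y + t • u) u) i * u i) + s * T := by
    intro t ht
    have hz : y + t • u ∈ C₀ := by
      have hrw : y + t • u = (1 - t) • y + t • x := by
        funext i
        simp [hudef]
        ring
      rw [hrw]
      exact hconv hy hx (by linarith [ht.2]) ht.1 (by ring)
    have hps := psd_at hopen hF hpseudo hJ hP1 hP2 he₂ hsym' hmult hz u
    have hsplit : ∑ k, ((J (y + t • u) + e₂ • P) *ᵥ u) k * u k
        = (∑ k, ((J (y + t • u)) *ᵥ u) k * u k) + e₂ * T := by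
      have hterm : ∀ k : Fin m, (((J (y + t • u)) *ᵥ u) + e₂ • (P *ᵥ u)) k * u k
          = ((J (y + t • u)) *ᵥ u) k * u k + e₂ * ((P *ᵥ u) k * u k) := fun k => by
        simp; ring
      rw [add_mulVec, smul_mulVec, Finset.sum_congr rfl fun k _ => hterm k,
        Finset.sum_add_distrib, ← Finset.mul_sum, ← hTdef]
    rw [← hJ _ hz u]
    rw [hsplit] at hps
    nlinarith [mul_nonneg (sub_nonneg.mpr hs) hT]
  have hmono : MonotoneOn φ (Set.Icc (0:ℝ) 1) := by
    apply monotoneOn_of_deriv_nonneg (convex_Icc 0 1)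
    · exact (Differentiable.continuous fun t => (hderiv t).differentiableAt).continuousOn
    · exact fun t _ => (hderiv t).differentiableAt.differentiableWithinAt
    · intro t ht
      rw [interior_Icc] at ht
      rw [(hderiv t).deriv]
      exact hDnn t ⟨ht.1.le, ht.2.le⟩
  have hle : φ 0 ≤ φ 1 :=
    hmono (Set.left_mem_Icc.mpr zero_le_one) (Set.right_mem_Icc.mpr zero_le_one) zero_le_one
  have h1 : φ 1 = (∑ i, F x i * u i) + s * T := by
    have : y + (1:ℝ) • u = x := by funext i; simp [hudef]
    rw [hφdef]; simp only [this, one_mul]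
  have h0 : φ 0 = ∑ i, F y i * u i := by
    have : y + (0:ℝ) • u = y := by funext i; simp
    rw [hφdef]; simp only [this, zero_mul, add_zero]
  have hPu : ∀ i, (P *ᵥ u) i = (P *ᵥ x) i - (P *ᵥ y) i := by
    intro i; rw [hudef, mulVec_sub]; simp
  have hterm : ∀ i : Fin m, ((F x i + s * (P *ᵥ x) i) - (F y i + s * (P *ᵥ y) i)) * (x i - y i)
      = (F x i * u i - F y i * u i) + s * ((P *ᵥ u) i * u i) := by
    intro i
    have hui : u i = x i - y i := rfl
    rw [hPu i, ← hui]; ring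
  rw [Finset.sum_congr rfl fun i _ => hterm i, Finset.sum_add_distrib,
    Finset.sum_sub_distrib, ← Finset.mul_sum, ← hTdef]
  rw [h1, h0] at hle
  linarith
end

section
/- Let C₀ ⊆ ℝᵐ be an open convex set and F : ℝᵐ → ℝᵐ continuously differentiable and pseudomonotone on C₀ with symmetric Jacobian DF(x) for every x ∈ C₀. Let P ∈ ℝ^{m×m} be an orthogonal projection matrix (Pᵀ = P, P² = P). Suppose e₃ > 0 is such that for every x ∈ C₀ and every index i: (i) (DF(x))_{ii} + e₃·P_{ii} > 0; and (ii) DF(x) + e₃·P is strictly diagonally dominant, i.e. (DF(x))_{ii} + e₃·P_{ii} > ∑_{j≠i} |(DF(x))_{ij} + e₃·P_{ij}|. Then for every s ≥ e₃ the map x ↦ F(x) + s · P x is monotone on C₀: ⟪(F(x) + s·Px) − (F(y) + s·Py), x − y⟫ ≥ 0 for all x, y ∈ C₀. -/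
open Matrix

lemma sum_erase_swap {m : ℕ} (f : Fin m → Fin m → ℝ) :
    ∑ i, ∑ j ∈ Finset.univ.erase i, f i j = ∑ j, ∑ i ∈ Finset.univ.erase j, f i j := by
  have h : ∀ (i : Fin m) (g : Fin m → ℝ), ∑ j ∈ Finset.univ.erase i, g j
      = ∑ j, if j ≠ i then g j else 0 := by
    intro i g
    rw [← Finset.sum_filter]
    congr 1
    ext j; simp [Finset.mem_erase]
  calc ∑ i, ∑ j ∈ Finset.univ.erase i, f i j
      = ∑ i, ∑ j, if j ≠ i then f i j else 0 := Finset.sum_congr rfl fun i _ => h i _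
    _ = ∑ j, ∑ i, if j ≠ i then f i j else 0 := Finset.sum_comm
    _ = ∑ j, ∑ i ∈ Finset.univ.erase j, f i j := by
        refine Finset.sum_congr rfl fun j _ => ?_
        rw [h j (fun i => f i j)]
        exact Finset.sum_congr rfl fun i _ => if_congr ne_comm rfl rfl

lemma key_quad {m : ℕ} (A : Matrix (Fin m) (Fin m) ℝ) (hs : ∀ i j, A i j = A j i)
    (hdd : ∀ i, ∑ j ∈ Finset.univ.erase i, |A i j| ≤ A i i) (v : Fin m → ℝ) :
    0 ≤ ∑ i, A.mulVec v i * v i := by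
  have hS : ∑ i, A.mulVec v i * v i
      = ∑ i, A i i * v i ^ 2 + ∑ i, ∑ j ∈ Finset.univ.erase i, A i j * v j * v i := by
    rw [← Finset.sum_add_distrib]
    refine Finset.sum_congr rfl fun i _ => ?_
    rw [Matrix.mulVec, dotProduct, Finset.sum_mul,
      ← Finset.add_sum_erase _ _ (Finset.mem_univ i)]
    ring
  have hswap : ∑ i, ∑ j ∈ Finset.univ.erase i, |A i j| * v j ^ 2
      = ∑ i, ∑ j ∈ Finset.univ.erase i, |A i j| * v i ^ 2 := by
    rw [sum_erase_swap (fun i j => |A i j| * v j ^ 2)]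
    refine Finset.sum_congr rfl fun j _ => Finset.sum_congr rfl fun i _ => ?_
    rw [hs]
  have hT : ∑ i, ∑ j ∈ Finset.univ.erase i, (-(|A i j| * v i ^ 2 / 2) + -(|A i j| * v j ^ 2 / 2))
      ≤ ∑ i, ∑ j ∈ Finset.univ.erase i, A i j * v j * v i := by
    refine Finset.sum_le_sum fun i _ => Finset.sum_le_sum fun j _ => ?_
    have h1 : |A i j * v j * v i| ≤ |A i j| * v i ^ 2 / 2 + |A i j| * v j ^ 2 / 2 := by
      rw [abs_mul, abs_mul]
      nlinarith [sq_nonneg (|v i| - |v j|), abs_nonneg (A i j), sq_abs (v i), sq_abs (v j),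
        abs_nonneg (v i), abs_nonneg (v j)]
    have h2 := neg_abs_le (A i j * v j * v i)
    linarith
  have hsplit : ∑ i, ∑ j ∈ Finset.univ.erase i,
        (-(|A i j| * v i ^ 2 / 2) + -(|A i j| * v j ^ 2 / 2))
      = -(∑ i, ∑ j ∈ Finset.univ.erase i, |A i j| * v i ^ 2) / 2
        + -(∑ i, ∑ j ∈ Finset.univ.erase i, |A i j| * v j ^ 2) / 2 := by
    rw [neg_div, neg_div, ← neg_add, Finset.sum_div, Finset.sum_div, ← Finset.sum_add_distrib,
      ← Finset.sum_neg_distrib]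
    refine Finset.sum_congr rfl fun i _ => ?_
    rw [Finset.sum_div, Finset.sum_div, ← Finset.sum_add_distrib, ← Finset.sum_neg_distrib]
    refine Finset.sum_congr rfl fun j _ => ?_
    ring
  have hR : ∑ i, ∑ j ∈ Finset.univ.erase i, |A i j| * v i ^ 2 ≤ ∑ i, A i i * v i ^ 2 := by
    refine Finset.sum_le_sum fun i _ => ?_
    rw [← Finset.sum_mul]
    exact mul_le_mul_of_nonneg_right (hdd i) (sq_nonneg _)
  rw [hS]
  have := hT
  rw [hsplit, hswap] at this
  linarith

lemma proj_quad_nonneg {m : ℕ} (P : Matrix (Fin m) (Fin m) ℝ) (hP1 : Pᵀ = P) (hP2 : P * P = P)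
    (v : Fin m → ℝ) : 0 ≤ ∑ i, P.mulVec v i * v i := by
  have h : dotProduct (P.mulVec v) (P.mulVec v) = dotProduct (P.mulVec v) v := by
    rw [Matrix.dotProduct_mulVec]
    congr 1
    rw [← Matrix.mulVec_transpose, hP1, Matrix.mulVec_mulVec, hP2]
  have h2 : (0:ℝ) ≤ dotProduct (P.mulVec v) (P.mulVec v) :=
    Finset.sum_nonneg fun i _ => mul_self_nonneg _
  calc (0:ℝ) ≤ dotProduct (P.mulVec v) (P.mulVec v) := h2
    _ = ∑ i, P.mulVec v i * v i := h

theorem stmt_16 {m : ℕ} (C₀ : Set (Fin m → ℝ)) (hopen : IsOpen C₀) (hconv : Convex ℝ C₀)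
    (F : (Fin m → ℝ) → (Fin m → ℝ)) (hF : ContDiff ℝ 1 F)
    (hpseudo : ∀ x ∈ C₀, ∀ y ∈ C₀,
      0 ≤ ∑ i, F x i * (y i - x i) → 0 ≤ ∑ i, F y i * (y i - x i))
    (J : (Fin m → ℝ) → Matrix (Fin m) (Fin m) ℝ)
    (hJ : ∀ x ∈ C₀, ∀ u : Fin m → ℝ, (J x).mulVec u = fderiv ℝ F x u)
    (hsym : ∀ x ∈ C₀, (J x).IsHermitian)
    (P : Matrix (Fin m) (Fin m) ℝ) (hP1 : Pᵀ = P) (hP2 : P * P = P)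
    (e₃ : ℝ) (he₃ : 0 < e₃)
    (hdiagpos : ∀ x ∈ C₀, ∀ i : Fin m, 0 < J x i i + e₃ * P i i)
    (hdd : ∀ x ∈ C₀, ∀ i : Fin m,
      ∑ j ∈ Finset.univ.erase i, |J x i j + e₃ * P i j| < J x i i + e₃ * P i i) :
    ∀ s : ℝ, e₃ ≤ s → ∀ x ∈ C₀, ∀ y ∈ C₀,
      0 ≤ ∑ i, ((F x i + s * P.mulVec x i) - (F y i + s * P.mulVec y i)) * (x i - y i) := by
  intro s hs x hx y hy
  set v : Fin m → ℝ := x - y with hv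
  set c : ℝ → (Fin m → ℝ) := fun t => y + t • v with hc
  set g : ℝ → ℝ := fun t => ∑ i, (F (c t) i + s * P.mulVec (c t) i) * v i with hg
  have hFdiff : Differentiable ℝ F := hF.differentiable one_ne_zero
  -- derivative of g at any point
  have hgd : ∀ t : ℝ, HasDerivAt g
      (∑ i, (fderiv ℝ F (c t) v i + s * P.mulVec v i) * v i) t := by
    intro t
    have hct : HasDerivAt c v t := by
      have h1 : HasDerivAt (fun t : ℝ => t • v) ((1:ℝ) • v) t :=
        (hasDerivAt_id t).smul_const v
      rw [one_smul] at h1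
      exact h1.const_add y
    have hFc : HasDerivAt (fun t => F (c t)) (fderiv ℝ F (c t) v) t :=
      (hFdiff (c t)).hasFDerivAt.comp_hasDerivAt t hct
    have hFi : ∀ i, HasDerivAt (fun t => F (c t) i) (fderiv ℝ F (c t) v i) t :=
      fun i => hasDerivAt_pi.mp hFc i
    refine HasDerivAt.fun_sum fun i _ => ?_
    have hPi : HasDerivAt (fun t => P.mulVec (c t) i) (P.mulVec v i) t := by
      have heq : (fun t : ℝ => P.mulVec (c t) i)
          = fun t => P.mulVec y i + t * P.mulVec v i := by
        funext u
        simp only [hc, Matrix.mulVec_add, Matrix.mulVec_smul, Pi.add_apply, Pi.smul_apply,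
          smul_eq_mul]
      rw [heq]
      simpa using ((hasDerivAt_id t).mul_const (P.mulVec v i)).const_add (P.mulVec y i)
    exact ((hFi i).add (hPi.const_mul s)).mul_const (v i)
  -- nonnegativity of derivative where c t ∈ C₀
  have hpos : ∀ t : ℝ, c t ∈ C₀ →
      0 ≤ ∑ i, (fderiv ℝ F (c t) v i + s * P.mulVec v i) * v i := by
    intro t hmem
    have hJv : fderiv ℝ F (c t) v = (J (c t)).mulVec v := (hJ (c t) hmem v).symm
    set A : Matrix (Fin m) (Fin m) ℝ := J (c t) + e₃ • P with hA
    have hAs : ∀ i j, A i j = A j i := by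
      intro i j
      have h1 : J (c t) i j = J (c t) j i := by
        have := (hsym (c t) hmem).apply i j
        simpa using this.symm
      have h2 : P i j = P j i := by
        conv_lhs => rw [← hP1]
        rfl
      simp [hA, Matrix.add_apply, Matrix.smul_apply, h1, h2, smul_eq_mul]
    have hAdd : ∀ i, ∑ j ∈ Finset.univ.erase i, |A i j| ≤ A i i := by
      intro i
      have := hdd (c t) hmem i
      have heA : ∀ i j : Fin m, A i j = J (c t) i j + e₃ * P i j := by
        intro i j; simp [hA, Matrix.add_apply, Matrix.smul_apply, smul_eq_mul]
      simp only [heA]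
      exact this.le
    have hq1 : 0 ≤ ∑ i, A.mulVec v i * v i := key_quad A hAs hAdd v
    have hq2 : 0 ≤ ∑ i, P.mulVec v i * v i := proj_quad_nonneg P hP1 hP2 v
    have hexp : ∑ i, (fderiv ℝ F (c t) v i + s * P.mulVec v i) * v i
        = ∑ i, A.mulVec v i * v i + (s - e₃) * ∑ i, P.mulVec v i * v i := by
      rw [hJv, Finset.mul_sum, ← Finset.sum_add_distrib]
      refine Finset.sum_congr rfl fun i _ => ?_
      simp only [hA, Matrix.add_mulVec, Matrix.smul_mulVec, Pi.add_apply, Pi.smul_apply,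
        smul_eq_mul]
      ring
    rw [hexp]
    have h3 : 0 ≤ (s - e₃) * ∑ i, P.mulVec v i * v i :=
      mul_nonneg (by linarith) hq2
    linarith
  -- segment is in C₀
  have hseg : ∀ t ∈ Set.Icc (0:ℝ) 1, c t ∈ C₀ := by
    intro t ht
    have h1 : (1 - t) • y + t • x ∈ C₀ :=
      hconv hy hx (by linarith [ht.2]) ht.1 (by ring)
    have h2 : c t = (1 - t) • y + t • x := by
      funext i
      simp only [hc, hv, Pi.add_apply, Pi.smul_apply, Pi.sub_apply, smul_eq_mul]
      ring
    rwa [h2]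
  -- monotonicity of g on Icc 0 1
  have hmono : MonotoneOn g (Set.Icc (0:ℝ) 1) := by
    apply monotoneOn_of_deriv_nonneg (convex_Icc 0 1)
    · exact (Differentiable.continuous fun t => (hgd t).differentiableAt).continuousOn
    · exact fun t _ => (hgd t).differentiableAt.differentiableWithinAt
    · intro t ht
      rw [interior_Icc] at ht
      rw [(hgd t).deriv]
      exact hpos t (hseg t ⟨ht.1.le, ht.2.le⟩)
  have h01 : g 0 ≤ g 1 := hmono (Set.left_mem_Icc.mpr zero_le_one)
    (Set.right_mem_Icc.mpr zero_le_one) zero_le_one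
  have hc0 : c 0 = y := by
    funext i; simp [hc]
  have hc1 : c 1 = x := by
    funext i
    simp only [hc, hv, Pi.add_apply, Pi.smul_apply, Pi.sub_apply, one_smul]
    ring
  have hfin : ∑ i, ((F x i + s * P.mulVec x i) - (F y i + s * P.mulVec y i)) * (x i - y i)
      = g 1 - g 0 := by
    simp only [hg, hc1, hc0, ← Finset.sum_sub_distrib]
    refine Finset.sum_congr rfl fun i _ => ?_
    have : v i = x i - y i := by simp [hv]
    rw [this]
    ring
  rw [hfin]
  linarith
end

section
/- Let C₀ ⊆ ℝᵐ be an open convex set and F : ℝᵐ → ℝᵐ continuously differentiable and pseudomonotone on C₀ with symmetric Jacobian DF(x) for every x ∈ C₀. Let P ∈ ℝ^{m×m} be an orthogonal projection matrix (Pᵀ = P, P² = P) and let I = {i | P_{ii} > 0}. Assume: (i) the principal submatrix of P indexed by I is strictly diagonally dominant, i.e. P_{ii} > ∑_{j∈I, j≠i} |P_{ij}| for every i ∈ I; (ii) for every x ∈ C₀ and every i ∉ I, the i-th row of DF(x) and the i-th row of P are zero. Let s > 0 satisfy, for every x ∈ C₀ and every i ∈ I: s > −(DF(x))_{ii} and s·(P_{ii}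 − ∑_{j≠i} |P_{ij}|) > ∑_{j≠i} |(DF(x))_{ij}| − (DF(x))_{ii}. Then DF(x) + s·P is positive semidefinite for every x ∈ C₀, and the map x ↦ F(x) + s · P x is monotone on C₀: ⟪(F(x) + s·Px) − (F(y) + s·Py), x − y⟫ ≥ 0 for all x, y ∈ C₀. -/
open Matrix Finset

lemma term_bound' (a x y : ℝ) : -(|a| * (x ^ 2 + y ^ 2) / 2) ≤ x * a * y := by
  have h1 := neg_abs_le (x * a * y)
  have h2 : |x * a * y| = |x| * |a| * |y| := by rw [abs_mul, abs_mul]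
  nlinarith [sq_nonneg (|x| - |y|), abs_nonneg a, sq_abs x, sq_abs y, abs_nonneg x, abs_nonneg y]

lemma psd_of_dd' {n : ℕ} (A : Matrix (Fin n) (Fin n) ℝ) (hsym : A.IsHermitian)
    (hdd : ∀ i, ∑ j ∈ Finset.univ.erase i, |A i j| ≤ A i i) : A.PosSemidef := by
  refine Matrix.PosSemidef.of_dotProduct_mulVec_nonneg hsym fun v => ?_
  rw [star_trivial]
  have hAsymm : ∀ i j, A j i = A i j := fun i j => by
    have := congrFun (congrFun hsym.eq i) j
    simpa [Matrix.conjTranspose_apply] using this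
  have key : ∑ i, (A i i - ∑ j ∈ univ.erase i, |A i j|) * v i ^ 2 ≤ v ⬝ᵥ A.mulVec v := by
    have hdot : v ⬝ᵥ A.mulVec v = ∑ i, (A i i * v i ^ 2 + ∑ j ∈ univ.erase i, v i * A i j * v j) := by
      simp only [dotProduct, Matrix.mulVec, dotProduct]
      refine Finset.sum_congr rfl fun i _ => ?_
      rw [Finset.mul_sum, ← Finset.add_sum_erase _ _ (Finset.mem_univ i)]
      congr 1
      · ring
      · exact Finset.sum_congr rfl fun j _ => by ring
    rw [hdot]
    have hsplit : ∑ i, (A i i - ∑ j ∈ univ.erase i, |A i j|) * v i ^ 2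
        = ∑ i, (A i i * v i ^ 2 + ∑ j ∈ univ.erase i, (-(|A i j| * v i ^ 2))) := by
      refine Finset.sum_congr rfl fun i _ => ?_
      rw [Finset.sum_neg_distrib, ← Finset.sum_mul]; ring
    rw [hsplit, Finset.sum_add_distrib, Finset.sum_add_distrib]
    refine add_le_add le_rfl ?_
    have swap : ∑ i, ∑ j ∈ univ.erase i, |A i j| * v j ^ 2
        = ∑ i, ∑ j ∈ univ.erase i, |A i j| * v i ^ 2 := by
      rw [Finset.sum_comm' (t' := univ) (s' := fun y => univ.erase y)
        (fun x y => by simp [Finset.mem_erase]; exact ⟨fun h e => h e.symm, fun h e => h e.symm⟩)]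
      exact Finset.sum_congr rfl fun y _ => Finset.sum_congr rfl fun x _ => by rw [hAsymm y x]
    have e2 : ∑ i, ∑ j ∈ univ.erase i, -(|A i j| * v j ^ 2)
        = ∑ i, ∑ j ∈ univ.erase i, -(|A i j| * v i ^ 2) := by
      simp only [Finset.sum_neg_distrib]
      rw [swap]
    have e1 : ∑ i, ∑ j ∈ univ.erase i, (-(|A i j| * (v i ^ 2 + v j ^ 2) / 2))
        = (∑ i, ∑ j ∈ univ.erase i, -(|A i j| * v i ^ 2)) / 2
          + (∑ i, ∑ j ∈ univ.erase i, -(|A i j| * v j ^ 2)) / 2 := by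
      rw [Finset.sum_div, Finset.sum_div, ← Finset.sum_add_distrib]
      refine Finset.sum_congr rfl fun i _ => ?_
      rw [Finset.sum_div, Finset.sum_div, ← Finset.sum_add_distrib]
      exact Finset.sum_congr rfl fun j _ => by ring
    have e3 : ∑ i, ∑ j ∈ univ.erase i, -(|A i j| * v i ^ 2)
        = ∑ i, ∑ j ∈ univ.erase i, (-(|A i j| * (v i ^ 2 + v j ^ 2) / 2)) := by
      rw [e1, e2]; ring
    rw [e3]
    exact Finset.sum_le_sum fun i _ => Finset.sum_le_sum fun j _ => term_bound' _ _ _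
  refine le_trans ?_ key
  exact Finset.sum_nonneg fun i _ => mul_nonneg (sub_nonneg.2 (hdd i)) (sq_nonneg _)

theorem stmt_17 {m : ℕ} (C₀ : Set (Fin m → ℝ)) (hopen : IsOpen C₀) (hconv : Convex ℝ C₀)
    (F : (Fin m → ℝ) → (Fin m → ℝ)) (hF : ContDiff ℝ 1 F)
    (hpseudo : ∀ x ∈ C₀, ∀ y ∈ C₀,
      0 ≤ ∑ i, F x i * (y i - x i) → 0 ≤ ∑ i, F y i * (y i - x i))
    (J : (Fin m → ℝ) → Matrix (Fin m) (Fin m) ℝ)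
    (hJ : ∀ x ∈ C₀, ∀ u : Fin m → ℝ, (J x).mulVec u = fderiv ℝ F x u)
    (hsym : ∀ x ∈ C₀, (J x).IsHermitian)
    (P : Matrix (Fin m) (Fin m) ℝ) (hP1 : Pᵀ = P) (hP2 : P * P = P)
    (hPdd : ∀ i : Fin m, 0 < P i i →
      ∑ j ∈ (Finset.univ.filter fun j => 0 < P j j).erase i, |P i j| < P i i)
    (hzero : ∀ x ∈ C₀, ∀ i : Fin m, ¬ 0 < P i i → (∀ j, J x i j = 0) ∧ (∀ j, P i j = 0))
    (s : ℝ) (hs0 : 0 < s)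
    (hs1 : ∀ x ∈ C₀, ∀ i : Fin m, 0 < P i i → -(J x i i) < s)
    (hs2 : ∀ x ∈ C₀, ∀ i : Fin m, 0 < P i i →
      ∑ j ∈ Finset.univ.erase i, |J x i j| - J x i i <
        s * (P i i - ∑ j ∈ Finset.univ.erase i, |P i j|)) :
    (∀ x ∈ C₀, (J x + s • P).PosSemidef) ∧
    (∀ x ∈ C₀, ∀ y ∈ C₀,
      0 ≤ ∑ i, ((F x i + s * P.mulVec x i) - (F y i + s * P.mulVec y i)) * (x i - y i)) := by
  have hPsym : ∀ i j, P j i = P i j := fun i j => (congrFun (congrFun hP1 j) i).symm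
  have part1 : ∀ x ∈ C₀, (J x + s • P).PosSemidef := by
    intro x hx
    have hherm : (J x + s • P).IsHermitian := by
      have hJs := fun i j => by
        have := congrFun (congrFun (hsym x hx).eq i) j
        simpa [Matrix.conjTranspose_apply] using this
      ext i j
      simp only [Matrix.conjTranspose_apply, Matrix.add_apply, Matrix.smul_apply, smul_eq_mul,
        star_trivial]
      rw [hJs j i, hPsym j i]
    refine psd_of_dd' _ hherm fun i => ?_
    by_cases hPi : 0 < P i i
    · have h2 := hs2 x hx i hPi
      have hstep : ∑ j ∈ univ.erase i, |(J x + s • P) i j|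
          ≤ ∑ j ∈ univ.erase i, |J x i j| + s * ∑ j ∈ univ.erase i, |P i j| := by
        rw [Finset.mul_sum, ← Finset.sum_add_distrib]
        refine Finset.sum_le_sum fun j _ => ?_
        simp only [Matrix.add_apply, Matrix.smul_apply, smul_eq_mul]
        calc |J x i j + s * P i j| ≤ |J x i j| + |s * P i j| := abs_add_le _ _
          _ = |J x i j| + s * |P i j| := by rw [abs_mul, abs_of_pos hs0]
      have : (J x + s • P) i i = J x i i + s * P i i := by
        simp [Matrix.add_apply, Matrix.smul_apply, smul_eq_mul]
      rw [this]
      refine hstep.trans ?_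
      nlinarith [h2]
    · obtain ⟨hJ0, hP0⟩ := hzero x hx i hPi
      have : ∀ j, (J x + s • P) i j = 0 := fun j => by
        simp [Matrix.add_apply, Matrix.smul_apply, hJ0 j, hP0 j]
      rw [this i]
      refine le_of_eq ?_
      refine Finset.sum_eq_zero fun j _ => ?_
      rw [this j, abs_zero]
  refine ⟨part1, ?_⟩
  intro x hx y hy
  set v : Fin m → ℝ := fun i => x i - y i with hv
  set γ : ℝ → (Fin m → ℝ) := fun t => y + t • (x - y) with hγ
  have hγmem : ∀ t ∈ Set.Icc (0:ℝ) 1, γ t ∈ C₀ := by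
    intro t ht
    have := hconv hy hx (by linarith [ht.1, ht.2] : (0:ℝ) ≤ 1 - t) ht.1 (by ring)
    convert this using 1
    funext i
    simp [hγ, Pi.smul_apply, smul_eq_mul]
    ring
  have hγder : ∀ t : ℝ, HasDerivAt γ (x - y) t := by
    intro t
    have h1 : HasDerivAt (fun t : ℝ => t • (x - y)) ((1:ℝ) • (x - y)) t :=
      (hasDerivAt_id t).smul_const (x - y)
    exact (by simpa using h1 : HasDerivAt (fun t : ℝ => t • (x - y)) (x - y) t).const_add y
  set g : ℝ → ℝ := fun t => ∑ i, (F (γ t) i + s * P.mulVec (γ t) i) * v i with hg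
  have hgder : ∀ t : ℝ, HasDerivAt g
      (∑ i, ((fderiv ℝ F (γ t) (x - y)) i + s * P.mulVec (x - y) i) * v i) t := by
    intro t
    refine HasDerivAt.fun_sum fun i _ => ?_
    refine HasDerivAt.mul_const ?_ (v i)
    refine HasDerivAt.add ?_ ?_
    · have hdF : HasFDerivAt F (fderiv ℝ F (γ t)) (γ t) :=
        (hF.differentiable one_ne_zero (γ t)).hasFDerivAt
      have hcomp : HasDerivAt (F ∘ γ) (fderiv ℝ F (γ t) (x - y)) t :=
        hdF.comp_hasDerivAt t (hγder t)
      have := (ContinuousLinearMap.proj (R := ℝ) (φ := fun _ : Fin m => ℝ) i).hasFDerivAt.comp_hasDerivAt t hcomp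
      exact this
    · have hlin : ∀ t : ℝ, P.mulVec (γ t) i = P.mulVec y i + t * P.mulVec (x - y) i := by
        intro t
        simp [hγ, Matrix.mulVec_add, Matrix.mulVec_smul, Pi.add_apply, Pi.smul_apply, smul_eq_mul]
      have h1 : HasDerivAt (fun t : ℝ => P.mulVec y i + t * P.mulVec (x - y) i)
          (P.mulVec (x - y) i) t := by
        simpa using ((hasDerivAt_id t).mul_const (P.mulVec (x - y) i)).const_add (P.mulVec y i)
      have hfun : (fun t : ℝ => P.mulVec (γ t) i) = fun t : ℝ => P.mulVec y i + t * P.mulVec (x - y) i :=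
        funext hlin
      have h2 : HasDerivAt (fun t : ℝ => P.mulVec (γ t) i) (P.mulVec (x - y) i) t := by
        rw [hfun]; exact h1
      exact h2.const_mul s
  have hderiv_nonneg : ∀ t ∈ Set.Icc (0:ℝ) 1,
      0 ≤ ∑ i, ((fderiv ℝ F (γ t) (x - y)) i + s * P.mulVec (x - y) i) * v i := by
    intro t ht
    have hz := hγmem t ht
    have hpsd := (part1 (γ t) hz).dotProduct_mulVec_nonneg (x - y)
    have hrw : ∑ i, ((fderiv ℝ F (γ t) (x - y)) i + s * P.mulVec (x - y) i) * v i
        = (x - y) ⬝ᵥ (J (γ t) + s • P).mulVec (x - y) := by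
      rw [dotProduct]
      refine Finset.sum_congr rfl fun i _ => ?_
      rw [← hJ (γ t) hz (x - y)]
      simp only [Matrix.add_mulVec, Matrix.smul_mulVec, Pi.add_apply, Pi.smul_apply,
        smul_eq_mul, hv, Pi.sub_apply]
      ring
    rw [hrw]
    simpa using hpsd
  have hmono : MonotoneOn g (Set.Icc (0:ℝ) 1) := by
    refine monotoneOn_of_deriv_nonneg (convex_Icc 0 1) ?_ ?_ ?_
    · exact fun t _ => ((hgder t).differentiableAt).continuousAt.continuousWithinAt
    · exact fun t _ => ((hgder t).differentiableAt).differentiableWithinAt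
    · intro t ht
      rw [interior_Icc] at ht
      rw [(hgder t).deriv]
      exact hderiv_nonneg t ⟨le_of_lt ht.1, le_of_lt ht.2⟩
  have hle : g 0 ≤ g 1 := hmono (Set.mem_Icc.2 ⟨le_refl 0, zero_le_one⟩)
    (Set.mem_Icc.2 ⟨zero_le_one, le_refl 1⟩) zero_le_one
  have hγ0 : γ 0 = y := by funext i; simp [hγ]
  have hγ1 : γ 1 = x := by funext i; simp [hγ]
  have : g 1 - g 0 = ∑ i, ((F x i + s * P.mulVec x i) - (F y i + s * P.mulVec y i)) * (x i - y i) := by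
    rw [hg]
    simp only [hγ0, hγ1]
    rw [← Finset.sum_sub_distrib]
    exact Finset.sum_congr rfl fun i _ => by rw [hv]; ring
  linarith [hle, this.symm.le, this.le]
end
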